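/- arXiv:1312.3552 — 5 statements merged into one kernel-verified Lean document; each statement's English description precedes it below -/
import Mathlib

section
/- Let G = (A ∪ H, E) be a House Allocation with Ties (HAT) instance with first-choice graph G₁ = (A ∪ H, E₁), and for each agent a let s(a) be the set of a's most-preferred houses among the even houses of the Gallai–Edmonds decomposition of G₁. Then a matching M of G is popular if and only if (1) M ∩ E₁ is a maximum matching of G₁, and (2) every agent a is matched in M and M(a) ∈ f(a) ∪ s(a). -/
/-!
STATEMENT 0: If `M` is a popular matching of a HAT instance `G`, then `M ∩ E₁` is a
maximum matching of the first-choice graph `G₁`.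
-/

/-- A House Allocation with Ties (HAT) instance: agents `A`, houses `H`, an adjacency
relation (each agent ranks the adjacent houses; lower rank means more preferred, ties
allowed), together with a unique last-resort house `l(a)` for each agent `a`, which is
strictly the least preferred house of `a` and appears only on `a`'s list. -/
structure HATInstance (A H : Type*) where
  adj : A → H → Prop
  rank : A → H → ℕ
  lastResort : A → H
  lastResort_injective : Function.Injective lastResort
  lastResort_adj : ∀ a, adj a (lastResort a)
  lastResort_worst : ∀ a h, adj a h → h ≠ lastResort a → rank a h < rank a (lastResort a)
  lastResort_only : ∀ a a', adj a' (lastResort a) → a' = a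

namespace HATInstance

variable {A H : Type*}

/-- The edge set of the bipartite graph `G = (A ∪ H, E)` of the instance. -/
def edgeSet (I : HATInstance A H) : Set (A × H) := {p | I.adj p.1 p.2}

/-- `M` is a matching contained in the edge set `E`: every agent is in at most one
edge of `M` and every house is in at most one edge of `M`. -/
def IsMatchingIn (E M : Set (A × H)) : Prop :=
  M ⊆ E ∧ (∀ p ∈ M, ∀ q ∈ M, p.1 = q.1 → p = q) ∧ (∀ p ∈ M, ∀ q ∈ M, p.2 = q.2 → p = q)

/-- A maximum (cardinality) matching contained in the edge set `E`. -/
def IsMaxMatchingIn (E M : Set (A × H)) : Prop :=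
  IsMatchingIn E M ∧ ∀ N : Set (A × H), IsMatchingIn E N → N.ncard ≤ M.ncard

/-- A matching of the instance `I`. -/
def IsMatching (I : HATInstance A H) (M : Set (A × H)) : Prop :=
  IsMatchingIn I.edgeSet M

/-- Agent `a` prefers matching `M` to matching `M'`: `a` is matched in `M` and either
unmatched in `M'`, or strictly prefers its house in `M` to its house in `M'`. -/
def Prefers (I : HATInstance A H) (M M' : Set (A × H)) (a : A) : Prop :=
  ∃ h, (a, h) ∈ M ∧ ∀ h', (a, h') ∈ M' → I.rank a h < I.rank a h'

/-- `M` is more popular than `M'`. -/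
def MorePopular [Fintype A] (I : HATInstance A H) (M M' : Set (A × H)) : Prop :=
  Nat.card {a | Prefers I M M' a} > Nat.card {a | Prefers I M' M a}

/-- `M` is a popular matching of `I`: it is a matching and no matching is more
popular than it. -/
def IsPopular [Fintype A] (I : HATInstance A H) (M : Set (A × H)) : Prop :=
  I.IsMatching M ∧ ∀ M', I.IsMatching M' → ¬ MorePopular I M' M

/-- `f(a)`: the set of top-ranked (first-choice) houses of agent `a`. -/
def firstChoices (I : HATInstance A H) (a : A) : Set H :=
  {h | I.adj a h ∧ ∀ h', I.adj a h' → I.rank a h ≤ I.rank a h'}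

/-- The edge set `E₁` of the first-choice graph `G₁`. -/
def firstChoiceEdges (I : HATInstance A H) : Set (A × H) :=
  {p | p.2 ∈ I.firstChoices p.1}

end HATInstance


/-- `M` is a matching of the graph `G`: a set of edges of `G` in which every vertex
lies in at most one edge. -/
def IsGraphMatching {V : Type*} (G : SimpleGraph V) (M : Set (Sym2 V)) : Prop :=
  M ⊆ G.edgeSet ∧ ∀ e ∈ M, ∀ e' ∈ M, ∀ v : V, v ∈ e → v ∈ e' → e = e'

/-- A maximum (cardinality) matching of `G`. -/
def IsMaximumMatching {V : Type*} (G : SimpleGraph V) (M : Set (Sym2 V)) : Prop :=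
  IsGraphMatching G M ∧ ∀ N : Set (Sym2 V), IsGraphMatching G N → N.ncard ≤ M.ncard

/-- A vertex is unmatched by `M` if it lies in no edge of `M`. -/
def UnmatchedVtx {V : Type*} (M : Set (Sym2 V)) (v : V) : Prop := ∀ e ∈ M, v ∉ e

/-- A walk is alternating with respect to the matching `M` (as a walk starting at an
unmatched vertex) if its edges alternately avoid and belong to `M`, starting with an
edge not in `M`. -/
def IsAlternatingWalk {V : Type*} {G : SimpleGraph V} {u v : V} (M : Set (Sym2 V))
    (p : G.Walk u v) : Prop :=
  ∀ (i : ℕ) (h : i < p.edges.length), (p.edges.get ⟨i, h⟩ ∈ M ↔ i % 2 = 1)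

/-- `v` is an even vertex: there is an even-length alternating path from some
`M`-unmatched vertex to `v`. -/
def EvenVtx {V : Type*} (G : SimpleGraph V) (M : Set (Sym2 V)) (v : V) : Prop :=
  ∃ u, UnmatchedVtx M u ∧ ∃ p : G.Walk u v, p.IsPath ∧ IsAlternatingWalk M p ∧ Even p.length

/-- `v` is an odd vertex: there is an odd-length alternating path from some
`M`-unmatched vertex to `v`. -/
def OddVtx {V : Type*} (G : SimpleGraph V) (M : Set (Sym2 V)) (v : V) : Prop :=
  ∃ u, UnmatchedVtx M u ∧ ∃ p : G.Walk u v, p.IsPath ∧ IsAlternatingWalk M p ∧ Odd p.length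

/-- `v` is unreachable: no alternating path from an `M`-unmatched vertex reaches `v`. -/
def UnreachableVtx {V : Type*} (G : SimpleGraph V) (M : Set (Sym2 V)) (v : V) : Prop :=
  ¬ ∃ u, UnmatchedVtx M u ∧ ∃ p : G.Walk u v, p.IsPath ∧ IsAlternatingWalk M p

/-- `G` is bipartite. -/
def IsBipartite {V : Type*} (G : SimpleGraph V) : Prop :=
  ∃ s : Set V, ∀ ⦃u v : V⦄, G.Adj u v → (u ∈ s ↔ v ∉ s)

namespace HATInstance

variable {A H : Type*}

/-- The first-choice graph `G₁ = (A ∪ H, E₁)` of the instance, as a simple graph on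
the vertex set `A ⊕ H`. -/
def G1 (I : HATInstance A H) : SimpleGraph (A ⊕ H) :=
  SimpleGraph.fromRel (fun x y => ∃ a hs, x = Sum.inl a ∧ y = Sum.inr hs ∧
    hs ∈ I.firstChoices a)

/-- A matching given as a set of (agent, house) pairs, viewed as a set of edges of a
graph on `A ⊕ H`. -/
def sym2Edges (M : Set (A × H)) : Set (Sym2 (A ⊕ H)) :=
  {e | ∃ p ∈ M, e = s(Sum.inl p.1, Sum.inr p.2)}

/-- A house is even when it is an even vertex of the first-choice graph `G₁` with
respect to (the `Sym2` version of) the maximum matching `M₁` of `G₁`. -/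
def EvenHouse (I : HATInstance A H) (M₁ : Set (A × H)) (h : H) : Prop :=
  EvenVtx I.G1 (sym2Edges M₁) (Sum.inr h)

/-- `s(a)`: the set of most preferred houses of agent `a` among the even houses of the
Gallai–Edmonds decomposition of `G₁`. -/
def sChoices (I : HATInstance A H) (M₁ : Set (A × H)) (a : A) : Set H :=
  {h | I.adj a h ∧ EvenHouse I M₁ h ∧
    ∀ h', I.adj a h' → EvenHouse I M₁ h' → I.rank a h ≤ I.rank a h'}

end HATInstance

open HATInstance

namespace PopAux

variable {A H : Type*}

lemma left_unique {E M : Set (A × H)} (hM : IsMatchingIn E M) {a : A} {h h' : H}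
    (h1 : (a, h) ∈ M) (h2 : (a, h') ∈ M) : h = h' :=
  congrArg Prod.snd (hM.2.1 _ h1 _ h2 rfl)

lemma right_unique {E M : Set (A × H)} (hM : IsMatchingIn E M) {a a' : A} {h : H}
    (h1 : (a, h) ∈ M) (h2 : (a', h) ∈ M) : a = a' :=
  congrArg Prod.fst (hM.2.2 _ h1 _ h2 rfl)

lemma matchingIn_subset {E M M' : Set (A × H)} (hM : IsMatchingIn E M) (hsub : M' ⊆ M) :
    IsMatchingIn E M' :=
  ⟨hsub.trans hM.1, fun p hp q hq => hM.2.1 p (hsub hp) q (hsub hq),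
    fun p hp q hq => hM.2.2 p (hsub hp) q (hsub hq)⟩

/-- Alternating chain w.r.t. matching `R` inside edge set `E`, going from house `h`
"down" to an `R`-exposed house.  Each entry `(b, g)` means: `b` is `R`-matched to the
house above it, and `(b,g) ∈ E \ R` is the non-matching edge down to `g`. -/
inductive ChainTo (E R : Set (A × H)) : H → List (A × H) → Prop
  | nil {h : H} (hexp : ∀ a, (a, h) ∉ R) : ChainTo E R h []
  | cons {h g : H} {b : A} {L : List (A × H)} (hR : (b, h) ∈ R) (hE : (b, g) ∈ E)
      (hnR : (b, g) ∉ R) (hc : ChainTo E R g L) : ChainTo E R h ((b, g) :: L)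

def PEven (E R : Set (A × H)) (h : H) : Prop := ∃ L, ChainTo E R h L

lemma pEven_of_exposed' {E R : Set (A × H)} {h : H} (hexp : ∀ a, (a, h) ∉ R) :
    PEven E R h := ⟨[], ChainTo.nil hexp⟩

lemma pEven_step {E R : Set (A × H)} {h g : H} {b : A} (hpe : PEven E R g)
    (hR : (b, h) ∈ R) (hE : (b, g) ∈ E) (hnR : (b, g) ∉ R) : PEven E R h := by
  obtain ⟨L, hc⟩ := hpe
  exact ⟨(b, g) :: L, ChainTo.cons hR hE hnR hc⟩

lemma chainTo_suffix {E R : Set (A × H)} {h : H} {L₁ L₂ : List (A × H)} {b : A} {g : H}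
    (hc : ChainTo E R h (L₁ ++ (b, g) :: L₂)) : ChainTo E R g L₂ := by
  induction L₁ generalizing h with
  | nil => cases hc with | cons _ _ _ hc => exact hc
  | cons p L₁ ih => cases hc with | cons _ _ _ hc => exact ih hc

lemma chainTo_mem_E {E R : Set (A × H)} {h : H} {L : List (A × H)}
    (hc : ChainTo E R h L) : ∀ p ∈ L, p ∈ E := by
  induction hc with
  | nil => simp
  | cons hR hE hnR hc ih =>
    intro p hp
    rcases List.mem_cons.1 hp with rfl | hp
    · exact hE
    · exact ih p hp

lemma chainTo_head_owner {E R : Set (A × H)} {h : H} {p : A × H} {L : List (A × H)}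
    (hc : ChainTo E R h (p :: L)) : (p.1, h) ∈ R := by
  cases hc with | cons hR _ _ _ => exact hR

lemma chain_agents_Rhouse {E R : Set (A × H)} {h : H} {L : List (A × H)}
    (hc : ChainTo E R h L) : ∀ c ∈ L.map Prod.fst, ∃ u, (c, u) ∈ R ∧ u ∈ h :: L.map Prod.snd := by
  induction hc with
  | nil => simp
  | @cons h g b L hR hE hnR hc ih =>
    intro c hcmem
    simp only [List.map_cons, List.mem_cons] at hcmem
    rcases hcmem with rfl | hcmem
    · exact ⟨h, hR, by simp⟩
    · obtain ⟨u, hu, humem⟩ := ih c hcmem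
      refine ⟨u, hu, ?_⟩
      simp only [List.map_cons, List.mem_cons] at humem ⊢
      tauto

lemma chain_agents_nodup {E R : Set (A × H)} (hR : IsMatchingIn E R) {h : H}
    {L : List (A × H)} (hc : ChainTo E R h L) (hnd : (h :: L.map Prod.snd).Nodup) :
    (L.map Prod.fst).Nodup := by
  induction hc with
  | nil => simp
  | @cons h g b L hRm hE hnR hc ih =>
    rw [List.map_cons] at hnd
    have hnd' : (g :: L.map Prod.snd).Nodup := hnd.of_cons
    have hhg : h ∉ (g :: L.map Prod.snd) := (List.nodup_cons.1 hnd).1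
    rw [List.map_cons, List.nodup_cons]
    refine ⟨?_, ih hnd'⟩
    intro hbmem
    obtain ⟨u, hu, humem⟩ := chain_agents_Rhouse hc b hbmem
    have : u = h := left_unique hR hu hRm
    subst this
    exact hhg humem

/-- every house in the chain which is not `R`-exposed has its `R`-owner among the
chain agents -/
lemma chain_owner {E R : Set (A × H)} (hRm : IsMatchingIn E R) {h : H} {L : List (A × H)}
    (hc : ChainTo E R h L) : ∀ p ∈ L, ∀ c, (c, p.2) ∈ R → c ∈ L.map Prod.fst := by
  induction hc with
  | nil => simp
  | @cons h g b L hR hE hnR hc ih =>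
    intro p hp c hcR
    simp only [List.map_cons, List.mem_cons]
    rcases List.mem_cons.1 hp with rfl | hp
    · cases hc with
      | nil hexp => exact absurd hcR (hexp c)
      | @cons _ g₂ b₂ L₂ hR₂ _ _ _ =>
        right
        have : c = b₂ := right_unique hRm hcR hR₂
        subst this
        simp
    · right; exact ih p hp c hcR

lemma chainTo_simple {E R : Set (A × H)} {h : H} {L : List (A × H)}
    (hc : ChainTo E R h L) :
    ∃ L', ChainTo E R h L' ∧ (h :: L'.map Prod.snd).Nodup := by
  induction hc with
  | @nil h hexp => exact ⟨[], ChainTo.nil hexp, by simp⟩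
  | @cons h g b L hR hE hnR hc ih =>
    obtain ⟨L', hc', hnd'⟩ := ih
    by_cases hhg : h = g
    · exact ⟨L', hhg ▸ hc', hhg ▸ hnd'⟩
    by_cases hmem : h ∈ L'.map Prod.snd
    · obtain ⟨p, hpL, hp2⟩ := List.exists_of_mem_map hmem
      obtain ⟨s, t, rfl⟩ := List.append_of_mem hpL
      have hsuf : ChainTo E R h t := by
        have := chainTo_suffix (b := p.1) (g := p.2) (L₁ := s) (L₂ := t)
          (by simpa using hc')
        rwa [hp2] at this
      refine ⟨t, hsuf, ?_⟩
      have hnd2 : (s.map Prod.snd ++ p.2 :: t.map Prod.snd).Nodup := by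
        have := hnd'.of_cons
        simpa using this
      have := hnd2.sublist (List.sublist_append_right _ _) |>.sublist
        (List.Sublist.refl _)
      rw [hp2] at hnd2
      exact (List.nodup_append.1 hnd2).2.1
    · refine ⟨(b, g) :: L', ChainTo.cons hR hE hnR hc', ?_⟩
      simp only [List.map_cons, List.nodup_cons, List.mem_cons] at hnd' ⊢
      exact ⟨fun hor => hor.elim hhg hmem, hnd'⟩


section Flip
variable [Fintype A] [Fintype H]

lemma ncard_pos_of_mem {s : Set (A × H)} {x : A × H} (hx : x ∈ s) : 0 < s.ncard :=
  (Set.ncard_pos (Set.toFinite s)).2 ⟨x, hx⟩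

/-- Swapping the partner of agent `a` from `h₁` to an exposed house `h`. -/
lemma matching_swap {E N : Set (A × H)} (hN : IsMatchingIn E N) {a : A} {h h₁ : H}
    (hE : (a, h) ∈ E) (hexp : ∀ c, (c, h) ∉ N) (hh₁ : (a, h₁) ∈ N) :
    IsMatchingIn E (insert (a, h) (N \ {(a, h₁)})) ∧
      (insert (a, h) (N \ {(a, h₁)})).ncard = N.ncard ∧
      (∀ c, (c, h₁) ∉ insert (a, h) (N \ {(a, h₁)})) := by
  have hne : h₁ ≠ h := fun e => hexp a (e ▸ hh₁)
  have hnotmem : (a, h) ∉ N \ {(a, h₁)} := fun hm => hexp a hm.1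
  refine ⟨⟨?_, ?_, ?_⟩, ?_, ?_⟩
  · rintro p (rfl | ⟨hp, -⟩)
    · exact hE
    · exact hN.1 hp
  · rintro ⟨p1, p2⟩ hp ⟨q1, q2⟩ hq h1
    simp only [Set.mem_insert_iff, Set.mem_diff, Set.mem_singleton_iff, Prod.mk.injEq] at hp hq
    dsimp at h1
    rcases hp with ⟨rfl, rfl⟩ | ⟨hp, hp'⟩ <;> rcases hq with ⟨rfl, rfl⟩ | ⟨hq, hq'⟩
    · rfl
    · subst h1; exact absurd ⟨rfl, left_unique hN hq hh₁⟩ hq'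
    · subst h1; exact absurd ⟨rfl, left_unique hN hp hh₁⟩ hp'
    · subst h1; rw [left_unique hN hp hq]
  · rintro ⟨p1, p2⟩ hp ⟨q1, q2⟩ hq h2
    simp only [Set.mem_insert_iff, Set.mem_diff, Set.mem_singleton_iff, Prod.mk.injEq] at hp hq
    dsimp at h2
    rcases hp with ⟨rfl, rfl⟩ | ⟨hp, hp'⟩ <;> rcases hq with ⟨rfl, rfl⟩ | ⟨hq, hq'⟩
    · rfl
    · exact absurd (h2 ▸ hq) (hexp q1)
    · exact absurd (h2 ▸ hp) (hexp p1)
    · subst h2; rw [right_unique hN hp hq]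
  · have h1 : ((N \ {(a, h₁)}) : Set (A × H)).ncard = N.ncard - 1 :=
      Set.ncard_diff_singleton_of_mem hh₁
    have h2 : (insert (a, h) (N \ {(a, h₁)})).ncard = (N \ {(a, h₁)}).ncard + 1 :=
      Set.ncard_insert_of_notMem hnotmem (Set.toFinite _)
    have h3 : 0 < N.ncard := ncard_pos_of_mem hh₁
    omega
  · rintro c (hc | ⟨hc, hc'⟩)
    · exact hne (congrArg Prod.snd hc)
    · exact hc' (by rw [right_unique hN hc hh₁]; exact rfl)

lemma matching_insert {E N : Set (A × H)} (hN : IsMatchingIn E N) {a : A} {h : H}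
    (hE : (a, h) ∈ E) (hexpA : ∀ g, (a, g) ∉ N) (hexpH : ∀ c, (c, h) ∉ N) :
    IsMatchingIn E (insert (a, h) N) ∧ (insert (a, h) N).ncard = N.ncard + 1 := by
  refine ⟨⟨?_, ?_, ?_⟩, Set.ncard_insert_of_notMem (hexpA h) (Set.toFinite N)⟩
  · rintro p (rfl | hp)
    · exact hE
    · exact hN.1 hp
  · rintro ⟨p1, p2⟩ hp ⟨q1, q2⟩ hq h1
    simp only [Set.mem_insert_iff, Prod.mk.injEq] at hp hq
    dsimp at h1
    rcases hp with ⟨rfl, rfl⟩ | hp <;> rcases hq with ⟨rfl, rfl⟩ | hq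
    · rfl
    · subst h1; exact absurd hq (hexpA q2)
    · subst h1; exact absurd hp (hexpA p2)
    · subst h1; rw [left_unique hN hp hq]
  · rintro ⟨p1, p2⟩ hp ⟨q1, q2⟩ hq h2
    simp only [Set.mem_insert_iff, Prod.mk.injEq] at hp hq
    dsimp at h2
    rcases hp with ⟨rfl, rfl⟩ | hp <;> rcases hq with ⟨rfl, rfl⟩ | hq
    · rfl
    · exact absurd (h2 ▸ hq) (hexpH q1)
    · exact absurd (h2 ▸ hp) (hexpH p1)
    · subst h2; rw [right_unique hN hp hq]

lemma chain_flip {E R : Set (A × H)} (hR : IsMatchingIn E R)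
    {h : H} {L : List (A × H)} (hc : ChainTo E R h L)
    (hnd : (h :: L.map Prod.snd).Nodup) :
    ∃ N : Set (A × H), IsMatchingIn E N ∧ N.ncard = R.ncard ∧ (∀ a, (a, h) ∉ N) ∧
      (∀ p : A × H, p.2 ∉ h :: L.map Prod.snd → ((p ∈ N) ↔ p ∈ R)) ∧
      (∀ p ∈ N, p ∈ R ∨ ∃ u, (p.1, u) ∈ R ∧ u ∈ h :: L.map Prod.snd) := by
  induction hc with
  | @nil h hexp =>
      exact ⟨R, hR, rfl, hexp, fun p _ => Iff.rfl, fun p hp => Or.inl hp⟩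
  | @cons h g b L hRm hE hnR hc ih =>
      rw [List.map_cons] at hnd
      obtain ⟨N, hN, hcard, hexpg, haway, hagents⟩ := ih hnd.of_cons
      have hh : h ∉ (g :: L.map Prod.snd) := (List.nodup_cons.1 hnd).1
      have hbh : (b, h) ∈ N := (haway (b, h) hh).2 hRm
      obtain ⟨hm', hcard', hexp'⟩ := matching_swap hN hE hexpg hbh
      refine ⟨insert (b, g) (N \ {(b, h)}), hm', hcard'.trans hcard, hexp', ?_, ?_⟩
      · intro p hp2
        have hp2' : p.2 ∉ g :: L.map Prod.snd := fun hm => hp2 (List.mem_cons_of_mem _ hm)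
        have hpg : p ≠ (b, g) := fun e => hp2 (by rw [e]; exact List.mem_cons_of_mem _ (List.mem_cons_self))
        have hph : p ≠ (b, h) := fun e => hp2 (by rw [e]; exact List.mem_cons_self)
        constructor
        · rintro (rfl | ⟨hm, -⟩)
          · exact absurd rfl hpg
          · exact (haway p hp2').1 hm
        · intro hm
          exact Or.inr ⟨(haway p hp2').2 hm, hph⟩
      · rintro p (rfl | ⟨hm, -⟩)
        · exact Or.inr ⟨h, hRm, List.mem_cons_self⟩
        · rcases hagents p hm with h' | ⟨u, hu, humem⟩
          · exact Or.inl h'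
          · exact Or.inr ⟨u, hu, List.mem_cons_of_mem _ humem⟩

lemma pEven_of_exposed {E R : Set (A × H)} (hR : IsMatchingIn E R) {N : Set (A × H)}
    (hN : IsMaxMatchingIn E N) {h : H} (hexp : ∀ a, (a, h) ∉ N) : PEven E R h := by
  suffices aux : ∀ n (N : Set (A × H)) (h : H), (R \ N).ncard ≤ n → IsMaxMatchingIn E N →
      (∀ a, (a, h) ∉ N) → PEven E R h from aux _ N h le_rfl hN hexp
  intro n
  induction n with
  | zero =>
    intro N h hle hN hexp
    by_cases hRexp : ∀ a, (a, h) ∉ R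
    · exact pEven_of_exposed' hRexp
    · exfalso
      push_neg at hRexp
      obtain ⟨a₁, ha₁⟩ := hRexp
      have := ncard_pos_of_mem (show (a₁, h) ∈ R \ N from ⟨ha₁, hexp a₁⟩)
      omega
  | succ n ih =>
    intro N h hle hN hexp
    by_cases hRexp : ∀ a, (a, h) ∉ R
    · exact pEven_of_exposed' hRexp
    push_neg at hRexp
    obtain ⟨a₁, ha₁⟩ := hRexp
    by_cases hNa : ∃ g, (a₁, g) ∈ N
    · obtain ⟨h₁, hh₁⟩ := hNa
      have hne : h₁ ≠ h := fun e => hexp a₁ (e ▸ hh₁)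
      have hnR₁ : (a₁, h₁) ∉ R := fun hmem => hne (left_unique hR hmem ha₁)
      obtain ⟨hm', hcardeq, hexp'⟩ := matching_swap hN.1 (hR.1 ha₁) hexp hh₁
      set N' := insert (a₁, h) (N \ {(a₁, h₁)}) with hN'def
      have hmax' : IsMaxMatchingIn E N' :=
        ⟨hm', fun N'' h'' => (hN.2 N'' h'').trans hcardeq.ge⟩
      have hmeas : (R \ N') = (R \ N) \ {(a₁, h)} := by
        ext p
        constructor
        · rintro ⟨hp, hp'⟩
          refine ⟨⟨hp, fun hm => ?_⟩, fun e => hp' (Set.mem_singleton_iff.1 e ▸ Set.mem_insert _ _)⟩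
          by_cases he : p = (a₁, h₁)
          · exact hnR₁ (he ▸ hp)
          · exact hp' (Set.mem_insert_of_mem _ ⟨hm, he⟩)
        · rintro ⟨⟨hp, hpN⟩, hpne⟩
          refine ⟨hp, ?_⟩
          rintro (heq | ⟨hm, -⟩)
          · exact hpne (by simp [heq])
          · exact hpN hm
      have hmc : (R \ N').ncard ≤ n := by
        have hmem : (a₁, h) ∈ R \ N := ⟨ha₁, hexp a₁⟩
        have h1 : ((R \ N) \ {(a₁, h)}).ncard = (R \ N).ncard - 1 :=
          Set.ncard_diff_singleton_of_mem hmem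
        have h3 : 0 < (R \ N).ncard := ncard_pos_of_mem hmem
        rw [hmeas]; omega
      exact pEven_step (ih N' h₁ hmc hmax' hexp') ha₁ (hN.1.1 hh₁) hnR₁
    · exfalso
      push_neg at hNa
      obtain ⟨hins, hinscard⟩ := matching_insert hN.1 (hR.1 ha₁) hNa hexp
      have hcard := hN.2 _ hins
      omega

lemma exposed_of_pEven {E R : Set (A × H)} (hR : IsMaxMatchingIn E R) {h : H}
    (hpe : PEven E R h) : ∃ N, IsMaxMatchingIn E N ∧ ∀ a, (a, h) ∉ N := by
  obtain ⟨L, hc⟩ := hpe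
  obtain ⟨L', hc', hnd⟩ := chainTo_simple hc
  obtain ⟨N, hN, hcard, hexp, -, -⟩ := chain_flip hR.1 hc' hnd
  exact ⟨N, ⟨hN, fun N' h' => (hR.2 N' h').trans hcard.ge⟩, hexp⟩

lemma pEven_trans {E R R' : Set (A × H)} (hRmax : IsMaxMatchingIn E R)
    (hR' : IsMatchingIn E R') {h : H} (hpe : PEven E R h) : PEven E R' h := by
  obtain ⟨N, hN, hexp⟩ := exposed_of_pEven hRmax hpe
  exact pEven_of_exposed hR' hN hexp

end Flip


section Chase
variable [Fintype A] [Fintype H]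

lemma chase_inner {E R : Set (A × H)} (hR : IsMatchingIn E R) :
    ∀ n (N : Set (A × H)) (h : H), (R \ N).ncard ≤ n → IsMatchingIn E N →
      (∀ a, (a, h) ∉ N) →
      PEven E R h ∨ ∃ N', IsMatchingIn E N' ∧ N'.ncard = N.ncard + 1 ∧
        (R \ N').ncard < (R \ N).ncard := by
  intro n
  induction n with
  | zero =>
    intro N h hle hN hexp
    by_cases hRexp : ∀ a, (a, h) ∉ R
    · exact Or.inl (pEven_of_exposed' hRexp)
    push_neg at hRexp
    obtain ⟨a₁, ha₁⟩ := hRexp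
    have := ncard_pos_of_mem (show (a₁, h) ∈ R \ N from ⟨ha₁, hexp a₁⟩)
    omega
  | succ n ih =>
    intro N h hle hN hexp
    by_cases hRexp : ∀ a, (a, h) ∉ R
    · exact Or.inl (pEven_of_exposed' hRexp)
    push_neg at hRexp
    obtain ⟨a₁, ha₁⟩ := hRexp
    have hmemRN : (a₁, h) ∈ R \ N := ⟨ha₁, hexp a₁⟩
    by_cases hNa : ∃ g, (a₁, g) ∈ N
    · obtain ⟨h₁, hh₁⟩ := hNa
      have hne : h₁ ≠ h := fun e => hexp a₁ (e ▸ hh₁)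
      have hnR₁ : (a₁, h₁) ∉ R := fun hmem => hne (left_unique hR hmem ha₁)
      obtain ⟨hm', hcardeq, hexp'⟩ := matching_swap hN (hR.1 ha₁) hexp hh₁
      set N' := insert (a₁, h) (N \ {(a₁, h₁)}) with hN'def
      have hmeas : (R \ N') = (R \ N) \ {(a₁, h)} := by
        ext p
        constructor
        · rintro ⟨hp, hp'⟩
          refine ⟨⟨hp, fun hm => ?_⟩, fun e => hp' (Set.mem_singleton_iff.1 e ▸ Set.mem_insert _ _)⟩
          by_cases he : p = (a₁, h₁)
          · exact hnR₁ (he ▸ hp)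
          · exact hp' (Set.mem_insert_of_mem _ ⟨hm, he⟩)
        · rintro ⟨⟨hp, hpN⟩, hpne⟩
          refine ⟨hp, ?_⟩
          rintro (heq | ⟨hm, -⟩)
          · exact hpne (by simp [heq])
          · exact hpN hm
      have hlt : (R \ N').ncard < (R \ N).ncard := by
        have h1 : ((R \ N) \ {(a₁, h)}).ncard = (R \ N).ncard - 1 :=
          Set.ncard_diff_singleton_of_mem hmemRN
        have h3 : 0 < (R \ N).ncard := ncard_pos_of_mem hmemRN
        rw [hmeas]; omega
      rcases ih N' h₁ (by omega) hm' hexp' with hpe | ⟨N'', hm'', hc'', hlt''⟩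
      · exact Or.inl (pEven_step hpe ha₁ (hN.1 hh₁) hnR₁)
      · exact Or.inr ⟨N'', hm'', by omega, by omega⟩
    · push_neg at hNa
      obtain ⟨hins, hinscard⟩ := matching_insert hN (hR.1 ha₁) hNa hexp
      refine Or.inr ⟨insert (a₁, h) N, hins, hinscard, ?_⟩
      have hsub : (R \ insert (a₁, h) N) ⊆ (R \ N) := fun p ⟨hp, hp'⟩ =>
        ⟨hp, fun hm => hp' (Set.mem_insert_of_mem _ hm)⟩
      have hne : (a₁, h) ∉ R \ insert (a₁, h) N := fun hm => hm.2 (Set.mem_insert _ _)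
      have hss : (R \ insert (a₁, h) N) ⊂ (R \ N) :=
        (Set.ssubset_iff_of_subset hsub).2 ⟨(a₁, h), hmemRN, fun hm => hne hm⟩
      exact Set.ncard_lt_ncard hss (Set.toFinite _)

lemma exists_aug {E R : Set (A × H)} (hR : IsMatchingIn E R) {N : Set (A × H)}
    (hN : IsMatchingIn E N) (hcard : R.ncard < N.ncard) :
    ∃ (a : A) (h : H), (∀ g, (a, g) ∉ R) ∧ (a, h) ∈ E ∧ (a, h) ∉ R ∧ PEven E R h := by
  suffices aux : ∀ n (N : Set (A × H)), (R \ N).ncard ≤ n → IsMatchingIn E N →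
      R.ncard < N.ncard →
      ∃ (a : A) (h : H), (∀ g, (a, g) ∉ R) ∧ (a, h) ∈ E ∧ (a, h) ∉ R ∧ PEven E R h from
    aux _ N le_rfl hN hcard
  intro n
  induction n with
  | zero =>
    intro N hle hN hcard
    -- find an agent matched in N but exposed in R
    have himgN : (Prod.fst '' N).ncard = N.ncard :=
      Set.ncard_image_of_injOn (fun p hp q hq hpq => hN.2.1 p hp q hq hpq)
    have himgR : (Prod.fst '' R).ncard = R.ncard :=
      Set.ncard_image_of_injOn (fun p hp q hq hpq => hR.2.1 p hp q hq hpq)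
    have hnotsub : ¬(Prod.fst '' N ⊆ Prod.fst '' R) := by
      intro hsub
      have := Set.ncard_le_ncard hsub (Set.toFinite _)
      omega
    obtain ⟨a₁, ⟨p, hpN, hp1⟩, hnotR⟩ := Set.not_subset.1 hnotsub
    have ha₁R : ∀ g, (a₁, g) ∉ R := fun g hg => hnotR ⟨(a₁, g), hg, rfl⟩
    have hph : (a₁, p.2) ∈ N := by rw [← hp1]; simpa using hpN
    -- but then (a₁, p.2) ∈ N \ R would be fine; at measure 0 we have R ⊆ N
    have hRsub : R ⊆ N := by
      intro q hq
      by_contra hqn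
      have := ncard_pos_of_mem (show q ∈ R \ N from ⟨hq, hqn⟩)
      omega
    have hexp2 : ∀ c, (c, p.2) ∉ R := by
      intro c hc
      have hcN : (c, p.2) ∈ N := hRsub hc
      have : c = a₁ := right_unique hN hcN hph
      exact hnotR ⟨(c, p.2), hc, this⟩
    exact ⟨a₁, p.2, ha₁R, hN.1 hph, fun hm => ha₁R _ hm, pEven_of_exposed' hexp2⟩
  | succ n ih =>
    intro N hle hN hcard
    have himgN : (Prod.fst '' N).ncard = N.ncard :=
      Set.ncard_image_of_injOn (fun p hp q hq hpq => hN.2.1 p hp q hq hpq)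
    have himgR : (Prod.fst '' R).ncard = R.ncard :=
      Set.ncard_image_of_injOn (fun p hp q hq hpq => hR.2.1 p hp q hq hpq)
    have hnotsub : ¬(Prod.fst '' N ⊆ Prod.fst '' R) := by
      intro hsub
      have := Set.ncard_le_ncard hsub (Set.toFinite _)
      omega
    obtain ⟨a₁, ⟨p, hpN, hp1⟩, hnotR⟩ := Set.not_subset.1 hnotsub
    have ha₁R : ∀ g, (a₁, g) ∉ R := fun g hg => hnotR ⟨(a₁, g), hg, rfl⟩
    have hph : (a₁, p.2) ∈ N := by rw [← hp1]; simpa using hpN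
    set h₁ := p.2 with hh₁def
    set N'' := N \ {(a₁, h₁)} with hN''def
    have hm'' : IsMatchingIn E N'' := matchingIn_subset hN (Set.diff_subset)
    have hexp'' : ∀ c, (c, h₁) ∉ N'' := by
      rintro c ⟨hc, hc'⟩
      exact hc' (by rw [right_unique hN hc hph]; exact rfl)
    have hN''card : N''.ncard = N.ncard - 1 :=
      Set.ncard_diff_singleton_of_mem hph
    have hmeas'' : (R \ N'') = (R \ N) := by
      ext q
      constructor
      · rintro ⟨hq, hq'⟩
        exact ⟨hq, fun hm => hq' ⟨hm, fun e => ha₁R h₁ (e ▸ hq)⟩⟩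
      · rintro ⟨hq, hq'⟩
        exact ⟨hq, fun hm => hq' hm.1⟩
    rcases chase_inner hR ((R \ N'').ncard) N'' h₁ le_rfl hm'' hexp'' with hpe | ⟨N', hm', hc', hlt'⟩
    · exact ⟨a₁, h₁, ha₁R, hN.1 hph, fun hm => ha₁R _ hm, hpe⟩
    · have hNpos : 0 < N.ncard := ncard_pos_of_mem hph
      refine ih N' ?_ hm' (by omega)
      rw [hmeas''] at hlt'
      omega

end Chase


section HATLayer

lemma fcE_sub_edge (I : HATInstance A H) : I.firstChoiceEdges ⊆ I.edgeSet :=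
  fun _ hp => hp.1

lemma fc_nonempty [Fintype H] (I : HATInstance A H) (a : A) : ∃ h, h ∈ I.firstChoices a := by
  obtain ⟨h, hh, hmin⟩ := Set.exists_min_image {h | I.adj a h} (I.rank a) (Set.toFinite _)
    ⟨_, I.lastResort_adj a⟩
  exact ⟨h, hh, hmin⟩

lemma fc_rank_eq {I : HATInstance A H} {a : A} {h h' : H} (h1 : h ∈ I.firstChoices a)
    (h2 : h' ∈ I.firstChoices a) : I.rank a h = I.rank a h' :=
  le_antisymm (h1.2 _ h2.1) (h2.2 _ h1.1)

lemma rank_lt_of_fc {I : HATInstance A H} {a : A} {h h' : H} (hf : h ∈ I.firstChoices a)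
    (hadj : I.adj a h') (hnf : h' ∉ I.firstChoices a) : I.rank a h < I.rank a h' := by
  by_contra hcon
  push_neg at hcon
  exact hnf ⟨hadj, fun h'' hadj'' => hcon.trans (hf.2 _ hadj'')⟩

lemma reassign [Fintype A] [Fintype H] {I : HATInstance A H} {M : Set (A × H)}
    (hM : I.IsMatching M) (news : List (A × H))
    (hE : ∀ p ∈ news, p ∈ I.edgeSet)
    (hA : (news.map Prod.fst).Nodup)
    (hH : (news.map Prod.snd).Nodup)
    (hOwn : ∀ p ∈ news, ∀ c, (c, p.2) ∈ M → c ∈ news.map Prod.fst) :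
    ∃ M', I.IsMatching M' ∧
      (∀ x, Prefers I M' M x ↔ ∃ p ∈ news, p.1 = x ∧
        ∀ h₀, (x, h₀) ∈ M → I.rank x p.2 < I.rank x h₀) ∧
      (∀ x, Prefers I M M' x ↔ ∃ h₀, (x, h₀) ∈ M ∧ ∃ p ∈ news, p.1 = x ∧
        I.rank x h₀ < I.rank x p.2) := by
  classical
  set M' : Set (A × H) := {q | q ∈ M ∧ q.1 ∉ news.map Prod.fst} ∪ {q | q ∈ news} with hM'def
  have hfst : ∀ p ∈ news, ∀ q ∈ news, p.1 = q.1 → p = q := fun p hp q hq hpq =>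
    List.inj_on_of_nodup_map hA hp hq hpq
  have hsnd : ∀ p ∈ news, ∀ q ∈ news, p.2 = q.2 → p = q := fun p hp q hq hpq =>
    List.inj_on_of_nodup_map hH hp hq hpq
  have hmem : ∀ q : A × H, q ∈ M' ↔ (q ∈ M ∧ q.1 ∉ news.map Prod.fst) ∨ q ∈ news := fun q => Iff.rfl
  refine ⟨M', ⟨?_, ?_, ?_⟩, ?_, ?_⟩
  · rintro p (⟨hp, -⟩ | hp)
    · exact hM.1 hp
    · exact hE p hp
  · rintro p hp q hq h1
    rcases (hmem p).1 hp with ⟨hp, hp'⟩ | hp <;> rcases (hmem q).1 hq with ⟨hq, hq'⟩ | hq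
    · exact hM.2.1 p hp q hq h1
    · exact absurd (h1 ▸ List.mem_map_of_mem (f := Prod.fst) hq) hp'
    · exact absurd (h1 ▸ List.mem_map_of_mem (f := Prod.fst) hp) (h1 ▸ hq')
    · exact hfst p hp q hq h1
  · rintro p hp q hq h2
    rcases (hmem p).1 hp with ⟨hp, hp'⟩ | hp <;> rcases (hmem q).1 hq with ⟨hq, hq'⟩ | hq
    · exact hM.2.2 p hp q hq h2
    · exact absurd (hOwn q hq p.1 (by rw [← h2]; simpa using hp)) hp'
    · exact absurd (hOwn p hp q.1 (by rw [h2]; simpa using hq)) hq'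
    · exact hsnd p hp q hq h2
  · intro x
    constructor
    · rintro ⟨h, hh, hstrict⟩
      rcases (hmem (x, h)).1 hh with ⟨hold, -⟩ | hnew
      · exact absurd (hstrict h hold) (lt_irrefl _)
      · exact ⟨(x, h), hnew, rfl, hstrict⟩
    · rintro ⟨p, hp, hp1, hstrict⟩
      refine ⟨p.2, (hmem (x, p.2)).2 (Or.inr ?_), hstrict⟩
      rwa [show (x, p.2) = p from Prod.ext hp1.symm rfl]
  · intro x
    constructor
    · rintro ⟨h₀, hh₀, hstrict⟩
      by_cases hx : x ∈ news.map Prod.fst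
      · obtain ⟨p, hp, hp1⟩ := List.exists_of_mem_map hx
        have hpm : (x, p.2) ∈ M' := (hmem _).2 (Or.inr
          (by rwa [show (x, p.2) = p from Prod.ext hp1.symm rfl]))
        exact ⟨h₀, hh₀, p, hp, hp1, hstrict _ hpm⟩
      · exact absurd (hstrict h₀ ((hmem (x, h₀)).2 (Or.inl ⟨hh₀, hx⟩)))
          (lt_irrefl _)
    · rintro ⟨h₀, hh₀, p, hp, hp1, hlt⟩
      refine ⟨h₀, hh₀, fun h' hh' => ?_⟩
      rcases (hmem (x, h')).1 hh' with ⟨-, hx⟩ | hnew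
      · have hx' : p.1 ∈ news.map Prod.fst := List.mem_map_of_mem hp
        rw [hp1] at hx'
        exact absurd hx' hx
      · have : p = (x, h') := hfst p hp (x, h') hnew (by rw [hp1])
        rw [← show p.2 = h' from congrArg Prod.snd this]
        exact hlt

lemma morePopular_intro [Fintype A] {I : HATInstance A H} {M M' : Set (A × H)}
    {W Lo : Set A} (hW : ∀ x ∈ W, Prefers I M' M x)
    (hLo : ∀ x, Prefers I M M' x → x ∈ Lo) (hcard : Lo.ncard < W.ncard) :
    MorePopular I M' M := by
  have h1 : Nat.card {a | Prefers I M' M a} = ({a | Prefers I M' M a} : Set A).ncard :=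
    Nat.card_coe_set_eq _
  have h2 : Nat.card {a | Prefers I M M' a} = ({a | Prefers I M M' a} : Set A).ncard :=
    Nat.card_coe_set_eq _
  have h3 : W.ncard ≤ ({a | Prefers I M' M a} : Set A).ncard :=
    Set.ncard_le_ncard hW (Set.toFinite _)
  have h4 : ({a | Prefers I M M' a} : Set A).ncard ≤ Lo.ncard :=
    Set.ncard_le_ncard hLo (Set.toFinite _)
  show Nat.card _ > Nat.card _
  omega

end HATLayer


section ChainStruct

lemma last_eq {α : Type*} {s t : List α} {p q : α} (h : s ++ [p] = t ++ [q]) : p = q := by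
  have h1 : (s ++ [p]).getLast? = some p := List.getLast?_concat
  have h2 : (t ++ [q]).getLast? = some q := List.getLast?_concat
  rw [h, h2] at h1
  exact (Option.some_injective _ h1).symm

lemma chain_struct {E R : Set (A × H)} {h : H} {L : List (A × H)}
    (hc : ChainTo E R h L) :
    L = [] ∨ ∃ L₀ q, L = L₀ ++ [q] ∧ (∀ a, (a, q.2) ∉ R) := by
  induction hc with
  | nil => exact Or.inl rfl
  | @cons h g b L hR hE hnR hc ih =>
    rcases ih with rfl | ⟨L₀, q, rfl, hq⟩
    · refine Or.inr ⟨[], (b, g), by simp, ?_⟩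
      cases hc with | nil hexp => exact hexp
    · exact Or.inr ⟨(b, g) :: L₀, q, by simp, hq⟩

lemma chain_mid_owner {E R : Set (A × H)} {h : H} {L₀ : List (A × H)} {q : A × H}
    (hc : ChainTo E R h (L₀ ++ [q])) :
    ∀ p ∈ L₀ ++ [q], p.2 ≠ q.2 → ∃ c ∈ (L₀ ++ [q]).map Prod.fst, (c, p.2) ∈ R := by
  intro p hp hne
  obtain ⟨s, t, hst⟩ := List.append_of_mem hp
  rcases t.eq_nil_or_concat with rfl | ⟨t₀, qt, rfl⟩
  · exact absurd (last_eq (by rw [← hst] : s ++ [p] = L₀ ++ [q])) (fun e => hne (congrArg Prod.snd e))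
  · rw [List.concat_eq_append] at hst
    have hsuf : ChainTo E R p.2 (t₀ ++ [qt]) :=
      chainTo_suffix (show ChainTo E R h (s ++ p :: (t₀ ++ [qt])) by rw [← hst]; exact hc)
    rcases t₀ with _ | ⟨q₂, t₂⟩
    · have := chainTo_head_owner (by simpa using hsuf)
      refine ⟨qt.1, ?_, this⟩
      rw [hst]
      simp [List.mem_append]
    · have := chainTo_head_owner hsuf
      refine ⟨q₂.1, ?_, this⟩
      rw [hst]
      simp [List.mem_append]

end ChainStruct


section Win
variable [Fintype A] [Fintype H]

lemma R_matching {I : HATInstance A H} {M : Set (A × H)} (hM : I.IsMatching M) :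
    IsMatchingIn I.firstChoiceEdges (M ∩ I.firstChoiceEdges) :=
  ⟨fun _ hp => hp.2, fun p hp q hq => hM.2.1 p hp.1 q hq.1,
    fun p hp q hq => hM.2.2 p hp.1 q hq.1⟩

lemma win {I : HATInstance A H} {M : Set (A × H)}
    (hM : I.IsMatching M) {x : A} {htop : H} {L : List (A × H)}
    (hc : ChainTo I.firstChoiceEdges (M ∩ I.firstChoiceEdges) htop L)
    (hnd : (htop :: L.map Prod.snd).Nodup)
    (hxE : (x, htop) ∈ I.edgeSet)
    (hxL : x ∉ L.map Prod.fst)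
    (hgain : ∀ h₀, (x, h₀) ∈ M → I.rank x htop < I.rank x h₀) :
    ∃ M', I.IsMatching M' ∧ MorePopular I M' M := by
  classical
  have hRm : IsMatchingIn I.firstChoiceEdges (M ∩ I.firstChoiceEdges) := R_matching hM
  have hchainE₁ : ∀ p ∈ L, p ∈ I.firstChoiceEdges := chainTo_mem_E hc
  have hchainEdge : ∀ p ∈ L, p ∈ I.edgeSet := fun p hp => fcE_sub_edge I (hchainE₁ p hp)
  have hagnd : (L.map Prod.fst).Nodup := chain_agents_nodup hRm hc hnd
  have hAhouse : ∀ p ∈ L, ∀ h₀, (p.1, h₀) ∈ M → I.rank p.1 p.2 = I.rank p.1 h₀ := by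
    intro p hp h₀ hh₀
    obtain ⟨u, huR, -⟩ := chain_agents_Rhouse hc p.1 (List.mem_map_of_mem hp)
    have he : h₀ = u := left_unique hM hh₀ huR.1
    subst he
    exact fc_rank_eq (hchainE₁ p hp) huR.2
  have hnoLose : ∀ p ∈ L, ∀ h₀, (p.1, h₀) ∈ M →
      ¬ I.rank p.1 h₀ < I.rank p.1 p.2 := by
    intro p hp h₀ hh₀ hlt
    rw [hAhouse p hp h₀ hh₀] at hlt
    exact lt_irrefl _ hlt
  -- the agents of L are matched (in M ∩ E₁) to houses of the chain
  have hAmem : ∀ p ∈ L, ∀ h₀, (p.1, h₀) ∈ M → h₀ ∈ htop :: L.map Prod.snd := by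
    intro p hp h₀ hh₀
    obtain ⟨u, huR, humem⟩ := chain_agents_Rhouse hc p.1 (List.mem_map_of_mem hp)
    have he : h₀ = u := left_unique hM hh₀ huR.1
    subst he; exact humem
  rcases chain_struct hc with rfl | ⟨L₀, q, rfl, hexp0⟩
  · -- CASE I : L = [], htop is exposed
    have hexp : ∀ a, (a, htop) ∉ M ∩ I.firstChoiceEdges := by
      cases hc with | nil hexp => exact hexp
    by_cases hdex : ∃ d, (d, htop) ∈ M ∧ d ≠ x
    · obtain ⟨d, hd, hdx⟩ := hdex
      have hdE1 : htop ∉ I.firstChoices d := fun hm => hexp d ⟨hd, hm⟩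
      have hdadj : I.adj d htop := hM.1 hd
      obtain ⟨g, hg⟩ := fc_nonempty I d
      have hgne : g ≠ htop := fun e => hdE1 (e ▸ hg)
      have hdwin : I.rank d g < I.rank d htop := rank_lt_of_fc hg hdadj hdE1
      have hdh₀ : ∀ h₀, (d, h₀) ∈ M → h₀ = htop := fun h₀ hh₀ => left_unique hM hh₀ hd
      by_cases hcex : ∃ c, (c, g) ∈ M ∧ c ≠ x
      · obtain ⟨c, hcM, hcx⟩ := hcex
        have hcd : c ≠ d := fun e => hgne (left_unique hM (e ▸ hcM) hd)
        have hlcg : g ≠ I.lastResort c := fun e => hcd.symm (I.lastResort_only c d (e ▸ hg.1))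
        have hlct : htop ≠ I.lastResort c := fun e => hcd.symm (I.lastResort_only c d (e ▸ hdadj))
        obtain ⟨M', hm', hiffW, hiffL⟩ := reassign hM [(x, htop), (d, g), (c, I.lastResort c)]
          (by
            rintro p hp
            simp only [List.mem_cons, List.not_mem_nil, or_false] at hp
            rcases hp with rfl | rfl | rfl
            · exact hxE
            · exact hg.1
            · exact I.lastResort_adj c)
          (by simp [hdx.symm, hcx.symm, hcd.symm, Ne.symm hdx, Ne.symm hcx, Ne.symm hcd])
          (by simp [hgne, hlcg, hlct, Ne.symm hgne])
          (by
            rintro p hp c' hc'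
            simp only [List.mem_cons, List.not_mem_nil, or_false] at hp
            simp only [List.map_cons, List.map_nil, List.mem_cons, List.not_mem_nil, or_false]
            rcases hp with rfl | rfl | rfl
            · right; left; exact right_unique hM hc' hd
            · right; right; exact right_unique hM hc' hcM
            · right; right; exact I.lastResort_only c c' (hM.1 hc'))
        refine ⟨M', hm', morePopular_intro (W := {x, d}) (Lo := {c}) ?_ ?_ ?_⟩
        · rintro y (rfl | rfl)
          · exact (hiffW y).2 ⟨(y, htop), by simp, rfl, hgain⟩
          · refine (hiffW y).2 ⟨(y, g), by simp, rfl, fun h₀ hh₀ => ?_⟩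
            rw [hdh₀ h₀ hh₀]; exact hdwin
        · intro y hy
          obtain ⟨h₀, hh₀, p, hp, hp1, hlt⟩ := (hiffL y).1 hy
          simp only [List.mem_cons, List.not_mem_nil, or_false] at hp
          rcases hp with rfl | rfl | rfl
          · dsimp at hp1 hlt; subst hp1
            exact absurd (hgain h₀ hh₀) (lt_asymm hlt)
          · dsimp at hp1 hlt; subst hp1
            rw [hdh₀ h₀ hh₀] at hlt
            exact absurd hdwin (lt_asymm hlt)
          · dsimp at hp1; subst hp1; exact rfl
        · rw [Set.ncard_singleton, Set.ncard_pair hdx.symm]; omega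
      · push_neg at hcex
        obtain ⟨M', hm', hiffW, hiffL⟩ := reassign hM [(x, htop), (d, g)]
          (by
            rintro p hp
            simp only [List.mem_cons, List.not_mem_nil, or_false] at hp
            rcases hp with rfl | rfl
            · exact hxE
            · exact hg.1)
          (by simp [hdx.symm, Ne.symm hdx])
          (by simp [hgne, Ne.symm hgne])
          (by
            rintro p hp c' hc'
            simp only [List.mem_cons, List.not_mem_nil, or_false] at hp
            simp only [List.map_cons, List.map_nil, List.mem_cons, List.not_mem_nil, or_false]
            rcases hp with rfl | rfl
            · right; exact right_unique hM hc' hd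
            · left; exact hcex c' hc')
        refine ⟨M', hm', morePopular_intro (W := {x, d}) (Lo := (∅ : Set A)) ?_ ?_ ?_⟩
        · rintro y (rfl | rfl)
          · exact (hiffW y).2 ⟨(y, htop), by simp, rfl, hgain⟩
          · refine (hiffW y).2 ⟨(y, g), by simp, rfl, fun h₀ hh₀ => ?_⟩
            rw [hdh₀ h₀ hh₀]; exact hdwin
        · intro y hy
          obtain ⟨h₀, hh₀, p, hp, hp1, hlt⟩ := (hiffL y).1 hy
          simp only [List.mem_cons, List.not_mem_nil, or_false] at hp
          rcases hp with rfl | rfl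
          · dsimp at hp1 hlt; subst hp1
            exact absurd (hgain h₀ hh₀) (lt_asymm hlt)
          · dsimp at hp1 hlt; subst hp1
            rw [hdh₀ h₀ hh₀] at hlt
            exact absurd hdwin (lt_asymm hlt)
        · rw [Set.ncard_empty, Set.ncard_pair hdx.symm]; omega
    · push_neg at hdex
      obtain ⟨M', hm', hiffW, hiffL⟩ := reassign hM [(x, htop)]
        (by rintro p hp; simp only [List.mem_cons, List.not_mem_nil, or_false] at hp; rw [hp]; exact hxE)
        (by simp) (by simp)
        (by
          rintro p hp c' hc'
          simp only [List.mem_cons, List.not_mem_nil, or_false] at hp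
          subst hp
          simp only [List.map_cons, List.map_nil, List.mem_cons, List.not_mem_nil, or_false]
          exact hdex c' hc')
      refine ⟨M', hm', morePopular_intro (W := {x}) (Lo := (∅ : Set A)) ?_ ?_ ?_⟩
      · rintro y rfl
        exact (hiffW y).2 ⟨(y, htop), by simp, rfl, hgain⟩
      · intro y hy
        obtain ⟨h₀, hh₀, p, hp, hp1, hlt⟩ := (hiffL y).1 hy
        simp only [List.mem_cons, List.not_mem_nil, or_false] at hp
        subst hp
        dsimp at hp1 hlt; subst hp1
        exact absurd (hgain h₀ hh₀) (lt_asymm hlt)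
      · rw [Set.ncard_empty, Set.ncard_singleton]; omega
  · -- CASE II : L = L₀ ++ [q] with q.2 the exposed bottom house
    obtain ⟨p₀, Ltl, hLcons⟩ : ∃ p₀ Ltl, L₀ ++ [q] = p₀ :: Ltl := by
      cases L₀ with
      | nil => exact ⟨q, [], rfl⟩
      | cons a l => exact ⟨a, l ++ [q], rfl⟩
    have hhead : (p₀.1, htop) ∈ M ∩ I.firstChoiceEdges :=
      chainTo_head_owner (show ChainTo _ _ htop (p₀ :: Ltl) by rw [← hLcons]; exact hc)
    have hp₀mem : p₀ ∈ L₀ ++ [q] := by rw [hLcons]; exact List.mem_cons_self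
    have htopOwn : ∀ c, (c, htop) ∈ M → c = p₀.1 := fun c hc' => right_unique hM hc' hhead.1
    have hmidOwn : ∀ p ∈ L₀ ++ [q], p.2 ≠ q.2 → ∀ c, (c, p.2) ∈ M →
        c ∈ (L₀ ++ [q]).map Prod.fst := by
      intro p hp hne c hcM
      obtain ⟨c', hc'mem, hc'R⟩ := chain_mid_owner hc p hp hne
      have : c = c' := right_unique hM hcM hc'R.1
      subst this; exact hc'mem
    by_cases hdex : ∃ d, (d, q.2) ∈ M ∧ d ≠ x
    · obtain ⟨d, hd, hdx⟩ := hdex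
      have hdnf : q.2 ∉ I.firstChoices d := fun hm => hexp0 d ⟨hd, hm⟩
      have hdadj : I.adj d q.2 := hM.1 hd
      have hdh₀ : ∀ h₀, (d, h₀) ∈ M → h₀ = q.2 := fun h₀ hh₀ => left_unique hM hh₀ hd
      have hdnotL : d ∉ (L₀ ++ [q]).map Prod.fst := by
        intro hmem
        obtain ⟨u, huR, -⟩ := chain_agents_Rhouse hc d hmem
        have hu : u = q.2 := left_unique hM huR.1 hd
        exact hdnf (by rw [← hu]; exact huR.2)
      obtain ⟨g, hg⟩ := fc_nonempty I d
      have hgne0 : g ≠ q.2 := fun e => hdnf (e ▸ hg)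
      have hdwin : I.rank d g < I.rank d q.2 := rank_lt_of_fc hg hdadj hdnf
      by_cases hgfresh : g ∈ htop :: (L₀ ++ [q]).map Prod.snd
      · rcases List.mem_cons.1 hgfresh with hgtop | hgL
        · -- Plan B with g = htop : give d the top house, shift the whole chain
          subst hgtop
          obtain ⟨M', hm', hiffW, hiffL⟩ := reassign hM ((d, g) :: (L₀ ++ [q]))
            (by
              rintro p hp
              rcases List.mem_cons.1 hp with rfl | hp
              · exact hg.1
              · exact hchainEdge p hp)
            (by rw [List.map_cons]; exact List.nodup_cons.2 ⟨hdnotL, hagnd⟩)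
            (by rw [List.map_cons]; exact hnd)
            (by
              rintro p hp c' hc'
              rw [List.map_cons]
              rcases List.mem_cons.1 hp with rfl | hp
              · exact List.mem_cons_of_mem _ (by
                  rw [htopOwn c' hc']; exact List.mem_map_of_mem hp₀mem)
              · by_cases hpq : p.2 = q.2
                · rw [hpq] at hc'
                  rw [right_unique hM hc' hd]
                  exact List.mem_cons_self
                · exact List.mem_cons_of_mem _ (hmidOwn p hp hpq c' hc'))
          refine ⟨M', hm', morePopular_intro (W := {d}) (Lo := (∅ : Set A)) ?_ ?_ ?_⟩
          · rintro y rfl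
            refine (hiffW y).2 ⟨(y, g), List.mem_cons_self, rfl, fun h₀ hh₀ => ?_⟩
            rw [hdh₀ h₀ hh₀]; exact hdwin
          · intro y hy
            obtain ⟨h₀, hh₀, p, hp, hp1, hlt⟩ := (hiffL y).1 hy
            rcases List.mem_cons.1 hp with rfl | hp
            · dsimp at hp1 hlt; subst hp1
              rw [hdh₀ h₀ hh₀] at hlt
              exact absurd hdwin (lt_asymm hlt)
            · subst hp1; exact absurd hlt (hnoLose p hp h₀ hh₀)
          · rw [Set.ncard_empty, Set.ncard_singleton]; omega
        · -- Plan B with g an interior chain house : reroute the suffix below g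
          obtain ⟨pg, hpgL, hpg2⟩ := List.exists_of_mem_map hgL
          obtain ⟨s, t, hst⟩ := List.append_of_mem hpgL
          have htne : t ≠ [] := by
            rintro rfl
            have hpq : pg = q := last_eq (show s ++ [pg] = L₀ ++ [q] by rw [← hst])
            exact hgne0 (by rw [← hpg2, hpq])
          obtain ⟨q₂, t₂, rfl⟩ := List.exists_cons_of_ne_nil htne
          have hsuf : ChainTo I.firstChoiceEdges (M ∩ I.firstChoiceEdges) g (q₂ :: t₂) := by
            rw [← hpg2]
            exact chainTo_suffix (show ChainTo _ _ htop (s ++ pg :: q₂ :: t₂) by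
              rw [← hst]; exact hc)
          have hgown : (q₂.1, g) ∈ M ∩ I.firstChoiceEdges := chainTo_head_owner hsuf
          have htsub : ∀ r ∈ q₂ :: t₂, r ∈ L₀ ++ [q] := by
            intro r hr; rw [hst]
            exact List.mem_append_right _ (List.mem_cons_of_mem _ hr)
          have htsubl : (q₂ :: t₂).Sublist (L₀ ++ [q]) := by
            rw [hst]
            exact (List.sublist_cons_self pg (q₂ :: t₂)).trans (List.sublist_append_right s _)
          have hndt : (g :: (q₂ :: t₂).map Prod.snd).Nodup := by
            have h0 : ((L₀ ++ [q]).map Prod.snd).Nodup := hnd.of_cons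
            rw [hst, List.map_append, List.map_cons] at h0
            rw [← hpg2]
            exact (List.nodup_append.1 h0).2.1
          have hagndt : ((q₂ :: t₂).map Prod.fst).Nodup := (htsubl.map Prod.fst).nodup hagnd
          have hdnott : d ∉ (q₂ :: t₂).map Prod.fst := by
            intro hmem
            obtain ⟨r, hr, hr1⟩ := List.exists_of_mem_map hmem
            exact hdnotL (by rw [← hr1]; exact List.mem_map_of_mem (htsub r hr))
          have hlastq : ∀ p ∈ q₂ :: t₂, p.2 ≠ q.2 → ∀ c, (c, p.2) ∈ M →
              c ∈ (q₂ :: t₂).map Prod.fst := by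
            rcases (q₂ :: t₂).eq_nil_or_concat with habs | ⟨t₀, qt, hteq⟩
            · simp at habs
            · rw [List.concat_eq_append] at hteq
              have hqt : qt = q := last_eq (show (s ++ pg :: t₀) ++ [qt] = L₀ ++ [q] by
                rw [hst, hteq]; simp)
              intro p hp hne c hcM
              have hsuf' : ChainTo I.firstChoiceEdges (M ∩ I.firstChoiceEdges) g (t₀ ++ [qt]) := by
                rw [← hteq]; exact hsuf
              obtain ⟨c', hc'mem, hc'R⟩ := chain_mid_owner hsuf' p (by rw [← hteq]; exact hp)
                (by rw [hqt]; exact hne)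
              have : c = c' := right_unique hM hcM hc'R.1
              subst this
              rw [hteq]
              exact hc'mem
          obtain ⟨M', hm', hiffW, hiffL⟩ := reassign hM ((d, g) :: q₂ :: t₂)
            (by
              rintro p hp
              rcases List.mem_cons.1 hp with rfl | hp
              · exact hg.1
              · exact hchainEdge p (htsub p hp))
            (by rw [List.map_cons]; exact List.nodup_cons.2 ⟨hdnott, hagndt⟩)
            (by rw [List.map_cons]; exact hndt)
            (by
              rintro p hp c' hc'
              rw [List.map_cons]
              rcases List.mem_cons.1 hp with rfl | hp
              · refine List.mem_cons_of_mem _ ?_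
                rw [right_unique hM hc' hgown.1]
                exact List.mem_map_of_mem (List.mem_cons_self)
              · by_cases hpq : p.2 = q.2
                · rw [hpq] at hc'
                  rw [right_unique hM hc' hd]
                  exact List.mem_cons_self
                · exact List.mem_cons_of_mem _ (hlastq p hp hpq c' hc'))
          refine ⟨M', hm', morePopular_intro (W := {d}) (Lo := (∅ : Set A)) ?_ ?_ ?_⟩
          · rintro y rfl
            refine (hiffW y).2 ⟨(y, g), List.mem_cons_self, rfl, fun h₀ hh₀ => ?_⟩
            rw [hdh₀ h₀ hh₀]; exact hdwin
          · intro y hy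
            obtain ⟨h₀, hh₀, p, hp, hp1, hlt⟩ := (hiffL y).1 hy
            rcases List.mem_cons.1 hp with rfl | hp
            · dsimp at hp1 hlt; subst hp1
              rw [hdh₀ h₀ hh₀] at hlt
              exact absurd hdwin (lt_asymm hlt)
            · subst hp1; exact absurd hlt (hnoLose p (htsub p hp) h₀ hh₀)
          · rw [Set.ncard_empty, Set.ncard_singleton]; omega
      · -- g is a fresh house
        have hgtop : g ≠ htop := fun e => hgfresh (e ▸ List.mem_cons_self)
        by_cases hcex : ∃ c, (c, g) ∈ M ∧ c ≠ x
        · obtain ⟨c, hcM, hcx⟩ := hcex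
          have hcd : c ≠ d := fun e => hgne0 (left_unique hM (e ▸ hcM) hd)
          have hcnotL : c ∉ (L₀ ++ [q]).map Prod.fst := by
            intro hmem
            obtain ⟨r, hr, hr1⟩ := List.exists_of_mem_map hmem
            exact hgfresh (hAmem r hr g (by rw [hr1]; exact hcM))
          have hch₀ : ∀ h₀, (c, h₀) ∈ M → h₀ = g := fun h₀ hh₀ => left_unique hM hh₀ hcM
          have hlcg : g ≠ I.lastResort c := fun e => hcd.symm (I.lastResort_only c d (e ▸ hg.1))
          have hlct : htop ≠ I.lastResort c :=
            fun e => hcx (I.lastResort_only c x (e ▸ (show I.adj x htop from hxE))).symm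
          have hlcL : ∀ p ∈ L₀ ++ [q], p.2 ≠ I.lastResort c := by
            intro p hp e
            have hadjp : I.adj p.1 p.2 := hchainEdge p hp
            rw [e] at hadjp
            exact hcnotL (by rw [← I.lastResort_only c p.1 hadjp]; exact List.mem_map_of_mem hp)
          obtain ⟨M', hm', hiffW, hiffL⟩ := reassign hM
            ((c, I.lastResort c) :: (d, g) :: (x, htop) :: (L₀ ++ [q]))
            (by
              rintro p hp
              rcases List.mem_cons.1 hp with rfl | hp
              · exact I.lastResort_adj c
              rcases List.mem_cons.1 hp with rfl | hp
              · exact hg.1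
              rcases List.mem_cons.1 hp with rfl | hp
              · exact hxE
              · exact hchainEdge p hp)
            (by
              simp only [List.map_cons, List.nodup_cons, List.mem_cons]
              refine ⟨?_, ?_, hxL, hagnd⟩
              · push_neg
                exact ⟨hcd, hcx, fun hm => hcnotL hm⟩
              · push_neg
                exact ⟨hdx, fun hm => hdnotL hm⟩)
            (by
              simp only [List.map_cons, List.nodup_cons, List.mem_cons]
              refine ⟨?_, ?_, (List.nodup_cons.1 hnd).1, hnd.of_cons⟩
              · push_neg
                refine ⟨hlcg.symm, hlct.symm, fun hm => ?_⟩
                obtain ⟨r, hr, hr2⟩ := List.exists_of_mem_map hm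
                exact hlcL r hr hr2
              · push_neg
                exact ⟨hgtop, fun hm => hgfresh (List.mem_cons_of_mem _ hm)⟩)
            (by
              rintro p hp c' hc'
              simp only [List.map_cons, List.mem_cons]
              rcases List.mem_cons.1 hp with rfl | hp
              · left; exact I.lastResort_only c c' (hM.1 hc')
              rcases List.mem_cons.1 hp with rfl | hp
              · left; exact right_unique hM hc' hcM
              rcases List.mem_cons.1 hp with rfl | hp
              · right; right; right
                rw [htopOwn c' hc']
                exact List.mem_map_of_mem hp₀mem
              · by_cases hpq : p.2 = q.2
                · rw [hpq] at hc'
                  right; left; exact right_unique hM hc' hd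
                · right; right; right
                  exact hmidOwn p hp hpq c' hc')
          refine ⟨M', hm', morePopular_intro (W := {x, d}) (Lo := {c}) ?_ ?_ ?_⟩
          · rintro y (rfl | rfl)
            · exact (hiffW y).2 ⟨(y, htop), by simp, rfl, hgain⟩
            · refine (hiffW y).2 ⟨(y, g), by simp, rfl, fun h₀ hh₀ => ?_⟩
              rw [hdh₀ h₀ hh₀]; exact hdwin
          · intro y hy
            obtain ⟨h₀, hh₀, p, hp, hp1, hlt⟩ := (hiffL y).1 hy
            rcases List.mem_cons.1 hp with rfl | hp
            · dsimp at hp1; subst hp1; exact rfl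
            rcases List.mem_cons.1 hp with rfl | hp
            · dsimp at hp1 hlt; subst hp1
              rw [hdh₀ h₀ hh₀] at hlt
              exact absurd hdwin (lt_asymm hlt)
            rcases List.mem_cons.1 hp with rfl | hp
            · dsimp at hp1 hlt; subst hp1
              exact absurd (hgain h₀ hh₀) (lt_asymm hlt)
            · subst hp1; exact absurd hlt (hnoLose p hp h₀ hh₀)
          · rw [Set.ncard_singleton, Set.ncard_pair hdx.symm]; omega
        · push_neg at hcex
          obtain ⟨M', hm', hiffW, hiffL⟩ := reassign hM
            ((d, g) :: (x, htop) :: (L₀ ++ [q]))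
            (by
              rintro p hp
              rcases List.mem_cons.1 hp with rfl | hp
              · exact hg.1
              rcases List.mem_cons.1 hp with rfl | hp
              · exact hxE
              · exact hchainEdge p hp)
            (by
              simp only [List.map_cons, List.nodup_cons, List.mem_cons]
              refine ⟨?_, hxL, hagnd⟩
              push_neg
              exact ⟨hdx, fun hm => hdnotL hm⟩)
            (by
              simp only [List.map_cons, List.nodup_cons, List.mem_cons]
              refine ⟨?_, (List.nodup_cons.1 hnd).1, hnd.of_cons⟩
              push_neg
              exact ⟨hgtop, fun hm => hgfresh (List.mem_cons_of_mem _ hm)⟩)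
            (by
              rintro p hp c' hc'
              simp only [List.map_cons, List.mem_cons]
              rcases List.mem_cons.1 hp with rfl | hp
              · right; left; exact hcex c' hc'
              rcases List.mem_cons.1 hp with rfl | hp
              · right; right
                rw [htopOwn c' hc']
                exact List.mem_map_of_mem hp₀mem
              · by_cases hpq : p.2 = q.2
                · rw [hpq] at hc'
                  left; exact right_unique hM hc' hd
                · right; right
                  exact hmidOwn p hp hpq c' hc')
          refine ⟨M', hm', morePopular_intro (W := {x, d}) (Lo := (∅ : Set A)) ?_ ?_ ?_⟩
          · rintro y (rfl | rfl)
            · exact (hiffW y).2 ⟨(y, htop), by simp, rfl, hgain⟩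
            · refine (hiffW y).2 ⟨(y, g), by simp, rfl, fun h₀ hh₀ => ?_⟩
              rw [hdh₀ h₀ hh₀]; exact hdwin
          · intro y hy
            obtain ⟨h₀, hh₀, p, hp, hp1, hlt⟩ := (hiffL y).1 hy
            rcases List.mem_cons.1 hp with rfl | hp
            · dsimp at hp1 hlt; subst hp1
              rw [hdh₀ h₀ hh₀] at hlt
              exact absurd hdwin (lt_asymm hlt)
            rcases List.mem_cons.1 hp with rfl | hp
            · dsimp at hp1 hlt; subst hp1
              exact absurd (hgain h₀ hh₀) (lt_asymm hlt)
            · subst hp1; exact absurd hlt (hnoLose p hp h₀ hh₀)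
          · rw [Set.ncard_empty, Set.ncard_pair hdx.symm]; omega
    · push_neg at hdex
      obtain ⟨M', hm', hiffW, hiffL⟩ := reassign hM ((x, htop) :: (L₀ ++ [q]))
        (by
          rintro p hp
          rcases List.mem_cons.1 hp with rfl | hp
          · exact hxE
          · exact hchainEdge p hp)
        (by rw [List.map_cons]; exact List.nodup_cons.2 ⟨hxL, hagnd⟩)
        (by rw [List.map_cons]; exact hnd)
        (by
          rintro p hp c' hc'
          rw [List.map_cons]
          rcases List.mem_cons.1 hp with rfl | hp
          · exact List.mem_cons_of_mem _ (by
              rw [htopOwn c' hc']; exact List.mem_map_of_mem hp₀mem)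
          · by_cases hpq : p.2 = q.2
            · rw [hpq] at hc'
              rw [hdex c' hc']
              exact List.mem_cons_self
            · exact List.mem_cons_of_mem _ (hmidOwn p hp hpq c' hc'))
      refine ⟨M', hm', morePopular_intro (W := {x}) (Lo := (∅ : Set A)) ?_ ?_ ?_⟩
      · rintro y rfl
        exact (hiffW y).2 ⟨(y, htop), List.mem_cons_self, rfl, hgain⟩
      · intro y hy
        obtain ⟨h₀, hh₀, p, hp, hp1, hlt⟩ := (hiffL y).1 hy
        rcases List.mem_cons.1 hp with rfl | hp
        · dsimp at hp1 hlt; subst hp1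
          exact absurd (hgain h₀ hh₀) (lt_asymm hlt)
        · subst hp1
          exact absurd hlt (hnoLose p hp h₀ hh₀)
      · rw [Set.ncard_empty, Set.ncard_singleton]; omega

end Win


section Necessity1
variable [Fintype A] [Fintype H]

lemma all_matched {I : HATInstance A H} {M : Set (A × H)} (hpop : IsPopular I M) :
    ∀ a, ∃ h, (a, h) ∈ M := by
  intro a
  by_contra hnex
  push_neg at hnex
  obtain ⟨M', hm', hiffW, hiffL⟩ := reassign hpop.1 [(a, I.lastResort a)]
    (by
      rintro p hp
      simp only [List.mem_cons, List.not_mem_nil, or_false] at hp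
      rw [hp]; exact I.lastResort_adj a)
    (by simp) (by simp)
    (by
      rintro p hp c' hc'
      simp only [List.mem_cons, List.not_mem_nil, or_false] at hp
      subst hp
      simp only [List.map_cons, List.map_nil, List.mem_cons, List.not_mem_nil, or_false]
      exact I.lastResort_only a c' (hpop.1.1 hc'))
  refine hpop.2 M' hm' (morePopular_intro (W := {a}) (Lo := (∅ : Set A)) ?_ ?_ ?_)
  · rintro y rfl
    exact (hiffW y).2 ⟨(y, I.lastResort y), by simp, rfl,
      fun h₀ hh₀ => absurd hh₀ (hnex h₀)⟩
  · intro y hy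
    obtain ⟨h₀, hh₀, p, hp, hp1, hlt⟩ := (hiffL y).1 hy
    simp only [List.mem_cons, List.not_mem_nil, or_false] at hp
    subst hp
    dsimp at hp1; subst hp1
    exact absurd hh₀ (hnex h₀)
  · rw [Set.ncard_empty, Set.ncard_singleton]; omega

lemma popular_max {I : HATInstance A H} {M : Set (A × H)} (hpop : IsPopular I M) :
    IsMaxMatchingIn I.firstChoiceEdges (M ∩ I.firstChoiceEdges) := by
  have hRm := R_matching hpop.1
  refine ⟨hRm, ?_⟩
  by_contra hcon
  push_neg at hcon
  obtain ⟨N, hN, hcard⟩ := hcon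
  obtain ⟨a₁, h₁, haexp, haE, hanR, hpe⟩ := exists_aug hRm hN hcard
  obtain ⟨L0, hc0⟩ := hpe
  obtain ⟨L, hcL, hnd⟩ := chainTo_simple hc0
  have hxE : (a₁, h₁) ∈ I.edgeSet := fcE_sub_edge I haE
  have hxL : a₁ ∉ L.map Prod.fst := by
    intro hmem
    obtain ⟨u, huR, -⟩ := chain_agents_Rhouse hcL a₁ hmem
    exact haexp u huR
  have hgain : ∀ h₀, (a₁, h₀) ∈ M → I.rank a₁ h₁ < I.rank a₁ h₀ := by
    intro h₀ hh₀
    have hnf : h₀ ∉ I.firstChoices a₁ := fun hf => haexp h₀ ⟨hh₀, hf⟩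
    exact rank_lt_of_fc haE (hpop.1.1 hh₀) hnf
  obtain ⟨M', hm', hmp⟩ := win hpop.1 hcL hnd hxE hxL hgain
  exact hpop.2 M' hm' hmp

end Necessity1


section WalkBridge
open Sum

lemma mem_sym2Edges {M : Set (A × H)} {a : A} {h : H} :
    s(Sum.inl a, Sum.inr h) ∈ sym2Edges M ↔ (a, h) ∈ M := by
  constructor
  · rintro ⟨p, hp, he⟩
    rw [Sym2.eq_iff] at he
    rcases he with ⟨h1, h2⟩ | ⟨h1, h2⟩
    · obtain ⟨rfl⟩ := Sum.inl.inj h1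
      obtain ⟨rfl⟩ := Sum.inr.inj h2
      simpa using hp
    · exact absurd h1 (by simp)
  · intro hm
    exact ⟨(a, h), hm, rfl⟩

lemma mem_sym2Edges' {M : Set (A × H)} {a : A} {h : H} :
    s(Sum.inr h, Sum.inl a) ∈ sym2Edges M ↔ (a, h) ∈ M := by
  rw [Sym2.eq_swap]; exact mem_sym2Edges

lemma unmatched_inr {M : Set (A × H)} {h : H} :
    UnmatchedVtx (sym2Edges M) (Sum.inr h) ↔ ∀ a, (a, h) ∉ M := by
  constructor
  · intro hu a hm
    exact hu s(Sum.inl a, Sum.inr h) ⟨(a, h), hm, rfl⟩ (by rw [Sym2.mem_iff]; right; rfl)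
  · rintro hall e ⟨p, hp, rfl⟩ hmem
    rw [Sym2.mem_iff] at hmem
    rcases hmem with h1 | h2
    · exact absurd h1 (by simp)
    · obtain ⟨rfl⟩ := Sum.inr.inj h2
      exact hall p.1 (by simpa using hp)

lemma g1_adj_iff {I : HATInstance A H} {a : A} {h : H} :
    I.G1.Adj (Sum.inl a) (Sum.inr h) ↔ h ∈ I.firstChoices a := by
  show (SimpleGraph.fromRel _).Adj _ _ ↔ _
  rw [SimpleGraph.fromRel_adj]
  constructor
  · rintro ⟨-, ⟨a', h', he1, he2, hf⟩ | ⟨a', h', he1, he2, hf⟩⟩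
    · obtain ⟨rfl⟩ := Sum.inl.inj he1
      obtain ⟨rfl⟩ := Sum.inr.inj he2
      exact hf
    · exact absurd he1 (by simp)
  · intro hf
    exact ⟨by simp, Or.inl ⟨a, h, rfl, rfl, hf⟩⟩

lemma g1_adj_cases {I : HATInstance A H} {x y : A ⊕ H} (hadj : I.G1.Adj x y) :
    ∃ a h, h ∈ I.firstChoices a ∧ ((x = Sum.inl a ∧ y = Sum.inr h) ∨
      (x = Sum.inr h ∧ y = Sum.inl a)) := by
  have hadj' : (SimpleGraph.fromRel _).Adj x y := hadj
  rw [SimpleGraph.fromRel_adj] at hadj'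
  rcases hadj' with ⟨-, ⟨a, h, he1, he2, hf⟩ | ⟨a, h, he1, he2, hf⟩⟩
  · exact ⟨a, h, hf, Or.inl ⟨he1, he2⟩⟩
  · exact ⟨a, h, hf, Or.inr ⟨he2, he1⟩⟩

lemma g1_adj_flip {I : HATInstance A H} {x y : A ⊕ H} (hadj : I.G1.Adj x y) :
    x.isLeft = !y.isLeft := by
  obtain ⟨a, h, -, ⟨rfl, rfl⟩ | ⟨rfl, rfl⟩⟩ := g1_adj_cases hadj <;> rfl

lemma walk_side {I : HATInstance A H} : ∀ {x y : A ⊕ H} (p : I.G1.Walk x y),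
    x.isLeft = ((p.length % 2 == 1) ^^ y.isLeft) := by
  intro x y p
  induction p with
  | nil => simp
  | @cons u v w hadj q ih =>
    rw [SimpleGraph.Walk.length_cons, g1_adj_flip hadj, ih]
    rcases Nat.mod_two_eq_zero_or_one q.length with h | h <;>
      simp [Nat.add_mod, h]

/-- Peeling an alternating walk between two house vertices into a pair chain. -/
lemma peel {I : HATInstance A H} {M₁ : Set (A × H)} :
    ∀ n {x y : A ⊕ H} (p : I.G1.Walk x y), p.length = n →
    (∀ (i : ℕ) (hi : i < p.edges.length), (p.edges.get ⟨i, hi⟩ ∈ sym2Edges M₁ ↔ i % 2 = 1)) →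
    ∀ {g h : H}, x = Sum.inr g → y = Sum.inr h →
    PEven I.firstChoiceEdges M₁ g → PEven I.firstChoiceEdges M₁ h := by
  intro n
  induction n using Nat.strong_induction_on with
  | _ n ih =>
    intro x y p hlen halt g h hx hy hpe
    cases p with
    | nil =>
      subst hx
      obtain ⟨rfl⟩ := Sum.inr.inj hy
      exact hpe
    | @cons u w y' hadj q =>
      subst hx hy
      obtain ⟨a, h', -, ⟨habs, -⟩ | ⟨heq, rfl⟩⟩ := g1_adj_cases hadj
      · exact absurd habs (by simp)
      obtain ⟨rfl⟩ := Sum.inr.inj heq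
      have hE1 : (a, g) ∈ I.firstChoiceEdges := g1_adj_iff.1 hadj.symm
      cases q with
      | @cons u2 w2 y2 hadj2 q2 =>
        obtain ⟨a2, g₂, -, ⟨heq2, rfl⟩ | ⟨habs, -⟩⟩ := g1_adj_cases hadj2
        swap
        · exact absurd habs (by simp)
        obtain ⟨rfl⟩ := Sum.inl.inj heq2
        have hE2 : (a, g₂) ∈ I.firstChoiceEdges := g1_adj_iff.1 hadj2
        -- membership facts from the alternating condition
        have h0 : ¬ ((a, g) ∈ M₁) := by
          have := (halt 0 (by simp)).not.2 (by norm_num)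
          simpa [mem_sym2Edges'] using this
        have h1 : (a, g₂) ∈ M₁ := by
          have := (halt 1 (by simp)).2 (by norm_num)
          simpa [mem_sym2Edges] using this
        have hpe2 : PEven I.firstChoiceEdges M₁ g₂ := pEven_step hpe h1 hE1 h0
        have halt2 : ∀ (i : ℕ) (hi : i < q2.edges.length),
            (q2.edges.get ⟨i, hi⟩ ∈ sym2Edges M₁ ↔ i % 2 = 1) := by
          intro i hi
          have hi' : i + 2 < ((SimpleGraph.Walk.cons hadj (SimpleGraph.Walk.cons hadj2 q2)).edges.length) := by
            simp only [SimpleGraph.Walk.edges_cons, List.length_cons]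
            omega
          have := halt (i + 2) hi'
          simp only [SimpleGraph.Walk.edges_cons, List.get_eq_getElem,
            List.getElem_cons_succ] at this ⊢
          rw [show (i + 2) % 2 = i % 2 by omega] at this
          exact this
        have hlen2 : q2.length = n - 2 := by
          simp only [SimpleGraph.Walk.length_cons] at hlen
          omega
        have hn2 : n - 2 < n := by
          simp only [SimpleGraph.Walk.length_cons] at hlen
          omega
        exact ih (n - 2) hn2 q2 hlen2 halt2 rfl rfl hpe2

lemma pEven_of_evenVtx {I : HATInstance A H} {M₁ : Set (A × H)} {h : H}
    (hev : EvenVtx I.G1 (sym2Edges M₁) (Sum.inr h)) :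
    PEven I.firstChoiceEdges M₁ h := by
  obtain ⟨u, hu, p, hpath, halt, heven⟩ := hev
  have hside := walk_side p
  have hL : (p.length % 2 == 1) = false := by
    rw [Nat.even_iff] at heven
    simp [heven]
  rw [hL] at hside
  simp only [Bool.false_xor] at hside
  obtain a | g₀ := u
  · simp at hside
  · have hg₀ : PEven I.firstChoiceEdges M₁ g₀ :=
      pEven_of_exposed' (unmatched_inr.1 hu)
    exact peel p.length p rfl halt rfl rfl hg₀

end WalkBridge


section WalkBuild
open Sum

lemma build_walk {I : HATInstance A H} {M₁ : Set (A × H)}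
    (hM₁m : IsMatchingIn I.firstChoiceEdges M₁) :
    ∀ {h : H} {L : List (A × H)}, ChainTo I.firstChoiceEdges M₁ h L →
    (h :: L.map Prod.snd).Nodup →
    ∃ (g₀ : H) (p : I.G1.Walk (Sum.inr g₀) (Sum.inr h)),
      (∀ a, (a, g₀) ∉ M₁) ∧ p.length = 2 * L.length ∧ p.support.Nodup ∧
      IsAlternatingWalk (sym2Edges M₁) p ∧
      (∀ v ∈ p.support, (∃ u, v = Sum.inr u ∧ u ∈ h :: L.map Prod.snd) ∨
        (∃ b, v = Sum.inl b ∧ b ∈ L.map Prod.fst)) := by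
  intro h L hc
  induction hc with
  | @nil h hexp =>
    intro _
    refine ⟨h, SimpleGraph.Walk.nil, hexp, by simp, by simp, ?_, ?_⟩
    · intro i hi
      simp at hi
    · intro v hv
      simp only [SimpleGraph.Walk.support_nil, List.mem_cons, List.not_mem_nil, or_false] at hv
      exact Or.inl ⟨h, hv, by simp⟩
  | @cons h g b L hR hE hnR hc ih =>
    intro hnd
    rw [List.map_cons] at hnd
    have hh : h ∉ g :: L.map Prod.snd := (List.nodup_cons.1 hnd).1
    obtain ⟨g₀, p', hexp, hlen, hnodup, halt, hsupp⟩ := ih hnd.of_cons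
    have ha1 : I.G1.Adj (Sum.inr g) (Sum.inl b) := (g1_adj_iff.2 hE).symm
    have ha2 : I.G1.Adj (Sum.inl b) (Sum.inr h) := g1_adj_iff.2 (hM₁m.1 hR)
    set w2 : I.G1.Walk (Sum.inr g) (Sum.inr h) :=
      SimpleGraph.Walk.cons ha1 (SimpleGraph.Walk.cons ha2 SimpleGraph.Walk.nil) with hw2
    have hbnot : (Sum.inl b : A ⊕ H) ∉ p'.support := by
      intro hmem
      rcases hsupp _ hmem with ⟨u, habs, -⟩ | ⟨b', heq, hb'⟩
      · exact absurd habs (by simp)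
      · obtain ⟨rfl⟩ := Sum.inl.inj heq
        obtain ⟨u', hu', humem⟩ := chain_agents_Rhouse hc b hb'
        have : u' = h := left_unique hM₁m hu' hR
        subst this
        exact hh humem
    have hhnot : (Sum.inr h : A ⊕ H) ∉ p'.support := by
      intro hmem
      rcases hsupp _ hmem with ⟨u, heq, hu⟩ | ⟨b', habs, -⟩
      · obtain ⟨rfl⟩ := Sum.inr.inj heq
        exact hh hu
      · exact absurd habs (by simp)
    have hw2suppt : w2.support.tail = [Sum.inl b, Sum.inr h] := by simp [hw2]
    have hedges : (p'.append w2).edges =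
        p'.edges ++ [s(Sum.inr g, Sum.inl b), s(Sum.inl b, Sum.inr h)] := by
      rw [SimpleGraph.Walk.edges_append]
      simp [hw2]
    have hplen : p'.edges.length = 2 * L.length := by
      rw [SimpleGraph.Walk.length_edges, hlen]
    refine ⟨g₀, p'.append w2, hexp, ?_, ?_, ?_, ?_⟩
    · rw [SimpleGraph.Walk.length_append, hlen]
      simp [hw2]
      omega
    · rw [SimpleGraph.Walk.support_append, hw2suppt, List.nodup_append]
      refine ⟨hnodup, by simp, ?_⟩
      intro v hv w hv2 hvw
      subst hvw
      rcases List.mem_cons.1 hv2 with rfl | hv2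
      · exact hbnot hv
      rcases List.mem_cons.1 hv2 with rfl | hv2
      · exact hhnot hv
      · simp at hv2
    · intro i hi
      have hi2 : i < (p'.edges ++ [s(Sum.inr g, Sum.inl b), s(Sum.inl b, Sum.inr h)]).length := by
        rw [← hedges]; exact hi
      have hval : (p'.append w2).edges.get ⟨i, hi⟩ =
          (p'.edges ++ [s(Sum.inr g, Sum.inl b), s(Sum.inl b, Sum.inr h)]).get ⟨i, hi2⟩ := by
        exact List.get_of_eq hedges ⟨i, hi⟩
      rw [hval]
      rcases Nat.lt_or_ge i p'.edges.length with hlt | hge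
      · rw [List.get_eq_getElem, List.getElem_append_left hlt]
        simpa using halt i hlt
      · have hcase : i = p'.edges.length ∨ i = p'.edges.length + 1 := by
          simp only [List.length_append, List.length_cons, List.length_nil] at hi2
          omega
        rcases hcase with heq | heq
        · subst heq
          rw [List.get_eq_getElem, List.getElem_append_right (le_refl _)]
          simp only [Nat.sub_self, List.getElem_cons_zero]
          exact iff_of_false (by simpa [mem_sym2Edges'] using hnR) (by rw [hplen]; omega)
        · subst heq
          rw [List.get_eq_getElem, List.getElem_append_right (by omega : p'.edges.length ≤ p'.edges.length + 1)]
          simp only [Nat.add_sub_cancel_left, List.getElem_cons_succ, List.getElem_cons_zero]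
          exact iff_of_true (mem_sym2Edges.2 hR) (by rw [hplen]; omega)
    · intro v hv
      rw [SimpleGraph.Walk.support_append, hw2suppt] at hv
      rcases List.mem_append.1 hv with hv | hv
      · rcases hsupp v hv with ⟨u, hequ, hu⟩ | ⟨b', hb1, hb2⟩
        · exact Or.inl ⟨u, hequ, by
            simp only [List.map_cons, List.mem_cons] at hu ⊢
            tauto⟩
        · exact Or.inr ⟨b', hb1, by
            simp only [List.map_cons, List.mem_cons]
            right
            simpa using hb2⟩
      · rcases List.mem_cons.1 hv with rfl | hv
        · exact Or.inr ⟨b, rfl, by simp⟩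
        rcases List.mem_cons.1 hv with rfl | hv
        · exact Or.inl ⟨h, rfl, by simp⟩
        · simp at hv

lemma evenVtx_of_pEven {I : HATInstance A H} {M₁ : Set (A × H)}
    (hM₁m : IsMatchingIn I.firstChoiceEdges M₁) {h : H}
    (hpe : PEven I.firstChoiceEdges M₁ h) :
    EvenVtx I.G1 (sym2Edges M₁) (Sum.inr h) := by
  obtain ⟨L0, hc0⟩ := hpe
  obtain ⟨L, hc, hnd⟩ := chainTo_simple hc0
  obtain ⟨g₀, p, hexp, hlen, hnodup, halt, -⟩ := build_walk hM₁m hc hnd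
  exact ⟨Sum.inr g₀, unmatched_inr.2 hexp, p,
    (SimpleGraph.Walk.isPath_def p).2 hnodup, halt, by rw [hlen]; exact even_two_mul _⟩

end WalkBuild

section Bridges
variable [Fintype A] [Fintype H]

lemma evenHouse_of_pEvenR {I : HATInstance A H} {R M₁ : Set (A × H)} {h : H}
    (hRmax : IsMaxMatchingIn I.firstChoiceEdges R)
    (hM₁ : IsMaxMatchingIn I.firstChoiceEdges M₁)
    (hpe : PEven I.firstChoiceEdges R h) : EvenHouse I M₁ h := by
  obtain ⟨N, hN, hexp⟩ := exposed_of_pEven hRmax hpe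
  exact evenVtx_of_pEven hM₁.1 (pEven_of_exposed hM₁.1 hN hexp)

lemma pEvenR_of_evenHouse {I : HATInstance A H} {R M₁ : Set (A × H)} {h : H}
    (hM₁ : IsMaxMatchingIn I.firstChoiceEdges M₁)
    (hRm : IsMatchingIn I.firstChoiceEdges R)
    (hev : EvenHouse I M₁ h) : PEven I.firstChoiceEdges R h := by
  have h1 : PEven I.firstChoiceEdges M₁ h := pEven_of_evenVtx hev
  obtain ⟨N, hN, hexp⟩ := exposed_of_pEven hM₁ h1
  exact pEven_of_exposed hRm hN hexp

end Bridges


section Necessity2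
variable [Fintype A] [Fintype H]

lemma popular_fs {I : HATInstance A H} {M M₁ : Set (A × H)}
    (hM₁ : IsMaxMatchingIn I.firstChoiceEdges M₁) (hpop : IsPopular I M) :
    ∀ a : A, ∃ h : H, (a, h) ∈ M ∧ h ∈ I.firstChoices a ∪ sChoices I M₁ a := by
  intro a
  obtain ⟨hs, hhs⟩ := all_matched hpop a
  refine ⟨hs, hhs, ?_⟩
  by_contra hcon
  rw [Set.mem_union] at hcon
  push_neg at hcon
  obtain ⟨hnf, hns⟩ := hcon
  have hRmax := popular_max hpop
  have hRm := hRmax.1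
  have hexpR : ∀ c, (c, hs) ∉ M ∩ I.firstChoiceEdges := by
    rintro c ⟨hc1, hc2⟩
    have : c = a := right_unique hpop.1 hc1 hhs
    subst this
    exact hnf hc2
  have hEvs : EvenHouse I M₁ hs := evenHouse_of_pEvenR hRmax hM₁ (pEven_of_exposed' hexpR)
  have hadj : I.adj a hs := hpop.1.1 hhs
  have hnmin : ¬ (∀ h', I.adj a h' → EvenHouse I M₁ h' → I.rank a hs ≤ I.rank a h') := by
    intro hmin
    exact hns ⟨hadj, hEvs, hmin⟩
  push_neg at hnmin
  obtain ⟨t, htadj, htev, htlt⟩ := hnmin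
  have hpet : PEven I.firstChoiceEdges (M ∩ I.firstChoiceEdges) t :=
    pEvenR_of_evenHouse hM₁ hRm htev
  obtain ⟨L0, hc0⟩ := hpet
  obtain ⟨L, hcL, hnd⟩ := chainTo_simple hc0
  have hxL : a ∉ L.map Prod.fst := by
    intro hmem
    obtain ⟨u, huR, -⟩ := chain_agents_Rhouse hcL a hmem
    have : u = hs := left_unique hpop.1 huR.1 hhs
    exact hnf (this ▸ huR.2)
  have hgain : ∀ h₀, (a, h₀) ∈ M → I.rank a t < I.rank a h₀ := by
    intro h₀ hh₀
    rw [left_unique hpop.1 hh₀ hhs]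
    exact htlt
  obtain ⟨M', hm', hmp⟩ := win hpop.1 hcL hnd htadj hxL hgain
  exact hpop.2 M' hm' hmp

end Necessity2

section Reach

lemma reach_comparable {α : Type*} {r : α → α → Prop}
    (hdet : ∀ (u v w : α), r u w → r v w → u = v) :
    ∀ {x z : α}, Relation.ReflTransGen r x z → ∀ (y : α), Relation.ReflTransGen r y z →
      Relation.ReflTransGen r x y ∨ Relation.ReflTransGen r y x := by
  intro x z hxz
  induction hxz using Relation.ReflTransGen.head_induction_on with
  | refl => intro y hyz; exact Or.inr hyz
  | head hstep htail ih =>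
    intro y hyz
    rcases ih y hyz with hcy | hyc
    · exact Or.inl (Relation.ReflTransGen.head hstep hcy)
    · rcases Relation.ReflTransGen.cases_tail hyc with heq | ⟨w, hyw, hwc⟩
      · subst heq
        exact Or.inl (Relation.ReflTransGen.single hstep)
      · have hw : w = _ := hdet _ _ _ hwc hstep
        subst hw
        exact Or.inr hyw

lemma reach_start_unique {α : Type*} {r : α → α → Prop}
    (hdet : ∀ (u v w : α), r u w → r v w → u = v) {x y z : α}
    (hxz : Relation.ReflTransGen r x z) (hyz : Relation.ReflTransGen r y z)
    (hx : ∀ u, ¬ r u x) (hy : ∀ u, ¬ r u y) : x = y := by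
  rcases reach_comparable hdet hxz y hyz with hxy | hyx
  · rcases Relation.ReflTransGen.cases_tail hxy with heq | ⟨c, -, hc⟩
    · exact heq.symm
    · exact absurd hc (hy c)
  · rcases Relation.ReflTransGen.cases_tail hyx with heq | ⟨c, -, hc⟩
    · exact heq
    · exact absurd hc (hx c)

end Reach


section Sufficiency
variable [Fintype A] [Fintype H]

/-- the chasing step relation on houses used in the sufficiency proof -/
def StepRel (I : HATInstance A H) (M M' : Set (A × H)) (h h₂ : H) : Prop :=
  ∃ b, (b, h) ∈ M ∩ I.firstChoiceEdges ∧ (b, h₂) ∈ M' ∧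
    (b, h₂) ∉ M ∩ I.firstChoiceEdges ∧ ¬ Prefers I M M' b

/-- the chasing invariant -/
def ChInv (I : HATInstance A H) (M M' : Set (A × H)) (h : H) : Prop :=
  ¬ PEven I.firstChoiceEdges (M ∩ I.firstChoiceEdges) h ∧
    ∃ y, (y, h) ∈ M' ∧ (y, h) ∉ M ∩ I.firstChoiceEdges

lemma sufficiency {I : HATInstance A H} {M M₁ : Set (A × H)}
    (hM₁ : IsMaxMatchingIn I.firstChoiceEdges M₁)
    (hM : I.IsMatching M)
    (hmax : IsMaxMatchingIn I.firstChoiceEdges (M ∩ I.firstChoiceEdges))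
    (hall : ∀ a : A, ∃ h : H, (a, h) ∈ M ∧ h ∈ I.firstChoices a ∪ sChoices I M₁ a) :
    IsPopular I M := by
  classical
  refine ⟨hM, ?_⟩
  intro M' hM' hmp
  have hRm : IsMatchingIn I.firstChoiceEdges (M ∩ I.firstChoiceEdges) := hmax.1
  -- backward determinism of the step relation
  have hback : ∀ (u v w : H), StepRel I M M' u w → StepRel I M M' v w → u = v := by
    rintro u v w ⟨b, hb1, hb2, -, -⟩ ⟨b', hb1', hb2', -, -⟩
    have hbe : b = b' := right_unique hM' hb2 hb2'
    subst hbe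
    exact left_unique hRm hb1 hb1'
  -- forward determinism
  have hfwd : ∀ {u v w : H}, StepRel I M M' u v → StepRel I M M' u w → v = w := by
    rintro u v w ⟨b, hb1, hb2, -, -⟩ ⟨b', hb1', hb2', -, -⟩
    have hbe : b = b' := right_unique hRm hb1 hb1'
    subst hbe
    exact left_unique hM' hb2 hb2'
  -- dichotomy : either we found a loser, or the chase continues
  have hdich : ∀ h, ChInv I M M' h →
      (∃ b, (b, h) ∈ M ∩ I.firstChoiceEdges ∧ Prefers I M M' b) ∨
      (∃ h₂, StepRel I M M' h h₂ ∧ ChInv I M M' h₂) := by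
    rintro h ⟨hnpe, y, hyM', hynR⟩
    have hcov : ∃ b, (b, h) ∈ M ∩ I.firstChoiceEdges := by
      by_contra hex
      push_neg at hex
      exact hnpe (pEven_of_exposed' hex)
    obtain ⟨b, hb⟩ := hcov
    by_cases hbQ : Prefers I M M' b
    · exact Or.inl ⟨b, hb, hbQ⟩
    · right
      have hex2 : ∃ h₂, (b, h₂) ∈ M' ∧ I.rank b h₂ ≤ I.rank b h := by
        by_contra hex
        push_neg at hex
        exact hbQ ⟨h, hb.1, fun h' hm' => hex h' hm'⟩
      obtain ⟨h₂, hh₂M', hle⟩ := hex2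
      have hfb : h ∈ I.firstChoices b := hb.2
      have hadj₂ : I.adj b h₂ := hM'.1 hh₂M'
      have hf₂ : h₂ ∈ I.firstChoices b := ⟨hadj₂, fun h'' hadj'' => le_trans hle (hfb.2 _ hadj'')⟩
      have hne : h₂ ≠ h := by
        rintro rfl
        have : y = b := right_unique hM' hyM' hh₂M'
        subst this
        exact hynR hb
      have hnR₂ : (b, h₂) ∉ M ∩ I.firstChoiceEdges := fun hm => hne (left_unique hRm hm hb)
      have hE₂ : (b, h₂) ∈ I.firstChoiceEdges := hf₂
      have hnpe₂ : ¬ PEven I.firstChoiceEdges (M ∩ I.firstChoiceEdges) h₂ :=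
        fun hpe₂ => hnpe (pEven_step hpe₂ hb hE₂ hnR₂)
      exact ⟨h₂, ⟨b, hb, hh₂M', hnR₂, hbQ⟩, hnpe₂, b, hh₂M', hnR₂⟩
  -- the key chasing statement
  have key : ∀ a : A, Prefers I M' M a → ∃ b : A, Prefers I M M' b ∧
      ∃ h₁ h', (a, h₁) ∈ M' ∧ (∀ u, ¬ StepRel I M M' u h₁) ∧
        Relation.ReflTransGen (StepRel I M M') h₁ h' ∧ (b, h') ∈ M ∩ I.firstChoiceEdges := by
    intro a ha
    obtain ⟨h₁, h₁M', hstrict⟩ := ha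
    obtain ⟨h₀, h₀M, hfs⟩ := hall a
    have hlt₀ : I.rank a h₁ < I.rank a h₀ := hstrict h₀ h₀M
    have hadj₁ : I.adj a h₁ := hM'.1 h₁M'
    rcases hfs with hf₀ | hs₀
    · exact absurd (hf₀.2 h₁ hadj₁) (by omega)
    · obtain ⟨hadj₀, hev₀, hmin₀⟩ := hs₀
      have hInv₁ : ChInv I M M' h₁ := by
        refine ⟨?_, a, h₁M', ?_⟩
        · intro hpe
          have := hmin₀ h₁ hadj₁ (evenHouse_of_pEvenR hmax hM₁ hpe)
          omega
        · intro hm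
          have : h₁ = h₀ := left_unique hM hm.1 h₀M
          subst this
          omega
      have hnopred : ∀ u, ¬ StepRel I M M' u h₁ := by
        rintro u ⟨b, hb1, hb2, -, -⟩
        have hba : b = a := right_unique hM' hb2 h₁M'
        rw [hba] at hb1
        have hu : u = h₀ := left_unique hM hb1.1 h₀M
        have hf : u ∈ I.firstChoices a := hb1.2
        have := hf.2 h₁ hadj₁
        rw [hu] at this
        omega
      -- termination
      have hterm : ∃ h', Relation.ReflTransGen (StepRel I M M') h₁ h' ∧
          ∃ b, (b, h') ∈ M ∩ I.firstChoiceEdges ∧ Prefers I M M' b := by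
        by_contra hnot
        push_neg at hnot
        have hInvAll : ∀ h', Relation.ReflTransGen (StepRel I M M') h₁ h' → ChInv I M M' h' := by
          intro h' hr
          induction hr with
          | refl => exact hInv₁
          | tail hr1 hstep ih =>
            rcases hdich _ ih with ⟨b, hb, hbQ⟩ | ⟨h₂, hst, hinv2⟩
            · exact absurd hbQ (hnot _ hr1 b hb)
            · rwa [hfwd hstep hst]
        have hstepAll : ∀ h' : {h' // Relation.ReflTransGen (StepRel I M M') h₁ h'},
            ∃ h₂ : {h' // Relation.ReflTransGen (StepRel I M M') h₁ h'},
              StepRel I M M' h'.1 h₂.1 := by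
          rintro ⟨h', hr⟩
          rcases hdich _ (hInvAll h' hr) with ⟨b, hb, hbQ⟩ | ⟨h₂, hst, -⟩
          · exact absurd hbQ (hnot _ hr b hb)
          · exact ⟨⟨h₂, hr.tail hst⟩, hst⟩
        choose g hg using hstepAll
        have hginj : Function.Injective g := by
          rintro u v huv
          have h1 := hg u
          have h2 := hg v
          rw [huv] at h1
          exact Subtype.ext (hback _ _ _ h1 h2)
        have hgsurj := (Finite.injective_iff_surjective).1 hginj
        obtain ⟨z, hz⟩ := hgsurj ⟨h₁, Relation.ReflTransGen.refl⟩
        have := hg z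
        rw [hz] at this
        exact hnopred _ this
      obtain ⟨h', hreach, b, hbR, hbQ⟩ := hterm
      exact ⟨b, hbQ, h₁, h', h₁M', hnopred, hreach, hbR⟩
  -- build the injection and contradict `hmp`
  choose F hF using key
  have hcard : Nat.card {x | Prefers I M' M x} ≤ Nat.card {x | Prefers I M M' x} := by
    have hinj : Function.Injective
        (fun x : {x // x ∈ {x | Prefers I M' M x}} =>
          (⟨F x.1 x.2, (hF x.1 x.2).1⟩ : {x // x ∈ {x | Prefers I M M' x}})) := by
      rintro ⟨a, hax⟩ ⟨a', hax'⟩ heq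
      simp only [Subtype.mk.injEq] at heq
      obtain ⟨-, h₁, hend, h₁M', hnp, hreach, hbR⟩ := hF a hax
      obtain ⟨-, h₁', hend', h₁M'', hnp', hreach', hbR'⟩ := hF a' hax'
      rw [heq] at hbR
      have hee : hend = hend' := left_unique hRm hbR hbR'
      subst hee
      have hstart : h₁ = h₁' := reach_start_unique hback hreach hreach' hnp hnp'
      subst hstart
      exact Subtype.ext (right_unique hM' h₁M' h₁M'')
    exact Nat.card_le_card_of_injective _ hinj
  exact absurd hmp (by
    show ¬ (Nat.card _ > Nat.card _)
    omega)

end Sufficiency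

end PopAux

open HATInstance in
/-- a matching `M` of a HAT instance `G` is popular if and only if
(1) `M ∩ E₁` is a maximum matching of the first-choice graph `G₁`, and
(2) every agent `a` is matched in `M` and `M(a) ∈ f(a) ∪ s(a)`. -/
theorem popular_iff_firstChoice_max_and_fs
    {A H : Type*} [Fintype A] [Fintype H] (I : HATInstance A H)
    (M₁ : Set (A × H)) (hM₁ : IsMaxMatchingIn I.firstChoiceEdges M₁)
    (M : Set (A × H)) (hM : I.IsMatching M) :
    IsPopular I M ↔
      (IsMaxMatchingIn I.firstChoiceEdges (M ∩ I.firstChoiceEdges) ∧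
       ∀ a : A, ∃ h : H, (a, h) ∈ M ∧ h ∈ I.firstChoices a ∪ sChoices I M₁ a) := by
  constructor
  · intro hpop
    exact ⟨PopAux.popular_max hpop, PopAux.popular_fs hM₁ hpop⟩
  · rintro ⟨h1, h2⟩
    exact PopAux.sufficiency hM₁ hM h1 h2
end

section
/- Let I be a Capacitated House Allocation (CHA) instance with agents A, houses H and capacity function c. If M is a popular matching of I, then for every f-house h, |M(h) ∩ f(h)| = min{c(h), |f(h)|}. -/
/-- A Capacitated House Allocation (CHA) instance: agents `A`, houses `H`, a capacity
function `cap : H → ℤ_{>0}`, and for each agent a strict preference order (lower rank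
means more preferred) over its adjacent houses, augmented with a unique last-resort
house `l(a)` of capacity `1` and lowest preference, appearing only on `a`'s list. -/
structure CHAInstance (A H : Type*) where
  adj : A → H → Prop
  rank : A → H → ℕ
  rank_strict : ∀ a h h', adj a h → adj a h' → rank a h = rank a h' → h = h'
  cap : H → ℕ
  cap_pos : ∀ h, 0 < cap h
  lastResort : A → H
  lastResort_injective : Function.Injective lastResort
  lastResort_adj : ∀ a, adj a (lastResort a)
  lastResort_worst : ∀ a h, adj a h → h ≠ lastResort a → rank a h < rank a (lastResort a)
  lastResort_only : ∀ a a', adj a' (lastResort a) → a' = a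
  lastResort_cap : ∀ a, cap (lastResort a) = 1

namespace CHAInstance

variable {A H : Type*}

/-- A matching of the CHA instance `I`: each agent is matched to at most one adjacent
house, and each house `h` is matched to at most `cap h` agents. -/
def IsMatching (I : CHAInstance A H) (M : Set (A × H)) : Prop :=
  (∀ p ∈ M, I.adj p.1 p.2) ∧ (∀ p ∈ M, ∀ q ∈ M, p.1 = q.1 → p = q) ∧
    (∀ h : H, {a | (a, h) ∈ M}.ncard ≤ I.cap h)

/-- Agent `a` prefers matching `M` to matching `M'`: `a` is matched in `M` and either
unmatched in `M'`, or strictly prefers its house in `M` to its house in `M'`. -/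
def Prefers (I : CHAInstance A H) (M M' : Set (A × H)) (a : A) : Prop :=
  ∃ h, (a, h) ∈ M ∧ ∀ h', (a, h') ∈ M' → I.rank a h < I.rank a h'

/-- `M` is more popular than `M'`. -/
def MorePopular [Fintype A] (I : CHAInstance A H) (M M' : Set (A × H)) : Prop :=
  Nat.card {a | Prefers I M M' a} > Nat.card {a | Prefers I M' M a}

/-- `M` is a popular matching of `I`. -/
def IsPopular [Fintype A] (I : CHAInstance A H) (M : Set (A × H)) : Prop :=
  I.IsMatching M ∧ ∀ M', I.IsMatching M' → ¬ MorePopular I M' M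

/-- `h = f(a)`: house `h` is the (unique) first choice of agent `a`. -/
def IsFirstChoice (I : CHAInstance A H) (a : A) (h : H) : Prop :=
  I.adj a h ∧ ∀ h', I.adj a h' → I.rank a h ≤ I.rank a h'

/-- `f(h)`: the set of agents whose first choice is `h`. -/
def fSet (I : CHAInstance A H) (h : H) : Set A := {a | IsFirstChoice I a h}

/-- `h` is an `f`-house if it is the first choice of some agent. -/
def IsFHouse (I : CHAInstance A H) (h : H) : Prop := ∃ a, IsFirstChoice I a h

/-- The defining condition for `s(a)`: `h` is not an `f`-house, or `h` is an `f`-house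
with `h ≠ f(a)` and `|f(h)| < c(h)`. -/
def SCond (I : CHAInstance A H) (a : A) (h : H) : Prop :=
  ¬ IsFHouse I h ∨ (¬ IsFirstChoice I a h ∧ (fSet I h).ncard < I.cap h)

/-- `h = s(a)`: house `h` is the highest-ranked house on `a`'s preference list
satisfying `SCond`. -/
def IsSecondChoice (I : CHAInstance A H) (a : A) (h : H) : Prop :=
  I.adj a h ∧ SCond I a h ∧ ∀ h', I.adj a h' → SCond I a h' → I.rank a h ≤ I.rank a h'

/-- The switching graph `G_M` of `I` with respect to a popular matching `M`:
`SwEdge I M a src tgt w` says that agent `a` contributes the directed edge from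
`src = M(a)` to `tgt`, the other element of `{f(a), s(a)}`, with weight
`w = -1` if `M(a) = f(a)` and `w = +1` otherwise. -/
def SwEdge (I : CHAInstance A H) (M : Set (A × H)) (a : A) (src tgt : H) (w : ℤ) :
    Prop :=
  (a, src) ∈ M ∧
    ((IsFirstChoice I a src ∧ IsSecondChoice I a tgt ∧ w = -1) ∨
     (IsSecondChoice I a src ∧ IsFirstChoice I a tgt ∧ w = 1))

/-- The unsaturation degree `u_M(h) = c(h) - |M(h)|` of a house `h`. -/
noncomputable def unsatDeg (I : CHAInstance A H) (M : Set (A × H)) (h : H) : ℕ :=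
  I.cap h - {a | (a, h) ∈ M}.ncard

/-- A house is saturated if its unsaturation degree is `0`. -/
def Saturated (I : CHAInstance A H) (M : Set (A × H)) (h : H) : Prop :=
  unsatDeg I M h = 0

end CHAInstance


open CHAInstance

section AuxLemmas

variable {A H : Type*}

lemma exists_firstChoice [Finite H] (I : CHAInstance A H) (b : A) :
    ∃ h, IsFirstChoice I b h := by
  obtain ⟨h, hh, hmin⟩ := Set.exists_min_image {k | I.adj b k} (I.rank b)
    (Set.toFinite _) ⟨_, I.lastResort_adj b⟩
  exact ⟨h, hh, hmin⟩

lemma edge_unique (I : CHAInstance A H) {M : Set (A × H)} (hM : IsMatching I M)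
    {x : A} {k k' : H} (h1 : (x, k) ∈ M) (h2 : (x, k') ∈ M) : k = k' :=
  congrArg Prod.snd (hM.2.1 _ h1 _ h2 rfl)

lemma not_prefers_of_first (I : CHAInstance A H) {M M₂ : Set (A × H)}
    (hM : IsMatching I M) {x : A} {hx : H}
    (hfx : IsFirstChoice I x hx) (hmem : (x, hx) ∈ M₂) : ¬ Prefers I M M₂ x := by
  rintro ⟨k, hk, hall⟩
  have h1 := hfx.2 k (hM.1 _ hk)
  have h2 := hall hx hmem
  omega

lemma prefers_of_first (I : CHAInstance A H) {M M₂ : Set (A × H)}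
    (hM : IsMatching I M) {x : A} {hx : H}
    (hfx : IsFirstChoice I x hx) (hmem : (x, hx) ∈ M₂) (hnot : (x, hx) ∉ M) :
    Prefers I M₂ M x := by
  refine ⟨hx, hmem, fun k hk => ?_⟩
  have hadj := hM.1 _ hk
  rcases lt_or_eq_of_le (hfx.2 k hadj) with hlt | heq
  · exact hlt
  · exact absurd (by rw [I.rank_strict x hx k hfx.1 hadj heq]; exact hk) hnot

lemma isMatching_swap [Finite A] (I : CHAInstance A H) {M : Set (A × H)}
    (hM : IsMatching I M) (S : Set A) (T : Set (A × H))
    (hT1 : ∀ p ∈ T, p.1 ∈ S ∧ I.adj p.1 p.2)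
    (hT2 : ∀ p ∈ T, ∀ q ∈ T, p.1 = q.1 → p = q)
    (hT3 : ∀ k, ({x | (x, k) ∈ M} \ S).ncard + {x | (x, k) ∈ T}.ncard ≤ I.cap k) :
    IsMatching I ({p ∈ M | p.1 ∉ S} ∪ T) := by
  refine ⟨?_, ?_, ?_⟩
  · rintro p (⟨hp, -⟩ | hp)
    · exact hM.1 p hp
    · exact (hT1 p hp).2
  · rintro p (⟨hp, hps⟩ | hp) q (⟨hq, hqs⟩ | hq) he
    · exact hM.2.1 p hp q hq he
    · exact absurd (he ▸ (hT1 q hq).1) hps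
    · exact absurd (he ▸ (hT1 p hp).1) hqs
    · exact hT2 p hp q hq he
  · intro k
    have hset : {x | (x, k) ∈ {p ∈ M | p.1 ∉ S} ∪ T} =
        ({x | (x, k) ∈ M} \ S) ∪ {x | (x, k) ∈ T} := by
      ext x
      constructor
      · rintro (⟨hx, hxs⟩ | hx)
        · exact Or.inl ⟨hx, hxs⟩
        · exact Or.inr hx
      · rintro (⟨hx, hxs⟩ | hx)
        · exact Or.inl ⟨hx, hxs⟩
        · exact Or.inr hx
    rw [hset]
    exact le_trans (Set.ncard_union_le _ _) (hT3 k)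

lemma more_popular_of [Fintype A] (I : CHAInstance A H) (M M₂ : Set (A × H))
    (s t : Set A) (hs : ∀ x ∈ s, Prefers I M₂ M x)
    (ht : ∀ x, Prefers I M M₂ x → x ∈ t) (hlt : t.ncard < s.ncard) :
    MorePopular I M₂ M := by
  unfold MorePopular
  rw [Nat.card_coe_set_eq, Nat.card_coe_set_eq]
  calc {a | Prefers I M M₂ a}.ncard ≤ t.ncard :=
        Set.ncard_le_ncard ht (Set.toFinite _)
    _ < s.ncard := hlt
    _ ≤ {a | Prefers I M₂ M a}.ncard :=
        Set.ncard_le_ncard hs (Set.toFinite _)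

end AuxLemmas

open CHAInstance in
/-- if `M` is a popular matching of a CHA instance, then every `f`-house
`h` satisfies `|M(h) ∩ f(h)| = min {c(h), |f(h)|}`. -/
theorem popular_fHouse_matched_min
    {A H : Type*} [Fintype A] [Fintype H] (I : CHAInstance A H)
    (M : Set (A × H)) (hM : IsPopular I M) (h : H) (hf : IsFHouse I h) :
    ({a | (a, h) ∈ M} ∩ fSet I h).ncard = min (I.cap h) (fSet I h).ncard := by
  classical
  obtain ⟨hMat, hpop⟩ := hM
  have hcapb := hMat.2.2
  have hle1 : ({a | (a, h) ∈ M} ∩ fSet I h).ncard ≤ I.cap h :=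
    le_trans (Set.ncard_le_ncard Set.inter_subset_left (Set.toFinite _)) (hcapb h)
  have hle2 : ({a | (a, h) ∈ M} ∩ fSet I h).ncard ≤ (fSet I h).ncard :=
    Set.ncard_le_ncard Set.inter_subset_right (Set.toFinite _)
  refine le_antisymm (le_min hle1 hle2) ?_
  by_contra hcon
  push_neg at hcon
  rw [lt_min_iff] at hcon
  obtain ⟨hlt1, hlt2⟩ := hcon
  -- an agent `a` with first choice `h` not matched to `h`
  obtain ⟨a, haf, haM⟩ : ∃ a ∈ fSet I h, (a, h) ∉ M := by
    by_contra hc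
    push_neg at hc
    have heq : {a | (a, h) ∈ M} ∩ fSet I h = fSet I h :=
      Set.inter_eq_right.mpr (fun x hx => hc x hx)
    rw [heq] at hlt2
    omega
  have hfa : IsFirstChoice I a h := haf
  by_cases hcap : {x | (x, h) ∈ M}.ncard < I.cap h
  · -- Case 1: `h` undersaturated, promote `a`
    set T : Set (A × H) := {(a, h)} with hT
    set M₂ := {p ∈ M | p.1 ∉ ({a} : Set A)} ∪ T with hM₂
    have hmat₂ : IsMatching I M₂ := by
      refine isMatching_swap I hMat {a} T ?_ ?_ ?_
      · rintro p rfl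
        exact ⟨rfl, hfa.1⟩
      · rintro p rfl q rfl _
        rfl
      · intro k
        by_cases hk : k = h
        · subst hk
          have h1 : {x | (x, k) ∈ T} = {a} := by
            ext x; simp [hT, Prod.ext_iff]
          have h2 : {x | (x, k) ∈ M} \ ({a} : Set A) = {x | (x, k) ∈ M} :=
            Set.diff_singleton_eq_self haM
          rw [h1, h2, Set.ncard_singleton]
          omega
        · have h1 : {x | (x, k) ∈ T} = ∅ := by
            ext x; simp [hT, Prod.ext_iff]; rintro - rfl; exact hk rfl
          rw [h1, Set.ncard_empty]
          simpa using le_trans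
            (Set.ncard_le_ncard Set.diff_subset (Set.toFinite _)) (hcapb k)
    have ha2 : (a, h) ∈ M₂ := Or.inr rfl
    refine hpop M₂ hmat₂ (more_popular_of I M M₂ {a} ∅ ?_ ?_ (by simp))
    · rintro x rfl
      exact prefers_of_first I hMat hfa ha2 haM
    · intro x hx
      by_cases hxa : x = a
      · subst hxa
        exact absurd hx (not_prefers_of_first I hMat hfa ha2)
      · obtain ⟨k, hk, hall⟩ := hx
        have hmem : (x, k) ∈ M₂ := Or.inl ⟨hk, by simpa using hxa⟩
        exact absurd (hall k hmem) (lt_irrefl _)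
  · -- Case 2: `h` saturated
    push_neg at hcap
    obtain ⟨b, hbM, hbf⟩ : ∃ b ∈ {x | (x, h) ∈ M}, b ∉ fSet I h := by
      by_contra hc
      push_neg at hc
      have heq : {x | (x, h) ∈ M} ∩ fSet I h = {x | (x, h) ∈ M} :=
        Set.inter_eq_left.mpr (fun x hx => hc x hx)
      rw [heq] at hlt1
      omega
    obtain ⟨h', hfb⟩ := exists_firstChoice I b
    have hne : h' ≠ h := fun e => hbf (e ▸ hfb)
    have hab : a ≠ b := fun e => hbf (e ▸ haf)
    have hbnot : (b, h') ∉ M := fun hmem => hne (edge_unique I hMat hmem hbM)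
    have hMhpos : 0 < {x | (x, h) ∈ M}.ncard :=
      (Set.ncard_pos (Set.toFinite _)).mpr ⟨b, hbM⟩
    have hMhdiff : ({x | (x, h) ∈ M} \ ({b} : Set A)).ncard =
        {x | (x, h) ∈ M}.ncard - 1 :=
      Set.ncard_diff_singleton_of_mem hbM
    by_cases hsub : ({x | (x, h') ∈ M} \ ({a} : Set A)).ncard < I.cap h'
    · -- Sub-case 2a
      set T : Set (A × H) := {(a, h), (b, h')} with hT
      set M₂ := {p ∈ M | p.1 ∉ ({a, b} : Set A)} ∪ T with hM₂
      have hmat₂ : IsMatching I M₂ := by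
        refine isMatching_swap I hMat {a, b} T ?_ ?_ ?_
        · rintro p (rfl | rfl)
          · exact ⟨Or.inl rfl, hfa.1⟩
          · exact ⟨Or.inr rfl, hfb.1⟩
        · rintro p (rfl | rfl) q (rfl | rfl) he <;>
            first | rfl | (exact absurd he hab) | (exact absurd he.symm hab)
        · intro k
          by_cases hk : k = h
          · subst hk
            have h1 : {x | (x, k) ∈ T} = {a} := by
              ext x
              simp only [hT, Set.mem_insert_iff, Set.mem_singleton_iff,
                Prod.ext_iff, Set.mem_setOf_eq]
              constructor
              · rintro (⟨rfl, -⟩ | ⟨rfl, hkk⟩)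
                · rfl
                · exact absurd hkk.symm hne
              · rintro rfl; exact Or.inl ⟨rfl, by trivial⟩
            have h2 : ({x | (x, k) ∈ M} \ ({a, b} : Set A)).ncard ≤
                ({x | (x, k) ∈ M} \ ({b} : Set A)).ncard :=
              Set.ncard_le_ncard (Set.diff_subset_diff_right (by simp))
                (Set.toFinite _)
            rw [h1, Set.ncard_singleton]
            have h3 := hcapb k
            omega
          · by_cases hk' : k = h'
            · subst hk'
              have h1 : {x | (x, k) ∈ T} = {b} := by
                ext x
                simp only [hT, Set.mem_insert_iff, Set.mem_singleton_iff,
                  Prod.ext_iff, Set.mem_setOf_eq]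
                constructor
                · rintro (⟨rfl, hkk⟩ | ⟨rfl, -⟩)
                  · exact absurd hkk hk
                  · rfl
                · rintro rfl; exact Or.inr ⟨rfl, by trivial⟩
              have h2 : ({x | (x, k) ∈ M} \ ({a, b} : Set A)).ncard ≤
                  ({x | (x, k) ∈ M} \ ({a} : Set A)).ncard :=
                Set.ncard_le_ncard (Set.diff_subset_diff_right (by simp))
                  (Set.toFinite _)
              rw [h1, Set.ncard_singleton]
              omega
            · have h1 : {x | (x, k) ∈ T} = ∅ := by
                ext x
                simp only [hT, Set.mem_insert_iff, Set.mem_singleton_iff,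
                  Prod.ext_iff, Set.mem_setOf_eq, Set.mem_empty_iff_false,
                  iff_false]
                rintro (⟨-, rfl⟩ | ⟨-, rfl⟩)
                · exact hk rfl
                · exact hk' rfl
              rw [h1, Set.ncard_empty]
              simpa using le_trans
                (Set.ncard_le_ncard Set.diff_subset (Set.toFinite _)) (hcapb k)
      have ha2 : (a, h) ∈ M₂ := Or.inr (Or.inl rfl)
      have hb2 : (b, h') ∈ M₂ := Or.inr (Or.inr rfl)
      refine hpop M₂ hmat₂ (more_popular_of I M M₂ {a, b} ∅ ?_ ?_ ?_)
      · rintro x (rfl | rfl)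
        · exact prefers_of_first I hMat hfa ha2 haM
        · exact prefers_of_first I hMat hfb hb2 hbnot
      · intro x hx
        by_cases hxa : x = a
        · subst hxa
          exact absurd hx (not_prefers_of_first I hMat hfa ha2)
        · by_cases hxb : x = b
          · subst hxb
            exact absurd hx (not_prefers_of_first I hMat hfb hb2)
          · obtain ⟨k, hk, hall⟩ := hx
            have hmem : (x, k) ∈ M₂ := Or.inl ⟨hk, by simp [hxa, hxb]⟩
            exact absurd (hall k hmem) (lt_irrefl _)
      · rw [Set.ncard_empty]
        exact (Set.ncard_pos (Set.toFinite _)).mpr ⟨a, Or.inl rfl⟩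
    · -- Sub-case 2b
      push_neg at hsub
      obtain ⟨c, hcM', hca⟩ : ∃ c, c ∈ {x | (x, h') ∈ M} \ ({a} : Set A) := by
        refine (Set.ncard_pos (Set.toFinite _)).mp ?_
        have := I.cap_pos h'
        omega
      rw [Set.mem_singleton_iff] at hca
      have hcb : c ≠ b := by
        rintro rfl
        exact hbnot hcM'
      have hlch' : I.lastResort c ≠ h' := fun e =>
        hcb (I.lastResort_only c b (by rw [e]; exact hfb.1)).symm
      have hlch : I.lastResort c ≠ h := fun e =>
        hca (I.lastResort_only c a (by rw [e]; exact hfa.1)).symm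
      have hMlc : ∀ x, (x, I.lastResort c) ∈ M → x = c := fun x hx =>
        I.lastResort_only c x (hMat.1 _ hx)
      have hMh'diff : ({x | (x, h') ∈ M} \ ({c} : Set A)).ncard =
          {x | (x, h') ∈ M}.ncard - 1 :=
        Set.ncard_diff_singleton_of_mem hcM'
      have hMh'pos : 0 < {x | (x, h') ∈ M}.ncard :=
        (Set.ncard_pos (Set.toFinite _)).mpr ⟨c, hcM'⟩
      set T : Set (A × H) := {(a, h), (b, h'), (c, I.lastResort c)} with hT
      set M₂ := {p ∈ M | p.1 ∉ ({a, b, c} : Set A)} ∪ T with hM₂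
      have hmat₂ : IsMatching I M₂ := by
        refine isMatching_swap I hMat {a, b, c} T ?_ ?_ ?_
        · rintro p (rfl | rfl | rfl)
          · exact ⟨Or.inl rfl, hfa.1⟩
          · exact ⟨Or.inr (Or.inl rfl), hfb.1⟩
          · exact ⟨Or.inr (Or.inr rfl), I.lastResort_adj c⟩
        · rintro p (rfl | rfl | rfl) q (rfl | rfl | rfl) he <;>
            first
              | rfl
              | (exact absurd he hab) | (exact absurd he.symm hab)
              | (exact absurd he.symm hca) | (exact absurd he hca)
              | (exact absurd he.symm hcb) | (exact absurd he hcb)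
        · intro k
          by_cases hk : k = h
          · subst hk
            have h1 : {x | (x, k) ∈ T} = {a} := by
              ext x
              simp only [hT, Set.mem_insert_iff, Set.mem_singleton_iff,
                Prod.ext_iff, Set.mem_setOf_eq]
              constructor
              · rintro (⟨rfl, -⟩ | ⟨rfl, hkk⟩ | ⟨rfl, hkk⟩)
                · rfl
                · exact absurd hkk.symm hne
                · exact absurd hkk.symm hlch
              · rintro rfl; exact Or.inl ⟨rfl, by trivial⟩
            have h2 : ({x | (x, k) ∈ M} \ ({a, b, c} : Set A)).ncard ≤
                ({x | (x, k) ∈ M} \ ({b} : Set A)).ncard :=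
              Set.ncard_le_ncard (Set.diff_subset_diff_right (by simp))
                (Set.toFinite _)
            rw [h1, Set.ncard_singleton]
            have h3 := hcapb k
            omega
          · by_cases hk' : k = h'
            · subst hk'
              have h1 : {x | (x, k) ∈ T} = {b} := by
                ext x
                simp only [hT, Set.mem_insert_iff, Set.mem_singleton_iff,
                  Prod.ext_iff, Set.mem_setOf_eq]
                constructor
                · rintro (⟨rfl, hkk⟩ | ⟨rfl, -⟩ | ⟨rfl, hkk⟩)
                  · exact absurd hkk hk
                  · rfl
                  · exact absurd hkk.symm hlch'
                · rintro rfl; exact Or.inr (Or.inl ⟨rfl, by trivial⟩)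
              have h2 : ({x | (x, k) ∈ M} \ ({a, b, c} : Set A)).ncard ≤
                  ({x | (x, k) ∈ M} \ ({c} : Set A)).ncard :=
                Set.ncard_le_ncard (Set.diff_subset_diff_right (by simp))
                  (Set.toFinite _)
              rw [h1, Set.ncard_singleton]
              have h3 := hcapb k
              omega
            · by_cases hkl : k = I.lastResort c
              · have h1 : {x | (x, k) ∈ T} = {c} := by
                  ext x
                  simp only [hT, Set.mem_insert_iff, Set.mem_singleton_iff,
                    Prod.ext_iff, Set.mem_setOf_eq]
                  constructor
                  · rintro (⟨rfl, hkk⟩ | ⟨rfl, hkk⟩ | ⟨rfl, -⟩)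
                    · exact absurd hkk hk
                    · exact absurd hkk hk'
                    · rfl
                  · rintro rfl; exact Or.inr (Or.inr ⟨rfl, hkl⟩)
                have h2 : {x | (x, k) ∈ M} \ ({a, b, c} : Set A) = ∅ := by
                  ext x
                  simp only [Set.mem_diff, Set.mem_setOf_eq,
                    Set.mem_empty_iff_false, iff_false, not_and, not_not]
                  intro hx
                  simp [hMlc x (hkl ▸ hx)]
                rw [h1, h2, Set.ncard_singleton, Set.ncard_empty]
                have := I.cap_pos k
                omega
              · have h1 : {x | (x, k) ∈ T} = ∅ := by
                  ext x
                  simp only [hT, Set.mem_insert_iff, Set.mem_singleton_iff,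
                    Prod.ext_iff, Set.mem_setOf_eq, Set.mem_empty_iff_false,
                    iff_false]
                  rintro (⟨-, rfl⟩ | ⟨-, rfl⟩ | ⟨-, rfl⟩)
                  · exact hk rfl
                  · exact hk' rfl
                  · exact hkl rfl
                rw [h1, Set.ncard_empty]
                simpa using le_trans
                  (Set.ncard_le_ncard Set.diff_subset (Set.toFinite _))
                  (hcapb k)
      have ha2 : (a, h) ∈ M₂ := Or.inr (Or.inl rfl)
      have hb2 : (b, h') ∈ M₂ := Or.inr (Or.inr (Or.inl rfl))
      refine hpop M₂ hmat₂ (more_popular_of I M M₂ {a, b} {c} ?_ ?_ ?_)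
      · rintro x (rfl | rfl)
        · exact prefers_of_first I hMat hfa ha2 haM
        · exact prefers_of_first I hMat hfb hb2 hbnot
      · intro x hx
        by_cases hxa : x = a
        · subst hxa
          exact absurd hx (not_prefers_of_first I hMat hfa ha2)
        · by_cases hxb : x = b
          · subst hxb
            exact absurd hx (not_prefers_of_first I hMat hfb hb2)
          · by_cases hxc : x = c
            · simp [hxc]
            · obtain ⟨k, hk, hall⟩ := hx
              have hmem : (x, k) ∈ M₂ := Or.inl ⟨hk, by simp [hxa, hxb, hxc]⟩
              exact absurd (hall k hmem) (lt_irrefl _)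
      · rw [Set.ncard_singleton, Set.ncard_pair hab]
        omega
end

section
/- Let I be a CHA instance with agents A, houses H and capacity function c, and for each agent a let s(a) be the highest-ranked house h on a's preference list such that either h is not an f-house, or h is an f-house with h ≠ f(a) and |f(h)| < c(h). Then a matching M of I is popular if and only if (1) for every f-house h: if |f(h)| ≤ c(h) then every agent of f(h) is matched to h in M, and otherwise h is matched in M to exactly c(h) agents all belonging to f(h); and (2) M matches every agent, and M(a) ∈ {f(a), s(a)} for every agent a. -/
section AuxBasic
open CHAInstance
variable {A H : Type*}

theorem CHAInstance.matched_eq {I : CHAInstance A H} {M : Set (A × H)}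
    (hM : I.IsMatching M) {a : A} {h h' : H}
    (h1 : (a, h) ∈ M) (h2 : (a, h') ∈ M) : h = h' :=
  congrArg Prod.snd (hM.2.1 _ h1 _ h2 rfl)

theorem CHAInstance.first_lt {I : CHAInstance A H} {a : A} {h h' : H}
    (hf : I.IsFirstChoice a h) (hadj : I.adj a h') (hne : h' ≠ h) :
    I.rank a h < I.rank a h' :=
  lt_of_le_of_ne (hf.2 _ hadj) fun e => hne (I.rank_strict a h' h hadj hf.1 e.symm)

theorem CHAInstance.exists_min [Fintype H] (I : CHAInstance A H) (a : A) (P : H → Prop)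
    (hex : ∃ h, I.adj a h ∧ P h) :
    ∃ h, (I.adj a h ∧ P h) ∧ ∀ h', I.adj a h' → P h' → I.rank a h ≤ I.rank a h' := by
  classical
  obtain ⟨h0, hh0⟩ := hex
  obtain ⟨h, hmem, hmin⟩ := Finset.exists_min_image
    (Finset.univ.filter fun h => I.adj a h ∧ P h) (I.rank a) ⟨h0, by simp [hh0]⟩
  simp only [Finset.mem_filter, Finset.mem_univ, true_and] at hmem
  exact ⟨h, hmem, fun h' ha hp => hmin h' (by simp [ha, hp])⟩

theorem CHAInstance.exists_first [Fintype H] (I : CHAInstance A H) (a : A) :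
    ∃ h, I.IsFirstChoice a h := by
  obtain ⟨h, ⟨hadj, -⟩, hmin⟩ := I.exists_min a (fun _ => True)
    ⟨I.lastResort a, I.lastResort_adj a, trivial⟩
  exact ⟨h, hadj, fun h' ha => hmin h' ha trivial⟩

theorem CHAInstance.not_fhouse_lastResort {I : CHAInstance A H} {a : A} {h : H}
    (hadj : I.adj a h) (hne : h ≠ I.lastResort a) : ¬ I.IsFHouse (I.lastResort a) := by
  rintro ⟨x, hx⟩
  have hxa : x = a := I.lastResort_only a x hx.1
  subst hxa
  have := hx.2 h hadj
  have := I.lastResort_worst x h hadj hne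
  omega

theorem CHAInstance.exists_second [Fintype H] {I : CHAInstance A H} {a : A}
    (hW : ∃ h, I.adj a h ∧ h ≠ I.lastResort a) :
    ∃ h, I.IsSecondChoice a h := by
  obtain ⟨w, hwadj, hwne⟩ := hW
  have hscondl : I.SCond a (I.lastResort a) :=
    Or.inl (CHAInstance.not_fhouse_lastResort hwadj hwne)
  obtain ⟨h, ⟨hadj, hsc⟩, hmin⟩ := I.exists_min a (I.SCond a)
    ⟨I.lastResort a, I.lastResort_adj a, hscondl⟩
  exact ⟨h, hadj, hsc, hmin⟩

end AuxBasic


section Gadgets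
open CHAInstance
variable {A H : Type*} [Fintype A]

theorem card_helper10 {S P : Set A} {a : A} (ha : a ∈ S) (hP : P ⊆ (∅ : Set A)) :
    Nat.card P < Nat.card S := by
  rw [Nat.card_coe_set_eq, Nat.card_coe_set_eq]
  have h1 : P = ∅ := Set.subset_empty_iff.mp hP
  have h2 : 0 < S.ncard := (Set.ncard_pos S.toFinite).mpr ⟨a, ha⟩
  simp [h1, h2]

theorem card_helper21 {S P : Set A} {a b c : A} (hab : a ≠ b)
    (ha : a ∈ S) (hb : b ∈ S) (hP : P ⊆ {c}) : Nat.card P < Nat.card S := by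
  rw [Nat.card_coe_set_eq, Nat.card_coe_set_eq]
  have h1 : P.ncard ≤ 1 := by
    have := Set.ncard_le_ncard hP (Set.finite_singleton c)
    simpa using this
  have h2 : 2 ≤ S.ncard := by
    have hsub : ({a, b} : Set A) ⊆ S := by
      rintro x (rfl | rfl) <;> assumption
    calc 2 = ({a, b} : Set A).ncard := (Set.ncard_pair hab).symm
      _ ≤ S.ncard := Set.ncard_le_ncard hsub S.toFinite
  omega

variable {I : CHAInstance A H} {M : Set (A × H)}

theorem not_popular_promote (hM : I.IsMatching M) {a : A} {t : H}
    (hadj : I.adj a t)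
    (hroom : {x | (x, t) ∈ M}.ncard < I.cap t)
    (hbet : ∀ h', (a, h') ∈ M → I.rank a t < I.rank a h') :
    ¬ I.IsPopular M := by
  classical
  intro hpop
  set M' : Set (A × H) := {p | p ∈ M ∧ p.1 ≠ a} ∪ {(a, t)} with hM'def
  have hmem' : ∀ p : A × H, p ∈ M' ↔ (p ∈ M ∧ p.1 ≠ a) ∨ p = (a, t) := by
    intro p; simp [hM'def]; tauto
  have hmatch : I.IsMatching M' := by
    refine ⟨?_, ?_, ?_⟩
    · intro p hp
      rcases (hmem' p).mp hp with ⟨hp, -⟩ | rfl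
      · exact hM.1 p hp
      · exact hadj
    · intro p hp q hq he
      rcases (hmem' p).mp hp with ⟨hp1, hp2⟩ | rfl <;>
        rcases (hmem' q).mp hq with ⟨hq1, hq2⟩ | rfl
      · exact hM.2.1 p hp1 q hq1 he
      · exact absurd he hp2
      · exact absurd he.symm hq2
      · rfl
    · intro h
      by_cases ht : h = t
      · subst ht
        have hsub : {x | (x, h) ∈ M'} ⊆ insert a {x | (x, h) ∈ M} := by
          intro x hx
          rcases (hmem' _).mp hx with ⟨hx1, -⟩ | hx1
          · exact Set.mem_insert_of_mem _ hx1
          · exact (Prod.mk.injEq .. ▸ hx1).1 ▸ Set.mem_insert _ _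
        calc {x | (x, h) ∈ M'}.ncard ≤ (insert a {x | (x, h) ∈ M}).ncard :=
              Set.ncard_le_ncard hsub (Set.toFinite _)
          _ ≤ {x | (x, h) ∈ M}.ncard + 1 := Set.ncard_insert_le _ _
          _ ≤ I.cap h := hroom
      · have hsub : {x | (x, h) ∈ M'} ⊆ {x | (x, h) ∈ M} := by
          intro x hx
          rcases (hmem' _).mp hx with ⟨hx1, -⟩ | hx1
          · exact hx1
          · exact absurd (Prod.mk.injEq .. ▸ hx1).2 ht
        exact le_trans (Set.ncard_le_ncard hsub (Set.toFinite _)) (hM.2.2 h)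
  refine hpop.2 M' hmatch ?_
  have hat : (a, t) ∈ M' := (hmem' _).mpr (Or.inr rfl)
  have hS : a ∈ {x | I.Prefers M' M x} :=
    ⟨t, hat, fun h' hh' => hbet h' hh'⟩
  have hP : {x | I.Prefers M M' x} ⊆ (∅ : Set A) := by
    rintro x ⟨h, hxh, hbetter⟩
    by_cases hxa : x = a
    · subst hxa
      have h1 := hbet h hxh
      have h2 := hbetter t hat
      omega
    · have : (x, h) ∈ M' := (hmem' _).mpr (Or.inl ⟨hxh, hxa⟩)
      exact absurd (hbetter h this) (lt_irrefl _)
  exact card_helper10 hS hP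

theorem not_popular_swap2 (hM : I.IsMatching M) {a b : A} {h0 t u : H}
    (ha : (a, h0) ∈ M) (hb : (b, t) ∈ M)
    (hadjat : I.adj a t) (hadjbu : I.adj b u)
    (hrta : I.rank a t < I.rank a h0) (hrub : I.rank b u < I.rank b t)
    (hroom : u = h0 ∨ {x | (x, u) ∈ M}.ncard < I.cap u) :
    ¬ I.IsPopular M := by
  classical
  intro hpop
  have hth0 : t ≠ h0 := fun e => by subst e; exact absurd hrta (lt_irrefl _)
  have hut : u ≠ t := fun e => by subst e; exact absurd hrub (lt_irrefl _)
  have hab : a ≠ b := fun e => hth0 (I.matched_eq hM hb (e ▸ ha))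
  set M' : Set (A × H) := {p | p ∈ M ∧ p.1 ≠ a ∧ p.1 ≠ b} ∪ {(a, t), (b, u)} with hM'def
  have hmem' : ∀ p : A × H, p ∈ M' ↔ (p ∈ M ∧ p.1 ≠ a ∧ p.1 ≠ b) ∨ p = (a, t) ∨ p = (b, u) := by
    intro p; simp [hM'def]; tauto
  have hmatch : I.IsMatching M' := by
    refine ⟨?_, ?_, ?_⟩
    · intro p hp
      rcases (hmem' p).mp hp with ⟨hp, -⟩ | rfl | rfl
      · exact hM.1 p hp
      · exact hadjat
      · exact hadjbu
    · intro p hp q hq he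
      rcases (hmem' p).mp hp with ⟨hp1, hp2, hp3⟩ | rfl | rfl <;>
        rcases (hmem' q).mp hq with ⟨hq1, hq2, hq3⟩ | rfl | rfl
      · exact hM.2.1 p hp1 q hq1 he
      · exact absurd he hp2
      · exact absurd he hp3
      · exact absurd he.symm hq2
      · rfl
      · exact absurd he hab
      · exact absurd he.symm hq3
      · exact absurd he.symm hab
      · rfl
    · intro h
      by_cases ht : h = t
      · subst ht
        have hsub : {x | (x, h) ∈ M'} ⊆ insert a ({x | (x, h) ∈ M} \ {b}) := by
          intro x hx
          rcases (hmem' _).mp hx with ⟨hx1, -, hx3⟩ | hx1 | hx1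
          · exact Set.mem_insert_of_mem _ ⟨hx1, hx3⟩
          · exact (Prod.mk.injEq .. ▸ hx1).1 ▸ Set.mem_insert _ _
          · exact absurd (Prod.mk.injEq .. ▸ hx1).2.symm hut
        calc {x | (x, h) ∈ M'}.ncard ≤ (insert a ({x | (x, h) ∈ M} \ {b})).ncard :=
              Set.ncard_le_ncard hsub (Set.toFinite _)
          _ ≤ ({x | (x, h) ∈ M} \ {b}).ncard + 1 := Set.ncard_insert_le _ _
          _ = {x | (x, h) ∈ M}.ncard := Set.ncard_diff_singleton_add_one hb (Set.toFinite _)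
          _ ≤ I.cap h := hM.2.2 h
      · by_cases hu : h = u
        · subst hu
          rcases hroom with rfl | hroom
          · have hsub : {x | (x, h) ∈ M'} ⊆ insert b ({x | (x, h) ∈ M} \ {a}) := by
              intro x hx
              rcases (hmem' _).mp hx with ⟨hx1, hx2, -⟩ | hx1 | hx1
              · exact Set.mem_insert_of_mem _ ⟨hx1, hx2⟩
              · exact absurd (Prod.mk.injEq .. ▸ hx1).2 ht
              · exact (Prod.mk.injEq .. ▸ hx1).1 ▸ Set.mem_insert _ _
            calc {x | (x, h) ∈ M'}.ncard ≤ (insert b ({x | (x, h) ∈ M} \ {a})).ncard :=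
                  Set.ncard_le_ncard hsub (Set.toFinite _)
              _ ≤ ({x | (x, h) ∈ M} \ {a}).ncard + 1 := Set.ncard_insert_le _ _
              _ = {x | (x, h) ∈ M}.ncard := Set.ncard_diff_singleton_add_one ha (Set.toFinite _)
              _ ≤ I.cap h := hM.2.2 h
          · have hsub : {x | (x, h) ∈ M'} ⊆ insert b {x | (x, h) ∈ M} := by
              intro x hx
              rcases (hmem' _).mp hx with ⟨hx1, -, -⟩ | hx1 | hx1
              · exact Set.mem_insert_of_mem _ hx1
              · exact absurd (Prod.mk.injEq .. ▸ hx1).2 ht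
              · exact (Prod.mk.injEq .. ▸ hx1).1 ▸ Set.mem_insert _ _
            calc {x | (x, h) ∈ M'}.ncard ≤ (insert b {x | (x, h) ∈ M}).ncard :=
                  Set.ncard_le_ncard hsub (Set.toFinite _)
              _ ≤ {x | (x, h) ∈ M}.ncard + 1 := Set.ncard_insert_le _ _
              _ ≤ I.cap h := hroom
        · have hsub : {x | (x, h) ∈ M'} ⊆ {x | (x, h) ∈ M} := by
            intro x hx
            rcases (hmem' _).mp hx with ⟨hx1, -⟩ | hx1 | hx1
            · exact hx1
            · exact absurd (Prod.mk.injEq .. ▸ hx1).2 ht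
            · exact absurd (Prod.mk.injEq .. ▸ hx1).2 hu
          exact le_trans (Set.ncard_le_ncard hsub (Set.toFinite _)) (hM.2.2 h)
  refine hpop.2 M' hmatch ?_
  have hat : (a, t) ∈ M' := (hmem' _).mpr (Or.inr (Or.inl rfl))
  have hbu : (b, u) ∈ M' := (hmem' _).mpr (Or.inr (Or.inr rfl))
  have hSa : a ∈ {x | I.Prefers M' M x} :=
    ⟨t, hat, fun h' hh' => (I.matched_eq hM hh' ha) ▸ hrta⟩
  have hSb : b ∈ {x | I.Prefers M' M x} :=
    ⟨u, hbu, fun h' hh' => (I.matched_eq hM hh' hb) ▸ hrub⟩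
  have hP : {x | I.Prefers M M' x} ⊆ (∅ : Set A) := by
    rintro x ⟨h, hxh, hbetter⟩
    by_cases hxa : x = a
    · subst hxa
      have h1 : h = h0 := I.matched_eq hM hxh ha
      have h2 := hbetter t hat
      subst h1; omega
    · by_cases hxb : x = b
      · subst hxb
        have h1 : h = t := I.matched_eq hM hxh hb
        have h2 := hbetter u hbu
        subst h1; omega
      · have : (x, h) ∈ M' := (hmem' _).mpr (Or.inl ⟨hxh, hxa, hxb⟩)
        exact absurd (hbetter h this) (lt_irrefl _)
  exact card_helper10 hSa (fun x hx => hP hx)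

end Gadgets


section Gadget3
open CHAInstance
variable {A H : Type*} [Fintype A] {I : CHAInstance A H} {M : Set (A × H)}

theorem not_popular_swap3 (hM : I.IsMatching M) {a b c : A} {h0 t u : H}
    (ha : (a, h0) ∈ M) (hb : (b, t) ∈ M) (hc : (c, u) ∈ M)
    (hadjat : I.adj a t) (hadjbu : I.adj b u)
    (hrta : I.rank a t < I.rank a h0) (hrub : I.rank b u < I.rank b t)
    (huh0 : u ≠ h0) (hulc : u ≠ I.lastResort c) :
    ¬ I.IsPopular M := by
  classical
  intro hpop
  have hth0 : t ≠ h0 := fun e => by subst e; exact absurd hrta (lt_irrefl _)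
  have hut : u ≠ t := fun e => by subst e; exact absurd hrub (lt_irrefl _)
  have hab : a ≠ b := fun e => hth0 (I.matched_eq hM hb (e ▸ ha))
  have hbc : b ≠ c := fun e => hut (I.matched_eq hM hc (e ▸ hb))
  have hac : a ≠ c := fun e => huh0 (I.matched_eq hM hc (e ▸ ha))
  have htlc : t ≠ I.lastResort c := by
    intro e
    exact hac (I.lastResort_only c a (e ▸ hadjat))
  have hh0lc : h0 ≠ I.lastResort c := by
    intro e
    exact hac (I.lastResort_only c a (e ▸ hM.1 _ ha))
  set M' : Set (A × H) :=
    {p | p ∈ M ∧ p.1 ≠ a ∧ p.1 ≠ b ∧ p.1 ≠ c} ∪ {(a, t), (b, u), (c, I.lastResort c)}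
    with hM'def
  have hmem' : ∀ p : A × H, p ∈ M' ↔ (p ∈ M ∧ p.1 ≠ a ∧ p.1 ≠ b ∧ p.1 ≠ c) ∨
      p = (a, t) ∨ p = (b, u) ∨ p = (c, I.lastResort c) := by
    intro p; simp [hM'def]; tauto
  have hmatch : I.IsMatching M' := by
    refine ⟨?_, ?_, ?_⟩
    · intro p hp
      rcases (hmem' p).mp hp with ⟨hp, -⟩ | rfl | rfl | rfl
      · exact hM.1 p hp
      · exact hadjat
      · exact hadjbu
      · exact I.lastResort_adj c
    · intro p hp q hq he
      rcases (hmem' p).mp hp with ⟨hp1, hp2, hp3, hp4⟩ | rfl | rfl | rfl <;>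
        rcases (hmem' q).mp hq with ⟨hq1, hq2, hq3, hq4⟩ | rfl | rfl | rfl
      · exact hM.2.1 p hp1 q hq1 he
      · exact absurd he hp2
      · exact absurd he hp3
      · exact absurd he hp4
      · exact absurd he.symm hq2
      · rfl
      · exact absurd he hab
      · exact absurd he hac
      · exact absurd he.symm hq3
      · exact absurd he.symm hab
      · rfl
      · exact absurd he hbc
      · exact absurd he.symm hq4
      · exact absurd he.symm hac
      · exact absurd he.symm hbc
      · rfl
    · intro h
      by_cases ht : h = t
      · subst ht
        have hsub : {x | (x, h) ∈ M'} ⊆ insert a ({x | (x, h) ∈ M} \ {b}) := by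
          intro x hx
          rcases (hmem' _).mp hx with ⟨hx1, -, hx3, -⟩ | hx1 | hx1 | hx1
          · exact Set.mem_insert_of_mem _ ⟨hx1, hx3⟩
          · exact (Prod.mk.injEq .. ▸ hx1).1 ▸ Set.mem_insert _ _
          · exact absurd (Prod.mk.injEq .. ▸ hx1).2.symm hut
          · exact absurd (Prod.mk.injEq .. ▸ hx1).2 htlc
        calc {x | (x, h) ∈ M'}.ncard ≤ (insert a ({x | (x, h) ∈ M} \ {b})).ncard :=
              Set.ncard_le_ncard hsub (Set.toFinite _)
          _ ≤ ({x | (x, h) ∈ M} \ {b}).ncard + 1 := Set.ncard_insert_le _ _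
          _ = {x | (x, h) ∈ M}.ncard := Set.ncard_diff_singleton_add_one hb (Set.toFinite _)
          _ ≤ I.cap h := hM.2.2 h
      · by_cases hu : h = u
        · subst hu
          have hsub : {x | (x, h) ∈ M'} ⊆ insert b ({x | (x, h) ∈ M} \ {c}) := by
            intro x hx
            rcases (hmem' _).mp hx with ⟨hx1, -, -, hx4⟩ | hx1 | hx1 | hx1
            · exact Set.mem_insert_of_mem _ ⟨hx1, hx4⟩
            · exact absurd (Prod.mk.injEq .. ▸ hx1).2 ht
            · exact (Prod.mk.injEq .. ▸ hx1).1 ▸ Set.mem_insert _ _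
            · exact absurd (Prod.mk.injEq .. ▸ hx1).2 hulc
          calc {x | (x, h) ∈ M'}.ncard ≤ (insert b ({x | (x, h) ∈ M} \ {c})).ncard :=
                Set.ncard_le_ncard hsub (Set.toFinite _)
            _ ≤ ({x | (x, h) ∈ M} \ {c}).ncard + 1 := Set.ncard_insert_le _ _
            _ = {x | (x, h) ∈ M}.ncard := Set.ncard_diff_singleton_add_one hc (Set.toFinite _)
            _ ≤ I.cap h := hM.2.2 h
        · by_cases hlc : h = I.lastResort c
          · have hsub : {x | (x, h) ∈ M'} ⊆ {c} := by
              intro x hx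
              rcases (hmem' _).mp hx with ⟨hx1, -, -, hx4⟩ | hx1 | hx1 | hx1
              · exact absurd (I.lastResort_only c x (hlc ▸ hM.1 _ hx1)) hx4
              · exact absurd (Prod.mk.injEq .. ▸ hx1).2 ht
              · exact absurd (Prod.mk.injEq .. ▸ hx1).2 hu
              · exact (Prod.mk.injEq .. ▸ hx1).1 ▸ rfl
            calc {x | (x, h) ∈ M'}.ncard ≤ ({c} : Set A).ncard :=
                  Set.ncard_le_ncard hsub (Set.finite_singleton c)
              _ = 1 := Set.ncard_singleton c
              _ ≤ I.cap h := I.cap_pos h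
          · have hsub : {x | (x, h) ∈ M'} ⊆ {x | (x, h) ∈ M} := by
              intro x hx
              rcases (hmem' _).mp hx with ⟨hx1, -⟩ | hx1 | hx1 | hx1
              · exact hx1
              · exact absurd (Prod.mk.injEq .. ▸ hx1).2 ht
              · exact absurd (Prod.mk.injEq .. ▸ hx1).2 hu
              · exact absurd (Prod.mk.injEq .. ▸ hx1).2 hlc
            exact le_trans (Set.ncard_le_ncard hsub (Set.toFinite _)) (hM.2.2 h)
  refine hpop.2 M' hmatch ?_
  have hat : (a, t) ∈ M' := (hmem' _).mpr (Or.inr (Or.inl rfl))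
  have hbu : (b, u) ∈ M' := (hmem' _).mpr (Or.inr (Or.inr (Or.inl rfl)))
  have hclc : (c, I.lastResort c) ∈ M' := (hmem' _).mpr (Or.inr (Or.inr (Or.inr rfl)))
  have hSa : a ∈ {x | I.Prefers M' M x} :=
    ⟨t, hat, fun h' hh' => (I.matched_eq hM hh' ha) ▸ hrta⟩
  have hSb : b ∈ {x | I.Prefers M' M x} :=
    ⟨u, hbu, fun h' hh' => (I.matched_eq hM hh' hb) ▸ hrub⟩
  have hP : {x | I.Prefers M M' x} ⊆ ({c} : Set A) := by
    rintro x ⟨h, hxh, hbetter⟩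
    by_cases hxc : x = c
    · exact hxc ▸ rfl
    by_cases hxa : x = a
    · subst hxa
      have h1 : h = h0 := I.matched_eq hM hxh ha
      have h2 := hbetter t hat
      subst h1; omega
    by_cases hxb : x = b
    · subst hxb
      have h1 : h = t := I.matched_eq hM hxh hb
      have h2 := hbetter u hbu
      subst h1; omega
    have : (x, h) ∈ M' := (hmem' _).mpr (Or.inl ⟨hxh, hxa, hxb, hxc⟩)
    exact absurd (hbetter h this) (lt_irrefl _)
  exact card_helper21 hab hSa hSb hP

end Gadget3


section Necessity
open CHAInstance
variable {A H : Type*} [Fintype A] [Fintype H] {I : CHAInstance A H} {M : Set (A × H)}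

theorem all_matched (hM : I.IsMatching M) (hpop : I.IsPopular M) (a : A) :
    ∃ h, (a, h) ∈ M := by
  by_contra hcon
  push_neg at hcon
  refine not_popular_promote hM (I.lastResort_adj a) ?_ (fun h' hh' => absurd hh' (hcon h')) hpop
  have hsub : {x | (x, I.lastResort a) ∈ M} ⊆ (∅ : Set A) := by
    intro x hx
    have hxa : x = a := I.lastResort_only a x (hM.1 _ hx)
    exact absurd (hxa ▸ hx) (hcon _)
  have : {x | (x, I.lastResort a) ∈ M}.ncard = 0 := by
    simp [Set.subset_empty_iff.mp hsub]
  rw [this]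
  exact I.cap_pos _

/-- Key gadget: if agent `a` (matched to `h0`) strictly prefers `t`, and some agent
`b` matched to `t` does not have `t` as first choice, then `M` is not popular. -/
theorem gadget (hM : I.IsMatching M) {a b : A} {h0 t : H}
    (ha : (a, h0) ∈ M) (hadj : I.adj a t) (hr : I.rank a t < I.rank a h0)
    (hb : (b, t) ∈ M) (hnf : ¬ I.IsFirstChoice b t) :
    ¬ I.IsPopular M := by
  obtain ⟨h2, hf2⟩ := I.exists_first b
  have hne : h2 ≠ t := fun e => hnf (e ▸ hf2)
  have hr2 : I.rank b h2 < I.rank b t := CHAInstance.first_lt hf2 (hM.1 _ hb) (Ne.symm hne)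
  by_cases hroom : h2 = h0 ∨ {x | (x, h2) ∈ M}.ncard < I.cap h2
  · exact not_popular_swap2 hM ha hb hadj hf2.1 hr hr2 hroom
  · push_neg at hroom
    obtain ⟨hh20, hsat⟩ := hroom
    have hpos : 0 < {x | (x, h2) ∈ M}.ncard := lt_of_lt_of_le (I.cap_pos h2) hsat
    obtain ⟨c, hc⟩ := (Set.ncard_pos (Set.toFinite _)).mp hpos
    have hulc : h2 ≠ I.lastResort c := by
      intro e
      have hbc : b = c := I.lastResort_only c b (e ▸ hf2.1)
      exact hne (I.matched_eq hM (hbc ▸ hb) hc).symm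
    exact not_popular_swap3 hM ha hb hc hadj hf2.1 hr hr2 hh20 hulc

theorem cond1_of_popular (hM : I.IsMatching M) (hpop : I.IsPopular M) (h : H)
    (hfh : I.IsFHouse h) :
    (((I.fSet h).ncard ≤ I.cap h → ∀ a ∈ I.fSet h, (a, h) ∈ M) ∧
     (I.cap h < (I.fSet h).ncard →
       {a | (a, h) ∈ M}.ncard = I.cap h ∧ ∀ a, (a, h) ∈ M → a ∈ I.fSet h)) := by
  classical
  constructor
  · intro hle a haf
    by_contra hnot
    obtain ⟨h0, ha0⟩ := all_matched hM hpop a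
    have hne : h ≠ h0 := fun e => hnot (e ▸ ha0)
    have hr : I.rank a h < I.rank a h0 := CHAInstance.first_lt haf (hM.1 _ ha0) (Ne.symm hne)
    by_cases hroom : {x | (x, h) ∈ M}.ncard < I.cap h
    · exact not_popular_promote hM haf.1 hroom
        (fun h' hh' => (I.matched_eq hM hh' ha0) ▸ hr) hpop
    · have hsat : {x | (x, h) ∈ M}.ncard = I.cap h :=
        le_antisymm (hM.2.2 h) (not_lt.mp hroom)
      have hex : ∃ b ∈ {x | (x, h) ∈ M}, ¬ I.IsFirstChoice b h := by
        by_contra hcon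
        push_neg at hcon
        have hsub : {x | (x, h) ∈ M} ⊆ I.fSet h \ {a} := by
          intro x hx
          exact ⟨hcon x hx, fun e => hnot (by rwa [Set.mem_singleton_iff.mp e] at hx)⟩
        have h1 := Set.ncard_le_ncard hsub (Set.toFinite _)
        have h2 := Set.ncard_diff_singleton_add_one haf (Set.toFinite (I.fSet h))
        omega
      obtain ⟨b, hb, hnf⟩ := hex
      exact gadget hM ha0 haf.1 hr hb hnf hpop
  · intro hlt
    have hNle : {x | (x, h) ∈ M}.ncard ≤ I.cap h := hM.2.2 h
    have hexa : ∀ P : Prop, (¬ ((I.fSet h) ⊆ {x | (x, h) ∈ M}) → P) → P := by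
      intro P hP
      apply hP
      intro hsub
      have := Set.ncard_le_ncard hsub (Set.toFinite _)
      omega
    constructor
    · by_contra hcon
      have hroom : {x | (x, h) ∈ M}.ncard < I.cap h := lt_of_le_of_ne hNle hcon
      refine hexa False ?_
      intro hnsub
      obtain ⟨a, haf, hnot⟩ := Set.not_subset.mp hnsub
      obtain ⟨h0, ha0⟩ := all_matched hM hpop a
      have hne : h ≠ h0 := fun e => hnot (e ▸ ha0)
      have hr : I.rank a h < I.rank a h0 := CHAInstance.first_lt haf (hM.1 _ ha0) (Ne.symm hne)
      exact not_popular_promote hM haf.1 hroom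
        (fun h' hh' => (I.matched_eq hM hh' ha0) ▸ hr) hpop
    · intro b hbM
      by_contra hnf
      refine hexa False ?_
      intro hnsub
      obtain ⟨a, haf, hnot⟩ := Set.not_subset.mp hnsub
      obtain ⟨h0, ha0⟩ := all_matched hM hpop a
      have hne : h ≠ h0 := fun e => hnot (e ▸ ha0)
      have hr : I.rank a h < I.rank a h0 := CHAInstance.first_lt haf (hM.1 _ ha0) (Ne.symm hne)
      exact gadget hM ha0 haf.1 hr hbM hnf hpop

theorem cond2_of_popular (hM : I.IsMatching M) (hpop : I.IsPopular M) (a : A) :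
    ∃ h : H, (a, h) ∈ M ∧ (I.IsFirstChoice a h ∨ I.IsSecondChoice a h) := by
  classical
  obtain ⟨h0, ha0⟩ := all_matched hM hpop a
  refine ⟨h0, ha0, ?_⟩
  by_contra hcon
  push_neg at hcon
  obtain ⟨hnfirst, hnsecond⟩ := hcon
  have hadj0 : I.adj a h0 := hM.1 _ ha0
  -- existence of the s-house
  have hwit : ∃ h, I.adj a h ∧ h ≠ I.lastResort a := by
    by_cases hh0l : h0 = I.lastResort a
    · obtain ⟨hf1, hff⟩ := I.exists_first a
      refine ⟨hf1, hff.1, fun e => hnfirst ?_⟩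
      rw [hh0l, ← e]
      exact hff
    · exact ⟨h0, hadj0, hh0l⟩
  obtain ⟨h1, hs⟩ := CHAInstance.exists_second hwit
  obtain ⟨hadj1, hsc1, hsmin⟩ := hs
  rcases lt_trichotomy (I.rank a h0) (I.rank a h1) with hlt | heq | hgt
  · -- M(a) strictly better than s(a): impossible using cond1
    have hnsc : ¬ I.SCond a h0 := by
      intro sc
      have := hsmin h0 hadj0 sc
      omega
    rw [CHAInstance.SCond] at hnsc
    push_neg at hnsc
    obtain ⟨hFH, hrest⟩ := hnsc
    have hge : I.cap h0 ≤ (I.fSet h0).ncard := hrest hnfirst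
    have hc1 := cond1_of_popular hM hpop h0 hFH
    rcases eq_or_lt_of_le hge with heq2 | hlt2
    · have hsub : I.fSet h0 ⊆ {x | (x, h0) ∈ M} := fun x hx => hc1.1 heq2.symm.le x hx
      have hle2 : {x | (x, h0) ∈ M}.ncard ≤ (I.fSet h0).ncard := heq2 ▸ hM.2.2 h0
      have := Set.eq_of_subset_of_ncard_le hsub hle2 (Set.toFinite _)
      exact hnfirst (this ▸ ha0 : a ∈ I.fSet h0)
    · exact hnfirst ((hc1.2 hlt2).2 a ha0)
  · exact hnsecond (I.rank_strict a h0 h1 hadj0 hadj1 heq ▸ ⟨hadj1, hsc1, hsmin⟩)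
  · -- M(a) strictly worse than s(a): build improvement
    have himpr : ∃ b, (b, h1) ∈ M ∧ ¬ I.IsFirstChoice b h1 := by
      by_cases hroom : {x | (x, h1) ∈ M}.ncard < I.cap h1
      · exact absurd hpop (not_popular_promote hM hadj1 hroom
          (fun h' hh' => (I.matched_eq hM hh' ha0) ▸ hgt))
      · have hsat : {x | (x, h1) ∈ M}.ncard = I.cap h1 :=
          le_antisymm (hM.2.2 h1) (not_lt.mp hroom)
        by_cases hFH1 : I.IsFHouse h1
        · -- f-house: SCond gives |f(h1)| < cap h1
          have hltcap : (I.fSet h1).ncard < I.cap h1 := by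
            rcases hsc1 with hnf | ⟨-, hlc⟩
            · exact absurd hFH1 hnf
            · exact hlc
          have hc1 := cond1_of_popular hM hpop h1 hFH1
          have hsub : I.fSet h1 ⊆ {x | (x, h1) ∈ M} := hc1.1 hltcap.le
          by_contra hcon2
          push_neg at hcon2
          have hsub2 : {x | (x, h1) ∈ M} ⊆ I.fSet h1 := fun x hx => hcon2 x hx
          have := Set.ncard_le_ncard hsub2 (Set.toFinite _)
          omega
        · obtain ⟨b, hb⟩ := (Set.ncard_pos (Set.toFinite _)).mp
            (hsat ▸ I.cap_pos h1)
          exact ⟨b, hb, fun hf => hFH1 ⟨b, hf⟩⟩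
    obtain ⟨b, hb, hnf⟩ := himpr
    exact gadget hM ha0 hadj1 hgt hb hnf hpop

end Necessity


section Sufficiency
open CHAInstance
variable {A H : Type*} [Fintype A] [Fintype H] {I : CHAInstance A H} {M : Set (A × H)}

theorem popular_of_conds (hM : I.IsMatching M)
    (hc1 : ∀ h : H, I.IsFHouse h →
        (((I.fSet h).ncard ≤ I.cap h → ∀ a ∈ I.fSet h, (a, h) ∈ M) ∧
         (I.cap h < (I.fSet h).ncard →
           {a | (a, h) ∈ M}.ncard = I.cap h ∧ ∀ a, (a, h) ∈ M → a ∈ I.fSet h)))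
    (hc2 : ∀ a : A, ∃ h : H, (a, h) ∈ M ∧
        (I.IsFirstChoice a h ∨ I.IsSecondChoice a h)) :
    I.IsPopular M := by
  classical
  refine ⟨hM, fun M' hM' hmp => ?_⟩
  set S := {x | I.Prefers M' M x} with hSdef
  set P := {x | I.Prefers M M' x} with hPdef
  -- the matching function of M
  have hmex : ∀ x : A, ∃ h, (x, h) ∈ M ∧ (I.IsFirstChoice x h ∨ I.IsSecondChoice x h) := hc2
  set m : A → H := fun x => (hmex x).choose with hmdef
  have hm : ∀ x, (x, m x) ∈ M ∧ (I.IsFirstChoice x (m x) ∨ I.IsSecondChoice x (m x)) :=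
    fun x => (hmex x).choose_spec
  have hmuniq : ∀ x h, (x, h) ∈ M → m x = h := fun x h hx => I.matched_eq hM (hm x).1 hx
  -- the (partial) matching function of M'
  set g : A → H := fun x => if hx : ∃ h, (x, h) ∈ M' then hx.choose else I.lastResort x
    with hgdef
  have hg : ∀ x h, (x, h) ∈ M' → g x = h := by
    intro x h hx
    have hex : ∃ h, (x, h) ∈ M' := ⟨h, hx⟩
    have : g x = hex.choose := by simp [hgdef, dif_pos hex]
    rw [this]
    exact I.matched_eq hM' hex.choose_spec hx
  set sF : Finset A := S.toFinite.toFinset with hsFdef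
  set pF : Finset A := P.toFinite.toFinset with hpFdef
  have key : ∀ h : H, (sF.filter (fun x => g x = h)).card ≤
      (pF.filter (fun x => m x = h)).card := by
    intro h
    by_cases hne : ∃ a ∈ sF, g a = h
    · obtain ⟨a, haS, hga⟩ := hne
      have haS' : I.Prefers M' M a := by
        have := (Set.Finite.mem_toFinset S.toFinite).mp (hsFdef ▸ haS)
        exact this
      obtain ⟨w, hwM', hbet⟩ := haS'
      have hwh : w = h := hga ▸ (hg a w hwM').symm
      subst hwh
      have hahM' : (a, w) ∈ M' := hwM'
      have hadj : I.adj a w := hM'.1 _ hahM'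
      have hr : I.rank a w < I.rank a (m a) := hbet (m a) (hm a).1
      have hsecond : I.IsSecondChoice a (m a) := by
        rcases (hm a).2 with hfst | hsnd
        · exact absurd (hfst.2 w hadj) (by omega)
        · exact hsnd
      obtain ⟨hadjm, hscm, hminm⟩ := hsecond
      have hnsc : ¬ I.SCond a w := by
        intro sc
        have := hminm w hadj sc
        omega
      rw [CHAInstance.SCond] at hnsc
      push_neg at hnsc
      obtain ⟨hFH, hrest⟩ := hnsc
      -- h (= w) is saturated in M by first-choice agents
      have hstruct : {x | (x, w) ∈ M}.ncard = I.cap w ∧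
          ∀ b, (b, w) ∈ M → I.IsFirstChoice b w := by
        by_cases hfa : I.IsFirstChoice a w
        · have hlt : I.cap w < (I.fSet w).ncard := by
            by_contra hle
            push_neg at hle
            have hawM := (hc1 w hFH).1 hle a hfa
            have hma := hmuniq a w hawM
            rw [hma] at hr
            omega
          exact (hc1 w hFH).2 hlt
        · have hge : I.cap w ≤ (I.fSet w).ncard := hrest hfa
          rcases eq_or_lt_of_le hge with heq | hlt
          · have hsub : I.fSet w ⊆ {x | (x, w) ∈ M} := (hc1 w hFH).1 heq.symm.le
            have hle2 : {x | (x, w) ∈ M}.ncard ≤ (I.fSet w).ncard := heq ▸ hM.2.2 w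
            have heqset := Set.eq_of_subset_of_ncard_le hsub hle2 (Set.toFinite _)
            constructor
            · rw [← heqset, ← heq]
            · intro b hb
              exact (heqset ▸ hb : b ∈ I.fSet w)
          · exact (hc1 w hFH).2 hlt
      obtain ⟨hNcard, hNfirst⟩ := hstruct
      -- set-level inclusions
      set Nh := {x | (x, w) ∈ M} with hNhdef
      set Nh' := {x | (x, w) ∈ M'} with hNh'def
      have hL : ((sF.filter (fun x => g x = w)) : Set A) ⊆ Nh' \ Nh := by
        intro x hx
        simp only [Finset.coe_filter, Set.mem_setOf_eq] at hx
        obtain ⟨hxS, hgx⟩ := hx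
        have hxS' : I.Prefers M' M x := by
          have := (Set.Finite.mem_toFinset S.toFinite).mp (hsFdef ▸ hxS)
          exact this
        obtain ⟨v, hvM', hbetx⟩ := hxS'
        have hvw : v = w := hgx ▸ (hg x v hvM').symm
        subst hvw
        refine ⟨hvM', fun hxM => ?_⟩
        have := hbetx v hxM
        omega
      have hR : Nh \ Nh' ⊆ ((pF.filter (fun x => m x = w)) : Set A) := by
        intro b ⟨hbM, hbM'⟩
        have hbfirst : I.IsFirstChoice b w := hNfirst b hbM
        have hbP : I.Prefers M M' b := by
          refine ⟨w, hbM, fun h' hh' => ?_⟩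
          refine CHAInstance.first_lt hbfirst (hM'.1 _ hh')
            (fun e => hbM' (by rw [e] at hh'; exact hh'))
        simp only [Finset.coe_filter, Set.mem_setOf_eq]
        exact ⟨hpFdef ▸ (Set.Finite.mem_toFinset P.toFinite).mpr hbP, hmuniq b w hbM⟩
      -- cardinality chain
      have hcap' : Nh'.ncard ≤ I.cap w := hM'.2.2 w
      have e1 := Set.ncard_inter_add_ncard_diff_eq_ncard Nh' Nh (Set.toFinite _)
      have e2 := Set.ncard_inter_add_ncard_diff_eq_ncard Nh Nh' (Set.toFinite _)
      have hint : (Nh' ∩ Nh).ncard = (Nh ∩ Nh').ncard := by rw [Set.inter_comm]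
      have hcl : ((sF.filter (fun x => g x = w)) : Set A).ncard ≤ (Nh' \ Nh).ncard :=
        Set.ncard_le_ncard hL (Set.toFinite _)
      have hcr : (Nh \ Nh').ncard ≤ ((pF.filter (fun x => m x = w)) : Set A).ncard :=
        Set.ncard_le_ncard hR (Set.toFinite _)
      rw [Set.ncard_coe_finset] at hcl hcr
      omega
    · push_neg at hne
      have : sF.filter (fun x => g x = h) = ∅ := Finset.filter_eq_empty_iff.mpr hne
      simp [this]
  have hsum1 : sF.card = ∑ h ∈ Finset.univ, (sF.filter (fun x => g x = h)).card :=
    Finset.card_eq_sum_card_fiberwise (fun x _ => Finset.mem_univ (g x))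
  have hsum2 : pF.card = ∑ h ∈ Finset.univ, (pF.filter (fun x => m x = h)).card :=
    Finset.card_eq_sum_card_fiberwise (fun x _ => Finset.mem_univ (m x))
  have hcards : sF.card ≤ pF.card := by
    rw [hsum1, hsum2]
    exact Finset.sum_le_sum (fun h _ => key h)
  have h1 : Nat.card S = sF.card := by
    rw [Nat.card_coe_set_eq, Set.ncard_eq_toFinset_card S S.toFinite]
  have h2 : Nat.card P = pF.card := by
    rw [Nat.card_coe_set_eq, Set.ncard_eq_toFinset_card P P.toFinite]
  rw [CHAInstance.MorePopular] at hmp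
  have : Nat.card S ≤ Nat.card P := by rw [h1, h2]; exact hcards
  exact absurd hmp (not_lt.mpr this)

end Sufficiency

open CHAInstance in
/-- a matching `M` of a CHA instance `I` is popular if and only if
(1) for every `f`-house `h`: if `|f(h)| ≤ c(h)` then every agent of `f(h)` is matched
to `h`, and otherwise `h` is matched to exactly `c(h)` agents, all from `f(h)`; and
(2) `M` matches every agent, and `M(a) ∈ {f(a), s(a)}` for every agent `a`. -/
theorem popular_iff_CHA_characterization
    {A H : Type*} [Fintype A] [Fintype H] (I : CHAInstance A H)
    (M : Set (A × H)) (hM : IsMatching I M) :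
    IsPopular I M ↔
      ((∀ h : H, IsFHouse I h →
          (((fSet I h).ncard ≤ I.cap h → ∀ a ∈ fSet I h, (a, h) ∈ M) ∧
           (I.cap h < (fSet I h).ncard →
             {a | (a, h) ∈ M}.ncard = I.cap h ∧ ∀ a, (a, h) ∈ M → a ∈ fSet I h))) ∧
       (∀ a : A, ∃ h : H, (a, h) ∈ M ∧
          (IsFirstChoice I a h ∨ IsSecondChoice I a h))) := by
  constructor
  · intro hpop
    exact ⟨fun h hfh => cond1_of_popular hM hpop h hfh, fun a => cond2_of_popular hM hpop a⟩
  · rintro ⟨h1, h2⟩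
    exact popular_of_conds hM h1 h2
end

section
/- Let M and M' be two popular matchings of a CHA instance I, with switching graphs G_M and G_{M'}. Then for every house h, the number of outgoing edges of weight −1 at h is the same in G_M and G_{M'}, and the number of incoming edges of weight +1 at h is the same in G_M and G_{M'}. -/
namespace CHAInstance

variable {A H : Type*}

lemma rank_lt (I : CHAInstance A H) {a : A} {h h' : H} (h1 : I.adj a h) (h2 : I.adj a h')
    (hne : h ≠ h') (hle : I.rank a h ≤ I.rank a h') : I.rank a h < I.rank a h' :=
  lt_of_le_of_ne hle (fun e => hne (I.rank_strict a h h' h1 h2 e))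

lemma exists_isFirstChoice [Fintype H] (I : CHAInstance A H) (a : A) :
    ∃ h, IsFirstChoice I a h := by
  classical
  obtain ⟨h, hh, hmin⟩ := Finset.exists_min_image
    (Finset.univ.filter fun h => I.adj a h) (I.rank a)
    ⟨I.lastResort a, by simp [I.lastResort_adj a]⟩
  simp only [Finset.mem_filter, Finset.mem_univ, true_and] at hh
  exact ⟨h, hh, fun h' hh' => hmin h' (by simp [hh'])⟩

lemma IsFirstChoice.unique {I : CHAInstance A H} {a : A} {h h' : H}
    (hf : IsFirstChoice I a h) (hf' : IsFirstChoice I a h') : h = h' :=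
  I.rank_strict a h h' hf.1 hf'.1 (le_antisymm (hf.2 _ hf'.1) (hf'.2 _ hf.1))

lemma not_scond_of_first {I : CHAInstance A H} {a : A} {h : H}
    (hf : IsFirstChoice I a h) : ¬ SCond I a h := by
  rintro (hn | ⟨hnf, -⟩)
  · exact hn ⟨a, hf⟩
  · exact hnf hf

lemma IsSecondChoice.not_first {I : CHAInstance A H} {a : A} {h : H}
    (hs : IsSecondChoice I a h) : ¬ IsFirstChoice I a h :=
  fun hf => not_scond_of_first hf hs.2.1

lemma lone_or_exists_second [Fintype H] (I : CHAInstance A H) (a : A) :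
    IsFirstChoice I a (I.lastResort a) ∨ ∃ h, IsSecondChoice I a h := by
  classical
  by_cases hl : IsFirstChoice I a (I.lastResort a)
  · exact Or.inl hl
  right
  have hs : SCond I a (I.lastResort a) := by
    left; rintro ⟨a', hf⟩
    have ha : a' = a := I.lastResort_only a a' hf.1
    subst ha; exact hl hf
  obtain ⟨h, hh, hmin⟩ := Finset.exists_min_image
    (Finset.univ.filter fun h => I.adj a h ∧ SCond I a h) (I.rank a)
    ⟨I.lastResort a, by simp [I.lastResort_adj a, hs]⟩
  simp only [Finset.mem_filter, Finset.mem_univ, true_and] at hh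
  exact ⟨h, hh.1, hh.2, fun h' h1 h2 => hmin h' (by simp [h1, h2])⟩

lemma lone_adj {I : CHAInstance A H} {a : A} {h : H}
    (hl : IsFirstChoice I a (I.lastResort a)) (hadj : I.adj a h) : h = I.lastResort a := by
  by_contra hne
  exact absurd (hl.2 h hadj) (not_le.2 (I.lastResort_worst a h hadj hne))

lemma lone_no_second {I : CHAInstance A H} {a : A}
    (hl : IsFirstChoice I a (I.lastResort a)) : ¬ ∃ h, IsSecondChoice I a h := by
  rintro ⟨h, hadj, hsc, -⟩
  have he : h = I.lastResort a := lone_adj hl hadj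
  subst he
  exact not_scond_of_first hl hsc

lemma IsMatching.house_eq {I : CHAInstance A H} {M : Set (A × H)} (hM : IsMatching I M)
    {a : A} {h h' : H} (h1 : (a, h) ∈ M) (h2 : (a, h') ∈ M) : h = h' :=
  congrArg Prod.snd (hM.2.1 _ h1 _ h2 rfl)

lemma morePopular_of_two_one [Fintype A] (I : CHAInstance A H) {M M' : Set (A × H)}
    {a b : A} (c : A) (hab : a ≠ b) (ha : Prefers I M' M a) (hb : Prefers I M' M b)
    (hc : ∀ x, Prefers I M M' x → x = c) : MorePopular I M' M := by
  have e1 : Nat.card {x | Prefers I M M' x} ≤ 1 := by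
    rw [Nat.card_coe_set_eq]
    calc {x | Prefers I M M' x}.ncard ≤ ({c} : Set A).ncard :=
          Set.ncard_le_ncard (fun x hx => hc x hx) (Set.toFinite _)
      _ = 1 := Set.ncard_singleton c
  have e2 : 2 ≤ Nat.card {x | Prefers I M' M x} := by
    rw [Nat.card_coe_set_eq]
    calc 2 = ({a, b} : Set A).ncard := (Set.ncard_pair hab).symm
      _ ≤ _ := Set.ncard_le_ncard (by rintro x (rfl | rfl) <;> assumption) (Set.toFinite _)
  exact lt_of_le_of_lt e1 (lt_of_lt_of_le (by norm_num) e2)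

lemma morePopular_of_one_zero [Fintype A] (I : CHAInstance A H) {M M' : Set (A × H)}
    {a : A} (ha : Prefers I M' M a) (hc : ∀ x, ¬ Prefers I M M' x) :
    MorePopular I M' M := by
  have e1 : Nat.card {x | Prefers I M M' x} = 0 := by
    rw [Nat.card_coe_set_eq]
    have he : {x | Prefers I M M' x} = ∅ := Set.eq_empty_iff_forall_notMem.2 hc
    rw [he]
    exact Set.ncard_empty A
  have e2 : 1 ≤ Nat.card {x | Prefers I M' M x} := by
    rw [Nat.card_coe_set_eq]
    calc 1 = ({a} : Set A).ncard := (Set.ncard_singleton a).symm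
      _ ≤ _ := Set.ncard_le_ncard (by rintro x rfl; exact ha) (Set.toFinite _)
  exact lt_of_le_of_lt e1.le (by omega)

end CHAInstance
namespace CHAInstance

variable {A H : Type*}

lemma not_popular_swap [Fintype A] [Fintype H] (I : CHAInstance A H)
    {M : Set (A × H)} (hM : IsMatching I M) {a : A} {t : H}
    (hadj : I.adj a t) (hnot : (a, t) ∉ M)
    (himp : ∀ h', (a, h') ∈ M → I.rank a t < I.rank a h')
    (hyp : {x | (x, t) ∈ M}.ncard < I.cap t ∨ ∃ b, (b, t) ∈ M ∧ ¬ IsFirstChoice I b t) :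
    ¬ IsPopular I M := by
  classical
  rintro ⟨-, hpop⟩
  rcases hyp with hund | ⟨b, hbt, hbf⟩
  · -- Case 1 : t undersubscribed, promote a to t
    set N : Set (A × H) := {p | p ∈ M ∧ p.1 ≠ a} ∪ {(a, t)} with hN
    have hmemN : ∀ p : A × H, p ∈ N ↔ (p ∈ M ∧ p.1 ≠ a) ∨ p = (a, t) := by
      intro p
      simp only [hN, Set.mem_union, Set.mem_setOf_eq, Set.mem_singleton_iff]
    have hmatchN : IsMatching I N := by
      refine ⟨?_, ?_, ?_⟩
      · intro p hp
        rcases (hmemN p).1 hp with ⟨hp1, -⟩ | rfl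
        · exact hM.1 p hp1
        · exact hadj
      · intro p hp q hq he
        rcases (hmemN p).1 hp with ⟨hp1, hp2⟩ | rfl <;>
          rcases (hmemN q).1 hq with ⟨hq1, hq2⟩ | rfl
        · exact hM.2.1 p hp1 q hq1 he
        · exact absurd he hp2
        · exact absurd he.symm hq2
        · rfl
      · intro h0
        by_cases ht : h0 = t
        · rw [ht]
          have hsub : {x | (x, t) ∈ N} ⊆ insert a {x | (x, t) ∈ M} := by
            intro x hx
            rcases (hmemN _).1 hx with ⟨hx1, -⟩ | hx2
            · exact Set.mem_insert_of_mem _ hx1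
            · have hxa : x = a := congrArg Prod.fst hx2
              rw [hxa]; exact Set.mem_insert _ _
          calc {x | (x, t) ∈ N}.ncard ≤ (insert a {x | (x, t) ∈ M}).ncard :=
                Set.ncard_le_ncard hsub (Set.toFinite _)
            _ ≤ {x | (x, t) ∈ M}.ncard + 1 := Set.ncard_insert_le _ _
            _ ≤ I.cap t := hund
        · have hsub : {x | (x, h0) ∈ N} ⊆ {x | (x, h0) ∈ M} := by
            intro x hx
            rcases (hmemN _).1 hx with ⟨hx1, -⟩ | hx2
            · exact hx1
            · have : h0 = t := congrArg Prod.snd hx2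
              exact absurd this ht
          exact (Set.ncard_le_ncard hsub (Set.toFinite _)).trans (hM.2.2 h0)
    have hpa : Prefers I N M a := ⟨t, (hmemN _).2 (Or.inr rfl), himp⟩
    have hnone : ∀ x, ¬ Prefers I M N x := by
      rintro x ⟨hx, hxM, hcomp⟩
      by_cases hxa : x = a
      · subst hxa
        exact absurd (hcomp t ((hmemN _).2 (Or.inr rfl))) (lt_asymm (himp hx hxM))
      · exact lt_irrefl _ (hcomp hx ((hmemN _).2 (Or.inl ⟨hxM, hxa⟩)))
    exact hpop N hmatchN (morePopular_of_one_zero I hpa hnone)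
  · -- Case 2 : b occupies t with first choice elsewhere
    obtain ⟨fb, hfb⟩ := exists_isFirstChoice I b
    have hbadjt : I.adj b t := hM.1 _ hbt
    have hfbt : fb ≠ t := fun e => hbf (e ▸ hfb)
    have hba : b ≠ a := fun e => hnot (e ▸ hbt)
    have hbimp : ∀ h', (b, h') ∈ M → I.rank b fb < I.rank b h' := by
      intro h' hm
      have he : h' = t := hM.house_eq hm hbt
      rw [he]
      exact rank_lt I hfb.1 hbadjt hfbt (hfb.2 t hbadjt)
    by_cases hcap2 : ({x | (x, fb) ∈ M} \ {a}).ncard < I.cap fb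
    · -- 2a : a → t, b → fb
      set N : Set (A × H) := {p | p ∈ M ∧ p.1 ≠ a ∧ p.1 ≠ b} ∪ {(a, t), (b, fb)} with hN
      have hmemN : ∀ p : A × H,
          p ∈ N ↔ (p ∈ M ∧ p.1 ≠ a ∧ p.1 ≠ b) ∨ p = (a, t) ∨ p = (b, fb) := by
        intro p
        simp only [hN, Set.mem_union, Set.mem_setOf_eq, Set.mem_insert_iff,
          Set.mem_singleton_iff]
      have hmatchN : IsMatching I N := by
        refine ⟨?_, ?_, ?_⟩
        · intro p hp
          rcases (hmemN p).1 hp with ⟨hp1, -⟩ | rfl | rfl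
          · exact hM.1 p hp1
          · exact hadj
          · exact hfb.1
        · intro p hp q hq he
          rcases (hmemN p).1 hp with ⟨hp1, hp2, hp3⟩ | rfl | rfl <;>
            rcases (hmemN q).1 hq with ⟨hq1, hq2, hq3⟩ | rfl | rfl
          · exact hM.2.1 p hp1 q hq1 he
          · exact absurd he hp2
          · exact absurd he hp3
          · exact absurd he.symm hq2
          · rfl
          · exact absurd he (Ne.symm hba)
          · exact absurd he.symm hq3
          · exact absurd he hba
          · rfl
        · intro h0
          by_cases ht : h0 = t
          · rw [ht]
            have hsub : {x | (x, t) ∈ N} ⊆ insert a ({x | (x, t) ∈ M} \ {b}) := by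
              intro x hx
              rcases (hmemN _).1 hx with ⟨hx1, -, hx3⟩ | hx2 | hx2
              · exact Set.mem_insert_of_mem _ ⟨hx1, hx3⟩
              · have hxa : x = a := congrArg Prod.fst hx2
                rw [hxa]; exact Set.mem_insert _ _
              · have : t = fb := congrArg Prod.snd hx2
                exact absurd this (Ne.symm hfbt)
            calc {x | (x, t) ∈ N}.ncard
                ≤ (insert a ({x | (x, t) ∈ M} \ {b})).ncard :=
                  Set.ncard_le_ncard hsub (Set.toFinite _)
              _ ≤ ({x | (x, t) ∈ M} \ {b}).ncard + 1 := Set.ncard_insert_le _ _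
              _ = {x | (x, t) ∈ M}.ncard := Set.ncard_diff_singleton_add_one hbt
              _ ≤ I.cap t := hM.2.2 t
          · by_cases hf : h0 = fb
            · rw [hf]
              have hsub : {x | (x, fb) ∈ N} ⊆ insert b ({x | (x, fb) ∈ M} \ {a}) := by
                intro x hx
                rcases (hmemN _).1 hx with ⟨hx1, hx2, -⟩ | hx2 | hx2
                · exact Set.mem_insert_of_mem _ ⟨hx1, hx2⟩
                · have : fb = t := congrArg Prod.snd hx2
                  exact absurd this hfbt
                · have hxb : x = b := congrArg Prod.fst hx2
                  rw [hxb]; exact Set.mem_insert _ _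
              calc {x | (x, fb) ∈ N}.ncard
                  ≤ (insert b ({x | (x, fb) ∈ M} \ {a})).ncard :=
                    Set.ncard_le_ncard hsub (Set.toFinite _)
                _ ≤ ({x | (x, fb) ∈ M} \ {a}).ncard + 1 := Set.ncard_insert_le _ _
                _ ≤ I.cap fb := hcap2
            · have hsub : {x | (x, h0) ∈ N} ⊆ {x | (x, h0) ∈ M} := by
                intro x hx
                rcases (hmemN _).1 hx with ⟨hx1, -⟩ | hx2 | hx2
                · exact hx1
                · exact absurd (congrArg Prod.snd hx2 : h0 = t) ht
                · exact absurd (congrArg Prod.snd hx2 : h0 = fb) hf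
              exact (Set.ncard_le_ncard hsub (Set.toFinite _)).trans (hM.2.2 h0)
      have hpa : Prefers I N M a := ⟨t, (hmemN _).2 (Or.inr (Or.inl rfl)), himp⟩
      have hpb : Prefers I N M b := ⟨fb, (hmemN _).2 (Or.inr (Or.inr rfl)), hbimp⟩
      have hnone : ∀ x, ¬ Prefers I M N x := by
        rintro x ⟨hx, hxM, hcomp⟩
        by_cases hxa : x = a
        · subst hxa
          exact absurd (hcomp t ((hmemN _).2 (Or.inr (Or.inl rfl)))) (lt_asymm (himp hx hxM))
        by_cases hxb : x = b
        · subst hxb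
          exact absurd (hcomp fb ((hmemN _).2 (Or.inr (Or.inr rfl)))) (lt_asymm (hbimp hx hxM))
        · exact lt_irrefl _ (hcomp hx ((hmemN _).2 (Or.inl ⟨hxM, hxa, hxb⟩)))
      exact hpop N hmatchN
        (morePopular_of_two_one I a (Ne.symm hba) hpa hpb (fun x hx => absurd hx (hnone x)))
    · -- 2b : a → t, b → fb, evict some c from fb to its last resort
      push_neg at hcap2
      have hpos : 0 < ({x | (x, fb) ∈ M} \ {a}).ncard := lt_of_lt_of_le (I.cap_pos fb) hcap2
      obtain ⟨c, hcfb, hca0⟩ := (Set.ncard_pos (Set.toFinite _)).1 hpos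
      rw [Set.mem_singleton_iff] at hca0
      have hca : c ≠ a := hca0
      have hcb : c ≠ b := fun e => hfbt (hM.house_eq (e ▸ hcfb) hbt)
      have hlcfb : fb ≠ I.lastResort c :=
        fun e => hcb (I.lastResort_only c b (e ▸ hfb.1)).symm
      have hlct : t ≠ I.lastResort c :=
        fun e => hcb (I.lastResort_only c b (e ▸ hbadjt)).symm
      have hMlc : ∀ x, (x, I.lastResort c) ∈ M → False := by
        intro x hx
        have hxc : x = c := I.lastResort_only c x (hM.1 _ hx)
        subst hxc
        exact hlcfb (hM.house_eq hcfb hx)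
      set N : Set (A × H) :=
        {p | p ∈ M ∧ p.1 ≠ a ∧ p.1 ≠ b ∧ p.1 ≠ c} ∪
          {(a, t), (b, fb), (c, I.lastResort c)} with hN
      have hmemN : ∀ p : A × H,
          p ∈ N ↔ (p ∈ M ∧ p.1 ≠ a ∧ p.1 ≠ b ∧ p.1 ≠ c) ∨
            p = (a, t) ∨ p = (b, fb) ∨ p = (c, I.lastResort c) := by
        intro p
        simp only [hN, Set.mem_union, Set.mem_setOf_eq, Set.mem_insert_iff,
          Set.mem_singleton_iff]
      have hmatchN : IsMatching I N := by
        refine ⟨?_, ?_, ?_⟩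
        · intro p hp
          rcases (hmemN p).1 hp with ⟨hp1, -⟩ | rfl | rfl | rfl
          · exact hM.1 p hp1
          · exact hadj
          · exact hfb.1
          · exact I.lastResort_adj c
        · intro p hp q hq he
          rcases (hmemN p).1 hp with ⟨hp1, hp2, hp3, hp4⟩ | rfl | rfl | rfl <;>
            rcases (hmemN q).1 hq with ⟨hq1, hq2, hq3, hq4⟩ | rfl | rfl | rfl
          · exact hM.2.1 p hp1 q hq1 he
          · exact absurd he hp2
          · exact absurd he hp3
          · exact absurd he hp4
          · exact absurd he.symm hq2
          · rfl
          · exact absurd he (Ne.symm hba)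
          · exact absurd he (Ne.symm hca)
          · exact absurd he.symm hq3
          · exact absurd he hba
          · rfl
          · exact absurd he (Ne.symm hcb)
          · exact absurd he.symm hq4
          · exact absurd he hca
          · exact absurd he hcb
          · rfl
        · intro h0
          by_cases ht : h0 = t
          · rw [ht]
            have hsub : {x | (x, t) ∈ N} ⊆ insert a ({x | (x, t) ∈ M} \ {b}) := by
              intro x hx
              rcases (hmemN _).1 hx with ⟨hx1, -, hx3, -⟩ | hx2 | hx2 | hx2
              · exact Set.mem_insert_of_mem _ ⟨hx1, hx3⟩
              · have hxa : x = a := congrArg Prod.fst hx2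
                rw [hxa]; exact Set.mem_insert _ _
              · exact absurd (congrArg Prod.snd hx2 : t = fb) (Ne.symm hfbt)
              · exact absurd (congrArg Prod.snd hx2 : t = I.lastResort c) hlct
            calc {x | (x, t) ∈ N}.ncard
                ≤ (insert a ({x | (x, t) ∈ M} \ {b})).ncard :=
                  Set.ncard_le_ncard hsub (Set.toFinite _)
              _ ≤ ({x | (x, t) ∈ M} \ {b}).ncard + 1 := Set.ncard_insert_le _ _
              _ = {x | (x, t) ∈ M}.ncard := Set.ncard_diff_singleton_add_one hbt
              _ ≤ I.cap t := hM.2.2 t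
          · by_cases hf : h0 = fb
            · rw [hf]
              have hsub : {x | (x, fb) ∈ N} ⊆ insert b ({x | (x, fb) ∈ M} \ {c}) := by
                intro x hx
                rcases (hmemN _).1 hx with ⟨hx1, -, -, hx4⟩ | hx2 | hx2 | hx2
                · exact Set.mem_insert_of_mem _ ⟨hx1, hx4⟩
                · exact absurd (congrArg Prod.snd hx2 : fb = t) hfbt
                · have hxb : x = b := congrArg Prod.fst hx2
                  rw [hxb]; exact Set.mem_insert _ _
                · exact absurd (congrArg Prod.snd hx2 : fb = I.lastResort c) hlcfb
              calc {x | (x, fb) ∈ N}.ncard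
                  ≤ (insert b ({x | (x, fb) ∈ M} \ {c})).ncard :=
                    Set.ncard_le_ncard hsub (Set.toFinite _)
                _ ≤ ({x | (x, fb) ∈ M} \ {c}).ncard + 1 := Set.ncard_insert_le _ _
                _ = {x | (x, fb) ∈ M}.ncard := Set.ncard_diff_singleton_add_one hcfb
                _ ≤ I.cap fb := hM.2.2 fb
            · by_cases hl : h0 = I.lastResort c
              · rw [hl]
                have hsub : {x | (x, I.lastResort c) ∈ N} ⊆ {c} := by
                  intro x hx
                  rcases (hmemN _).1 hx with ⟨hx1, -⟩ | hx2 | hx2 | hx2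
                  · exact (hMlc x hx1).elim
                  · exact absurd (congrArg Prod.snd hx2 : I.lastResort c = t) (Ne.symm hlct)
                  · exact absurd (congrArg Prod.snd hx2 : I.lastResort c = fb) (Ne.symm hlcfb)
                  · have hxc : x = c := congrArg Prod.fst hx2
                    rw [hxc]; rfl
                calc {x | (x, I.lastResort c) ∈ N}.ncard ≤ ({c} : Set A).ncard :=
                      Set.ncard_le_ncard hsub (Set.toFinite _)
                  _ = 1 := Set.ncard_singleton c
                  _ ≤ I.cap (I.lastResort c) := I.cap_pos _
              · have hsub : {x | (x, h0) ∈ N} ⊆ {x | (x, h0) ∈ M} := by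
                  intro x hx
                  rcases (hmemN _).1 hx with ⟨hx1, -⟩ | hx2 | hx2 | hx2
                  · exact hx1
                  · exact absurd (congrArg Prod.snd hx2 : h0 = t) ht
                  · exact absurd (congrArg Prod.snd hx2 : h0 = fb) hf
                  · exact absurd (congrArg Prod.snd hx2 : h0 = I.lastResort c) hl
                exact (Set.ncard_le_ncard hsub (Set.toFinite _)).trans (hM.2.2 h0)
      have hpa : Prefers I N M a := ⟨t, (hmemN _).2 (Or.inr (Or.inl rfl)), himp⟩
      have hpb : Prefers I N M b := ⟨fb, (hmemN _).2 (Or.inr (Or.inr (Or.inl rfl))), hbimp⟩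
      have honly : ∀ x, Prefers I M N x → x = c := by
        rintro x ⟨hx, hxM, hcomp⟩
        by_cases hxa : x = a
        · subst hxa
          exact absurd (hcomp t ((hmemN _).2 (Or.inr (Or.inl rfl))))
            (lt_asymm (himp hx hxM))
        by_cases hxb : x = b
        · subst hxb
          exact absurd (hcomp fb ((hmemN _).2 (Or.inr (Or.inr (Or.inl rfl)))))
            (lt_asymm (hbimp hx hxM))
        by_cases hxc : x = c
        · exact hxc
        · exact absurd (hcomp hx ((hmemN _).2 (Or.inl ⟨hxM, hxa, hxb, hxc⟩))) (lt_irrefl _)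
      exact hpop N hmatchN (morePopular_of_two_one I c (Ne.symm hba) hpa hpb honly)

end CHAInstance
namespace CHAInstance

variable {A H : Type*}

/-- In a popular matching every agent is matched. -/
lemma popular_matched [Fintype A] [Fintype H] (I : CHAInstance A H)
    {M : Set (A × H)} (hpop : IsPopular I M) (a : A) : ∃ h, (a, h) ∈ M := by
  classical
  by_contra hun
  push_neg at hun
  set N : Set (A × H) := M ∪ {(a, I.lastResort a)} with hN
  have hmemN : ∀ p : A × H, p ∈ N ↔ p ∈ M ∨ p = (a, I.lastResort a) := by
    intro p
    simp only [hN, Set.mem_union, Set.mem_singleton_iff]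
  have hM := hpop.1
  have hmatchN : IsMatching I N := by
    refine ⟨?_, ?_, ?_⟩
    · intro p hp
      rcases (hmemN p).1 hp with hp1 | rfl
      · exact hM.1 p hp1
      · exact I.lastResort_adj a
    · intro p hp q hq he
      rcases (hmemN p).1 hp with hp1 | rfl <;> rcases (hmemN q).1 hq with hq1 | rfl
      · exact hM.2.1 p hp1 q hq1 he
      · have hpa : p.1 = a := he
        exact absurd (show (a, p.2) ∈ M by rw [← hpa]; exact hp1) (hun p.2)
      · have hqa : q.1 = a := he.symm
        exact absurd (show (a, q.2) ∈ M by rw [← hqa]; exact hq1) (hun q.2)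
      · rfl
    · intro h0
      by_cases hl : h0 = I.lastResort a
      · rw [hl]
        have hsub : {x | (x, I.lastResort a) ∈ N} ⊆ {a} := by
          intro x hx
          rcases (hmemN _).1 hx with hx1 | hx2
          · have hxa : x = a := I.lastResort_only a x (hM.1 _ hx1)
            subst hxa
            exact absurd hx1 (hun _)
          · have hxa : x = a := congrArg Prod.fst hx2
            rw [hxa]; rfl
        calc {x | (x, I.lastResort a) ∈ N}.ncard ≤ ({a} : Set A).ncard :=
              Set.ncard_le_ncard hsub (Set.toFinite _)
          _ = 1 := Set.ncard_singleton a
          _ ≤ I.cap (I.lastResort a) := (I.lastResort_cap a).ge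
      · have hsub : {x | (x, h0) ∈ N} ⊆ {x | (x, h0) ∈ M} := by
          intro x hx
          rcases (hmemN _).1 hx with hx1 | hx2
          · exact hx1
          · exact absurd (congrArg Prod.snd hx2 : h0 = I.lastResort a) hl
        exact (Set.ncard_le_ncard hsub (Set.toFinite _)).trans (hM.2.2 h0)
  have hpa : Prefers I N M a :=
    ⟨I.lastResort a, (hmemN _).2 (Or.inr rfl), fun h' hh' => absurd hh' (hun h')⟩
  have hnone : ∀ x, ¬ Prefers I M N x := by
    rintro x ⟨hx, hxM, hcomp⟩
    exact lt_irrefl _ (hcomp hx ((hmemN _).2 (Or.inl hxM)))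
  exact hpop.2 N hmatchN (morePopular_of_one_zero I hpa hnone)

/-- Condition 1: in a popular matching, every house gets exactly
`min (cap h) |f(h)|` agents from `f(h)`. -/
lemma popular_fSet_count [Fintype A] [Fintype H] (I : CHAInstance A H)
    {M : Set (A × H)} (hpop : IsPopular I M) (h : H) :
    {x | IsFirstChoice I x h ∧ (x, h) ∈ M}.ncard = min (I.cap h) (fSet I h).ncard := by
  classical
  set S := {x | IsFirstChoice I x h ∧ (x, h) ∈ M} with hS
  have hS1 : S ⊆ fSet I h := fun x hx => hx.1
  have hS2 : S ⊆ {x | (x, h) ∈ M} := fun x hx => hx.2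
  have le1 : S.ncard ≤ (fSet I h).ncard := Set.ncard_le_ncard hS1 (Set.toFinite _)
  have le2 : S.ncard ≤ I.cap h :=
    (Set.ncard_le_ncard hS2 (Set.toFinite _)).trans (hpop.1.2.2 h)
  refine le_antisymm (le_min le2 le1) ?_
  by_contra hlt
  push_neg at hlt
  have hltc : S.ncard < I.cap h := lt_of_lt_of_le hlt (min_le_left _ _)
  have hltf : S.ncard < (fSet I h).ncard := lt_of_lt_of_le hlt (min_le_right _ _)
  -- find a first-choice agent of h not matched to h
  have hex : ∃ x, IsFirstChoice I x h ∧ (x, h) ∉ M := by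
    by_contra hc
    push_neg at hc
    have : fSet I h ⊆ S := fun x hx => ⟨hx, hc x hx⟩
    exact absurd (Set.ncard_le_ncard this (Set.toFinite _)) (not_le.2 hltf)
  obtain ⟨a, haf, hanot⟩ := hex
  have himp : ∀ h', (a, h') ∈ M → I.rank a h < I.rank a h' := by
    intro h' hm
    have hadj' : I.adj a h' := hpop.1.1 _ hm
    have hne : h ≠ h' := fun e => hanot (e ▸ hm)
    exact rank_lt I haf.1 hadj' hne (haf.2 h' hadj')
  have hyp : {x | (x, h) ∈ M}.ncard < I.cap h ∨
      ∃ b, (b, h) ∈ M ∧ ¬ IsFirstChoice I b h := by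
    by_cases hall : ∀ x, (x, h) ∈ M → IsFirstChoice I x h
    · left
      have hsub : {x | (x, h) ∈ M} ⊆ S := fun x hx => ⟨hall x hx, hx⟩
      exact lt_of_le_of_lt (Set.ncard_le_ncard hsub (Set.toFinite _)) hltc
    · right
      push_neg at hall
      exact hall
  exact not_popular_swap I hpop.1 haf.1 hanot himp hyp hpop

/-- Condition 2: in a popular matching, every matched agent gets its first or
second choice. -/
lemma popular_first_or_second [Fintype A] [Fintype H] (I : CHAInstance A H)
    {M : Set (A × H)} (hpop : IsPopular I M) {a : A} {h : H} (hmem : (a, h) ∈ M) :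
    IsFirstChoice I a h ∨ IsSecondChoice I a h := by
  classical
  by_contra hcon
  push_neg at hcon
  obtain ⟨hnf, hns⟩ := hcon
  have hadj : I.adj a h := hpop.1.1 _ hmem
  by_cases hsc : SCond I a h
  · -- h satisfies SCond but is not the second choice, so s(a) is strictly better
    obtain ⟨s, hs⟩ : ∃ s, IsSecondChoice I a s := by
      obtain ⟨s, hh, hmin⟩ := Finset.exists_min_image
        (Finset.univ.filter fun h' => I.adj a h' ∧ SCond I a h') (I.rank a)
        ⟨h, by simp [hadj, hsc]⟩
      simp only [Finset.mem_filter, Finset.mem_univ, true_and] at hh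
      exact ⟨s, hh.1, hh.2, fun h' h1 h2 => hmin h' (by simp [h1, h2])⟩
    have hsne : s ≠ h := fun e => hns (e ▸ hs)
    have hrs : I.rank a s < I.rank a h := rank_lt I hs.1 hadj hsne (hs.2.2 h hadj hsc)
    have hsnotM : (a, s) ∉ M := fun hm => hsne (hpop.1.house_eq hm hmem)
    have himp : ∀ h', (a, h') ∈ M → I.rank a s < I.rank a h' := by
      intro h' hm
      have : h' = h := hpop.1.house_eq hm hmem
      rw [this]; exact hrs
    have hyp : {x | (x, s) ∈ M}.ncard < I.cap s ∨
        ∃ b, (b, s) ∈ M ∧ ¬ IsFirstChoice I b s := by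
      by_cases hund : {x | (x, s) ∈ M}.ncard < I.cap s
      · exact Or.inl hund
      · right
        push_neg at hund
        by_contra hno
        push_neg at hno
        -- every occupant of s has s as first choice
        rcases hs.2.1 with hnotf | ⟨-, hflt⟩
        · -- s is not an f-house, yet it has an occupant
          have hpos : 0 < {x | (x, s) ∈ M}.ncard := lt_of_lt_of_le (I.cap_pos s) hund
          obtain ⟨b, hb⟩ := (Set.ncard_pos (Set.toFinite _)).1 hpos
          exact hnotf ⟨b, hno b hb⟩
        · -- |f(s)| < cap s, but M(s) ⊆ f(s) and |M(s)| ≥ cap s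
          have hsub : {x | (x, s) ∈ M} ⊆ fSet I s := fun x hx => hno x hx
          have h2 := (Set.ncard_le_ncard hsub (Set.toFinite _)).trans_lt hflt
          exact absurd h2 (not_lt.2 hund)
    exact not_popular_swap I hpop.1 hs.1 hsnotM himp hyp hpop
  · -- SCond fails at h and h is not a's first choice: capacity contradiction
    have hcapf : I.cap h ≤ (fSet I h).ncard := by
      by_contra hlt
      push_neg at hlt
      exact hsc (Or.inr ⟨hnf, hlt⟩)
    have hcnt := popular_fSet_count I hpop h
    rw [min_eq_left hcapf] at hcnt
    have hanotS : a ∉ {x | IsFirstChoice I x h ∧ (x, h) ∈ M} := fun hx => hnf hx.1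
    have hins : insert a {x | IsFirstChoice I x h ∧ (x, h) ∈ M} ⊆ {x | (x, h) ∈ M} := by
      rintro x (rfl | hx)
      · exact hmem
      · exact hx.2
    have hle := Set.ncard_le_ncard hins (Set.toFinite _)
    rw [Set.ncard_insert_of_notMem hanotS (Set.toFinite _), hcnt] at hle
    have := hpop.1.2.2 h
    omega

end CHAInstance
open CHAInstance in
/-- Property 2: for any two popular matchings `M` and `M'` of a CHA
instance and any house `h`, the number of outgoing edges of weight `-1` at `h` is the
same in `G_M` and `G_{M'}`, and the number of incoming edges of weight `+1` at `h` is
the same in `G_M` and `G_{M'}`. -/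
theorem switchingGraph_degree_invariants
    {A H : Type*} [Fintype A] [Fintype H] (I : CHAInstance A H)
    (M M' : Set (A × H)) (hM : IsPopular I M) (hM' : IsPopular I M') (h : H) :
    {a : A | ∃ tgt : H, SwEdge I M a h tgt (-1)}.ncard =
        {a : A | ∃ tgt : H, SwEdge I M' a h tgt (-1)}.ncard ∧
      {a : A | ∃ src : H, SwEdge I M a src h 1}.ncard =
        {a : A | ∃ src : H, SwEdge I M' a src h 1}.ncard := by
  classical
  constructor
  · -- outgoing edges of weight -1
    by_cases hlone : ∃ a0, IsFirstChoice I a0 h ∧ IsFirstChoice I a0 (I.lastResort a0)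
    · -- degenerate case: h is the last resort of a lone agent; both sets are empty
      obtain ⟨a0, ha0h, ha0l⟩ := hlone
      have hh : h = I.lastResort a0 := ha0h.unique ha0l
      have hempty : ∀ K : Set (A × H), {a : A | ∃ tgt : H, SwEdge I K a h tgt (-1)} = ∅ := by
        intro K
        ext x
        simp only [Set.mem_setOf_eq, Set.mem_empty_iff_false, iff_false, not_exists]
        rintro tgt ⟨hmem, hor⟩
        rcases hor with ⟨hf, hs, -⟩ | ⟨-, -, habs⟩
        · have hx0 : x = a0 := I.lastResort_only a0 x (hh ▸ hf.1)
          subst hx0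
          exact lone_no_second ha0l ⟨tgt, hs⟩
        · exact absurd habs (by norm_num)
      rw [hempty M, hempty M']
    · push_neg at hlone
      have hset : ∀ K : Set (A × H), IsPopular I K →
          {a : A | ∃ tgt : H, SwEdge I K a h tgt (-1)} =
            {x | IsFirstChoice I x h ∧ (x, h) ∈ K} := by
        intro K hK
        ext x
        simp only [Set.mem_setOf_eq]
        constructor
        · rintro ⟨tgt, hmem, hor⟩
          rcases hor with ⟨hf, -, -⟩ | ⟨-, -, habs⟩
          · exact ⟨hf, hmem⟩
          · exact absurd habs (by norm_num)
        · rintro ⟨hf, hmem⟩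
          obtain ⟨tgt, htgt⟩ :=
            (lone_or_exists_second I x).resolve_left (hlone x hf)
          exact ⟨tgt, hmem, Or.inl ⟨hf, htgt, rfl⟩⟩
      rw [hset M hM, hset M' hM', popular_fSet_count I hM h, popular_fSet_count I hM' h]
  · -- incoming edges of weight +1
    have hset : ∀ K : Set (A × H), IsPopular I K →
        {a : A | ∃ src : H, SwEdge I K a src h 1} =
          fSet I h \ {x | IsFirstChoice I x h ∧ (x, h) ∈ K} := by
      intro K hK
      ext x
      simp only [Set.mem_setOf_eq, Set.mem_diff, fSet]
      constructor
      · rintro ⟨src, hmem, hor⟩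
        rcases hor with ⟨-, -, habs⟩ | ⟨hsrc, hfh, -⟩
        · exact absurd habs (by norm_num)
        · refine ⟨hfh, ?_⟩
          rintro ⟨-, hxh⟩
          have he : src = h := hK.1.house_eq hmem hxh
          rw [he] at hsrc
          exact hsrc.not_first hfh
      · rintro ⟨hfh, hnot⟩
        obtain ⟨src, hmem⟩ := popular_matched I hK x
        rcases popular_first_or_second I hK hmem with hfc | hsc
        · exact absurd ⟨hfh, (hfc.unique hfh) ▸ hmem⟩ hnot
        · exact ⟨src, hmem, Or.inr ⟨hsc, hfh, rfl⟩⟩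
    rw [hset M hM, hset M' hM',
      Set.ncard_diff (fun x hx => hx.1) (Set.toFinite _),
      Set.ncard_diff (fun x hx => hx.1) (Set.toFinite _),
      popular_fSet_count I hM h, popular_fSet_count I hM' h]
end

section
/- Let M be a popular matching of a CHA instance I with switching graph G_M and unsaturation function u_M(h) = c(h) − |M(h)|. Then no edge of weight +1 in G_M ends at an unsaturated vertex, i.e., every edge of weight +1 ends at a vertex h with u_M(h) = 0. -/
open CHAInstance in
/-- Property 3: in the switching graph of a CHA instance with respect to
a popular matching `M`, no edge of weight `+1` ends at an unsaturated vertex, i.e.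
every `+1`-edge ends at a vertex `h` with `u_M(h) = 0`. -/
theorem switchingGraph_plusOne_ends_saturated
    {A H : Type*} [Fintype A] [Fintype H] (I : CHAInstance A H)
    (M : Set (A × H)) (hM : IsPopular I M)
    (a : A) (src tgt : H) (he : SwEdge I M a src tgt 1) :
    Saturated I M tgt := by
  obtain ⟨haM, hcase⟩ := he
  have hsc : IsSecondChoice I a src ∧ IsFirstChoice I a tgt := by
    rcases hcase with ⟨_, _, hw⟩ | ⟨h1, h2, _⟩
    · exact absurd hw (by norm_num)
    · exact ⟨h1, h2⟩
  obtain ⟨hsrc, htgt⟩ := hsc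
  obtain ⟨⟨hadj, huniq, hcap⟩, hpop⟩ := hM
  have hne : src ≠ tgt := by
    intro h
    rcases hsrc.2.1 with hnf | ⟨hnfc, _⟩
    · exact hnf ⟨a, h ▸ htgt⟩
    · exact hnfc (h ▸ htgt)
  have hrank : I.rank a tgt < I.rank a src := by
    have hle := htgt.2 src (hadj _ haM)
    rcases lt_or_eq_of_le hle with h | h
    · exact h
    · exact absurd (I.rank_strict a tgt src htgt.1 (hadj _ haM) h) (Ne.symm hne)
  by_contra hns
  have hlt : {b | (b, tgt) ∈ M}.ncard < I.cap tgt := by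
    have h1 := hcap tgt
    unfold Saturated unsatDeg at hns
    omega
  set M' : Set (A × H) := (M \ {(a, src)}) ∪ {(a, tgt)} with hM'
  have hmemM' : ∀ p : A × H, p ∈ M' ↔ (p ∈ M ∧ p ≠ (a, src)) ∨ p = (a, tgt) := by
    intro p; simp [hM', Set.mem_diff, or_comm]
  have hatgtM' : (a, tgt) ∈ M' := by rw [hmemM']; right; rfl
  have huniq_src : ∀ h', (a, h') ∈ M → h' = src := by
    intro h' hh'
    have := huniq (a, h') hh' (a, src) haM rfl
    exact congrArg Prod.snd this
  -- M' is a matching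
  have hM'match : IsMatching I M' := by
    refine ⟨?_, ?_, ?_⟩
    · intro p hp
      rcases (hmemM' p).1 hp with ⟨hpM, _⟩ | hp'
      · exact hadj p hpM
      · rw [hp']; exact htgt.1
    · intro p hp q hq hpq
      rcases (hmemM' p).1 hp with ⟨hpM, hpne⟩ | hp' <;>
        rcases (hmemM' q).1 hq with ⟨hqM, hqne⟩ | hq'
      · exact huniq p hpM q hqM hpq
      · exfalso
        have hpa : p.1 = a := by rw [hpq, hq']
        have : p = (a, src) := by
          have := huniq p hpM (a, src) haM hpa
          exact this
        exact hpne this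
      · exfalso
        have hqa : q.1 = a := by rw [← hpq, hp']
        exact hqne (huniq q hqM (a, src) haM hqa)
      · rw [hp', hq']
    · intro h
      by_cases hh : h = tgt
      · subst hh
        have hsub : {b | (b, h) ∈ M'} ⊆ insert a {b | (b, h) ∈ M} := by
          intro b hb
          rcases (hmemM' (b, h)).1 hb with ⟨hbM, _⟩ | hb'
          · exact Set.mem_insert_of_mem _ hbM
          · have : b = a := congrArg Prod.fst hb'
            rw [this]; exact Set.mem_insert _ _
        calc {b | (b, h) ∈ M'}.ncard ≤ (insert a {b | (b, h) ∈ M}).ncard :=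
              Set.ncard_le_ncard hsub (Set.toFinite _)
          _ ≤ {b | (b, h) ∈ M}.ncard + 1 := Set.ncard_insert_le _ _
          _ ≤ I.cap h := hlt
      · have hsub : {b | (b, h) ∈ M'} ⊆ {b | (b, h) ∈ M} := by
          intro b hb
          rcases (hmemM' (b, h)).1 hb with ⟨hbM, _⟩ | hb'
          · exact hbM
          · exact absurd (congrArg Prod.snd hb') hh
        exact le_trans (Set.ncard_le_ncard hsub (Set.toFinite _)) (hcap h)
  -- a prefers M' to M
  have hprefa : Prefers I M' M a := by
    refine ⟨tgt, hatgtM', ?_⟩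
    intro h' hh'
    rw [huniq_src h' hh']
    exact hrank
  -- nobody prefers M to M'
  have hempty : {b | Prefers I M M' b} = ∅ := by
    ext b
    simp only [Set.mem_setOf_eq, Set.mem_empty_iff_false, iff_false]
    rintro ⟨h, hbh, hall⟩
    by_cases hb : b = a
    · subst hb
      have hh : h = src := huniq_src h hbh
      have := hall tgt hatgtM'
      rw [hh] at this
      omega
    · have hbM' : (b, h) ∈ M' := by
        rw [hmemM']
        left
        exact ⟨hbh, by intro hc; exact hb (congrArg Prod.fst hc)⟩
      exact lt_irrefl _ (hall h hbM')
  -- contradiction with popularity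
  apply hpop M' hM'match
  unfold MorePopular
  have h0 : Nat.card {b | Prefers I M M' b} = 0 := by
    rw [hempty]; simp
  have h1 : 0 < Nat.card {b | Prefers I M' M b} := by
    have : Nonempty ↥{b | Prefers I M' M b} := ⟨⟨a, hprefa⟩⟩
    exact Nat.card_pos
  omega
end
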